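/- arXiv:2502.20810 — 5 statements merged into one kernel-verified Lean document; each statement's English description precedes it below -/
import Mathlib

section
/- The map ρ: Y_{M|N}(s) → Y_{N|M}(s^d) sending t_{i,j}(u) to t_{M+N+1-i, M+N+1-j}(-u) is an isomorphism of superalgebras, where s^d is the reverse of the sequence obtained from s by interchanging 0's and 1's. -/
/-- Index type of the RTT generators `t_{i,j}^{(r)}` of the super Yangian. -/
abbrev YGen (n : ℕ) := Fin n × Fin n × ℕ

/-- The generator `t_{i,j}^{(r)}` inside the free algebra. -/
def yX (k : Type*) [Field k] (n : ℕ) (i j : Fin n) (r : ℕ) :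
    FreeAlgebra k (YGen n) :=
  FreeAlgebra.ι k (i, j, r)

/-- The defining relations of the super Yangian: `t_{i,j}^{(0)} = δ_{ij}` and the RTT
supercommutator relations, where `par i` is the `i`-th digit of the fixed
`0^M 1^N`-sequence. -/
inductive YangianRel (k : Type*) [Field k] (n : ℕ) (par : Fin n → ℕ) :
    FreeAlgebra k (YGen n) → FreeAlgebra k (YGen n) → Prop
  | unit (i j : Fin n) :
      YangianRel k n par (yX k n i j 0) (if i = j then 1 else 0)
  | rtt (i j l m : Fin n) (r s : ℕ) :
      YangianRel k n par
        (yX k n i j r * yX k n l m s -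
          ((-1 : k) ^ ((par i + par j) * (par l + par m))) •
            (yX k n l m s * yX k n i j r))
        (((-1 : k) ^ (par i * par j + par i * par l + par j * par l)) •
          ∑ x ∈ Finset.range (min r s),
            (yX k n l j x * yX k n i m (r + s - 1 - x) -
              yX k n l j (r + s - 1 - x) * yX k n i m x))

/-- The super Yangian `Y_{M|N}` (for the `0^M 1^N`-sequence encoded by `par`). -/
abbrev Yangian (k : Type*) [Field k] (n : ℕ) (par : Fin n → ℕ) :=
  RingQuot (YangianRel k n par)

/-- The RTT generator `t_{i,j}^{(r)}` of the super Yangian. -/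
def yT (k : Type*) [Field k] (n : ℕ) (par : Fin n → ℕ) (i j : Fin n) (r : ℕ) :
    Yangian k n par :=
  RingQuot.mkAlgHom k (YangianRel k n par) (yX k n i j r)


/- auxiliary -/
section Aux
variable (k : Type*) [Field k] (n : ℕ)

lemma sgn1 (a b c d : ℕ) (ha : a ≤ 1) (hb : b ≤ 1) (hc : c ≤ 1) (hd : d ≤ 1) :
    ((-1 : k) ^ (((1 - a) + (1 - b)) * ((1 - c) + (1 - d)))) = (-1 : k) ^ ((a + b) * (c + d)) := by
  rw [neg_one_pow_eq_pow_mod_two, neg_one_pow_eq_pow_mod_two (n := (a+b)*(c+d))]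
  congr 1
  interval_cases a <;> interval_cases b <;> interval_cases c <;> interval_cases d <;> rfl

lemma sgn2 (a b c : ℕ) (ha : a ≤ 1) (hb : b ≤ 1) (hc : c ≤ 1) :
    ((-1 : k) ^ ((1 - a) * (1 - b) + (1 - a) * (1 - c) + (1 - b) * (1 - c)))
      = -(-1 : k) ^ (a * b + a * c + b * c) := by
  have : -(-1 : k) ^ (a * b + a * c + b * c) = (-1 : k) ^ (a * b + a * c + b * c + 1) := by
    rw [pow_succ]; ring
  rw [this, neg_one_pow_eq_pow_mod_two, neg_one_pow_eq_pow_mod_two (n := a*b+a*c+b*c+1)]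
  congr 1
  interval_cases a <;> interval_cases b <;> interval_cases c <;> rfl

/-- the lift of the candidate map to the free algebra -/
noncomputable def Phi (par₂ : Fin n → ℕ) : FreeAlgebra k (YGen n) →ₐ[k] Yangian k n par₂ :=
  FreeAlgebra.lift k fun g => ((-1 : k) ^ g.2.2) • yT k n par₂ g.1.rev g.2.1.rev g.2.2

lemma Phi_yX (par₂ : Fin n → ℕ) (i j : Fin n) (r : ℕ) :
    Phi k n par₂ (yX k n i j r) = ((-1 : k) ^ r) • yT k n par₂ i.rev j.rev r := by
  simp [Phi, yX]


lemma yT_eq (par₂ : Fin n → ℕ) (i j : Fin n) (r : ℕ) :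
    RingQuot.mkAlgHom k (YangianRel k n par₂) (yX k n i j r) = yT k n par₂ i j r := rfl

lemma rel_map (par par₂ : Fin n → ℕ) (hp : ∀ i, par i ≤ 1)
    (h : ∀ i, par₂ i.rev = 1 - par i) :
    ∀ ⦃a b⦄, YangianRel k n par a b → Phi k n par₂ a = Phi k n par₂ b := by
  intro a b rel
  induction rel with
  | unit i j =>
      have hrel := RingQuot.mkAlgHom_rel k
        (YangianRel.unit (k := k) (n := n) (par := par₂) i.rev j.rev)
      simp only [Phi_yX, pow_zero, one_smul, yT]
      rw [hrel]
      split_ifs with h1 h2 h2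
      · simp
      · exact absurd (Fin.rev_injective h1) h2
      · exact absurd (congrArg Fin.rev h2) h1
      · simp
  | rtt i j l m r s =>
      have hrel := RingQuot.mkAlgHom_rel k
        (YangianRel.rtt (k := k) (n := n) (par := par₂) i.rev j.rev l.rev m.rev r s)
      rw [h i, h j, h l, h m] at hrel
      rw [sgn1 k (par i) (par j) (par l) (par m) (hp i) (hp j) (hp l) (hp m),
        sgn2 k (par i) (par j) (par l) (hp i) (hp j) (hp l)] at hrel
      simp only [map_sub, map_smul, map_mul, map_sum, yT_eq] at hrel
      simp only [map_sub, map_smul, map_mul, map_sum, Phi_yX]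
      set E1 := (par i + par j) * (par l + par m) with hE1
      set E2 := par i * par j + par i * par l + par j * par l with hE2
      set A := yT k n par₂ i.rev j.rev r
      set B := yT k n par₂ l.rev m.rev s
      set SS := ∑ x ∈ Finset.range (min r s),
        (yT k n par₂ l.rev j.rev x * yT k n par₂ i.rev m.rev (r + s - 1 - x) -
          yT k n par₂ l.rev j.rev (r + s - 1 - x) * yT k n par₂ i.rev m.rev x) with hSS
      simp only [smul_mul_smul_comm, smul_smul, ← pow_add]
      have hsum : ∑ x ∈ Finset.range (r ⊓ s),
          ((-1:k) ^ (x + (r + s - 1 - x)) • (yT k n par₂ l.rev j.rev x * yT k n par₂ i.rev m.rev (r + s - 1 - x)) -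
            (-1:k) ^ (r + s - 1 - x + x) • (yT k n par₂ l.rev j.rev (r + s - 1 - x) * yT k n par₂ i.rev m.rev x))
          = (-1:k) ^ (r + s - 1) • SS := by
        rw [hSS, Finset.smul_sum]
        refine Finset.sum_congr rfl fun x hx => ?_
        have hx0 : x < r ⊓ s := Finset.mem_range.mp hx
        have hxr : x ≤ r + s - 1 := by
          have h1 := Nat.min_le_left r s
          have h2 := Nat.min_le_right r s
          omega
        have hx' : x + (r + s - 1 - x) = r + s - 1 := by omega
        rw [hx', Nat.add_comm (r + s - 1 - x) x, hx', smul_sub]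
      rw [hsum]
      rw [show ((-1:k)) ^ (E1 + (s + r)) = (-1:k) ^ (r + s) * (-1) ^ E1 by
        rw [pow_add]; ring, mul_smul]
      rw [← smul_sub ((-1:k) ^ (r + s)) (A * B) ((-1:k) ^ E1 • (B * A)), hrel]
      rw [smul_smul, smul_smul]
      rcases Nat.eq_zero_or_pos (r ⊓ s) with h0 | h0
      · simp [hSS, h0]
      · congr 1
        have hr : 1 ≤ r := le_trans h0 (Nat.min_le_left r s)
        have hs : 1 ≤ s := le_trans h0 (Nat.min_le_right r s)
        have hrs : r + s - 1 + 1 = r + s := by omega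
        have hflip : (-1:k) ^ (r + s) = -(-1:k) ^ (r + s - 1) := by
          conv_lhs => rw [← hrs]
          rw [pow_succ]; ring
        rw [hflip]; ring


noncomputable def rho (par par₂ : Fin n → ℕ) (hp : ∀ i, par i ≤ 1)
    (h : ∀ i, par₂ i.rev = 1 - par i) : Yangian k n par →ₐ[k] Yangian k n par₂ :=
  RingQuot.liftAlgHom k ⟨Phi k n par₂, rel_map k n par par₂ hp h⟩

lemma rho_yT (par par₂ : Fin n → ℕ) (hp : ∀ i, par i ≤ 1)
    (h : ∀ i, par₂ i.rev = 1 - par i) (i j : Fin n) (r : ℕ) :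
    rho k n par par₂ hp h (yT k n par i j r)
      = ((-1 : k) ^ r) • yT k n par₂ i.rev j.rev r := by
  rw [yT, rho, RingQuot.liftAlgHom_mkAlgHom_apply, Phi_yX]

lemma rho_inv (par par₂ : Fin n → ℕ) (hp : ∀ i, par i ≤ 1) (hp₂ : ∀ i, par₂ i ≤ 1)
    (h : ∀ i, par₂ i.rev = 1 - par i) (h₂ : ∀ i, par i.rev = 1 - par₂ i) :
    (rho k n par₂ par hp₂ h₂).comp (rho k n par par₂ hp h)
      = AlgHom.id k (Yangian k n par) := by
  apply RingQuot.ringQuot_ext'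
  apply FreeAlgebra.hom_ext
  funext g
  obtain ⟨i, j, r⟩ := g
  have : FreeAlgebra.ι k (i, j, r) = yX k n i j r := rfl
  simp only [Function.comp_apply, AlgHom.comp_apply, this]
  have hyT : RingQuot.mkAlgHom k (YangianRel k n par) (yX k n i j r) = yT k n par i j r := rfl
  rw [hyT, rho_yT, map_smul, rho_yT, smul_smul, ← pow_add, Even.neg_one_pow ⟨r, rfl⟩,
    one_smul, Fin.rev_rev, Fin.rev_rev]
  rfl


end Aux


/-- the map `ρ : Y_{M|N}(s) → Y_{N|M}(s^d)`,
`ρ(t_{i,j}(u)) = t_{M+N+1-i, M+N+1-j}(-u)` (i.e. coefficientwise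
`t_{i,j}^{(r)} ↦ (-1)^r t_{rev i, rev j}^{(r)}`), is an isomorphism of superalgebras,
where `s^d` is the reverse of the sequence obtained from `s` by interchanging `0`'s and
`1`'s: its `i`-th digit is `1 - par (rev i)`. -/
theorem statement6 (k : Type*) [Field k]
    (M N : ℕ) (par : Fin (M + N) → ℕ) (hpar : ∀ i, par i ≤ 1)
    (hM : (Finset.univ.filter fun i => par i = 0).card = M) :
    ∃ ρ : Yangian k (M + N) par ≃ₐ[k] Yangian k (M + N) (fun i => 1 - par i.rev),
      ∀ (i j : Fin (M + N)) (r : ℕ),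
        ρ (yT k (M + N) par i j r)
          = ((-1 : k) ^ r) • yT k (M + N) (fun i => 1 - par i.rev) i.rev j.rev r := by
  set par' : Fin (M + N) → ℕ := fun i => 1 - par i.rev with hpar'
  have h1 : ∀ i, par' i.rev = 1 - par i := fun i => by simp [hpar', Fin.rev_rev]
  have hp' : ∀ i, par' i ≤ 1 := fun i => Nat.sub_le 1 _
  have h2 : ∀ i, par i.rev = 1 - par' i := fun i => by
    have := hpar i.rev
    simp only [hpar']
    omega
  refine ⟨AlgEquiv.ofAlgHom (rho k (M + N) par par' hpar h1) (rho k (M + N) par' par hp' h2)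
    (rho_inv k (M + N) par' par hp' hpar h2 h1)
    (rho_inv k (M + N) par par' hpar hp' h1 h2), fun i j r => ?_⟩
  exact rho_yT k (M + N) par par' hpar h1 i j r
end

section
/- The comultiplication Δ(t_{i,j}^{(r)}) = Σ_{s=0}^r Σ_{k=1}^{M+N} t_{i,k}^{(r-s)} ⊗ t_{k,j}^{(s)} extends to a well-defined superalgebra homomorphism Δ: Y_{M|N} → Y_{M|N} ⊗ Y_{M|N}. -/
/-- The generator `t_{i,j}^{(r)} ⊗ 1` of the (graded) tensor square, in the free algebra. -/
def xL (k : Type*) [Field k] (n : ℕ) (i j : Fin n) (r : ℕ) :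
    FreeAlgebra k (YGen n ⊕ YGen n) :=
  FreeAlgebra.ι k (Sum.inl (i, j, r))

/-- The generator `1 ⊗ t_{i,j}^{(r)}` of the (graded) tensor square, in the free algebra. -/
def xR (k : Type*) [Field k] (n : ℕ) (i j : Fin n) (r : ℕ) :
    FreeAlgebra k (YGen n ⊕ YGen n) :=
  FreeAlgebra.ι k (Sum.inr (i, j, r))

/-- Presentation of the graded (super) tensor product `Y_{M|N} ⊗ Y_{M|N}`: both tensor
factors satisfy the super Yangian relations, and the two factors supercommute with the
Koszul sign `(a ⊗ b)(c ⊗ d) = (-1)^{|b||c|} ac ⊗ bd` on the homogeneous generators. -/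
inductive YYRel (k : Type*) [Field k] (n : ℕ) (par : Fin n → ℕ) :
    FreeAlgebra k (YGen n ⊕ YGen n) → FreeAlgebra k (YGen n ⊕ YGen n) → Prop
  | left_unit (i j : Fin n) :
      YYRel k n par (xL k n i j 0) (if i = j then 1 else 0)
  | left_rtt (i j l m : Fin n) (r s : ℕ) :
      YYRel k n par
        (xL k n i j r * xL k n l m s -
          ((-1 : k) ^ ((par i + par j) * (par l + par m))) •
            (xL k n l m s * xL k n i j r))
        (((-1 : k) ^ (par i * par j + par i * par l + par j * par l)) •
          ∑ x ∈ Finset.range (min r s),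
            (xL k n l j x * xL k n i m (r + s - 1 - x) -
              xL k n l j (r + s - 1 - x) * xL k n i m x))
  | right_unit (i j : Fin n) :
      YYRel k n par (xR k n i j 0) (if i = j then 1 else 0)
  | right_rtt (i j l m : Fin n) (r s : ℕ) :
      YYRel k n par
        (xR k n i j r * xR k n l m s -
          ((-1 : k) ^ ((par i + par j) * (par l + par m))) •
            (xR k n l m s * xR k n i j r))
        (((-1 : k) ^ (par i * par j + par i * par l + par j * par l)) •
          ∑ x ∈ Finset.range (min r s),
            (xR k n l j x * xR k n i m (r + s - 1 - x) -
              xR k n l j (r + s - 1 - x) * xR k n i m x))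
  | cross (i j l m : Fin n) (r s : ℕ) :
      YYRel k n par
        (xR k n l m s * xL k n i j r)
        (((-1 : k) ^ ((par i + par j) * (par l + par m))) •
          (xL k n i j r * xR k n l m s))

/-- The graded (super) tensor product `Y_{M|N} ⊗ Y_{M|N}`, presented by generators and
relations. -/
abbrev YangianTensor (k : Type*) [Field k] (n : ℕ) (par : Fin n → ℕ) :=
  RingQuot (YYRel k n par)

/-- `t_{i,j}^{(r)} ⊗ 1` in the graded tensor square. -/
def tL (k : Type*) [Field k] (n : ℕ) (par : Fin n → ℕ) (i j : Fin n) (r : ℕ) :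
    YangianTensor k n par :=
  RingQuot.mkAlgHom k (YYRel k n par) (xL k n i j r)

/-- `1 ⊗ t_{i,j}^{(r)}` in the graded tensor square. -/
def tR (k : Type*) [Field k] (n : ℕ) (par : Fin n → ℕ) (i j : Fin n) (r : ℕ) :
    YangianTensor k n par :=
  RingQuot.mkAlgHom k (YYRel k n par) (xR k n i j r)


/-! ### Auxiliary machinery for Statement 8 -/

section SignArith
variable {k : Type*} [Field k]

lemma neg_one_pow_congr' {e1 e2 : ℕ} (h : (e1 : ZMod 2) = (e2 : ZMod 2)) :
    ((-1 : k) ^ e1) = (-1 : k) ^ e2 := by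
  have h2 : e1 % 2 = e2 % 2 := (ZMod.natCast_eq_natCast_iff e1 e2 2).mp h
  rw [← Nat.div_add_mod e1 2, ← Nat.div_add_mod e2 2, pow_add, pow_add, pow_mul, pow_mul,
    neg_one_sq, one_pow, one_pow, h2]

lemma neg_one_pow_even_left (x y : ℕ) : ((-1 : k)) ^ ((x + x) * y) = 1 := by
  have hz : (((x + x) * y : ℕ) : ZMod 2) = ((0 : ℕ) : ZMod 2) := by
    push_cast
    generalize ((x : ZMod 2)) = a
    generalize ((y : ZMod 2)) = b
    revert a b; decide
  rw [neg_one_pow_congr' hz, pow_zero]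

lemma neg_one_pow_even_right (x y : ℕ) : ((-1 : k)) ^ (x * (y + y)) = 1 := by
  have hz : ((x * (y + y) : ℕ) : ZMod 2) = ((0 : ℕ) : ZMod 2) := by
    push_cast
    generalize ((x : ZMod 2)) = a
    generalize ((y : ZMod 2)) = b
    revert a b; decide
  rw [neg_one_pow_congr' hz, pow_zero]

lemma sgn1_s8 (pi pj pl pm pa pb : ℕ) :
    ((-1:k))^((pi+pj)*(pl+pm)) * (-1:k)^((pi+pa)*(pb+pm))
    = (-1:k)^((pl+pb)*(pa+pj)) * ((-1:k)^((pi+pa)*(pl+pb)) * (-1:k)^((pa+pj)*(pb+pm))) := by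
  rw [← pow_add, ← pow_add, ← pow_add]
  apply neg_one_pow_congr'
  push_cast
  generalize (pi : ZMod 2) = a
  generalize (pj : ZMod 2) = b
  generalize (pl : ZMod 2) = c
  generalize (pm : ZMod 2) = d
  generalize (pa : ZMod 2) = e
  generalize (pb : ZMod 2) = f
  revert a b c d e f; decide

lemma sgn2_s8 (pi pj pl pa pb : ℕ) :
    ((-1:k))^((pl+pb)*(pa+pj)) * (-1:k)^(pi*pa + pi*pl + pa*pl)
    = (-1:k)^(pi*pj + pi*pl + pj*pl) * (-1:k)^((pi+pb)*(pa+pj)) := by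
  rw [← pow_add, ← pow_add]
  apply neg_one_pow_congr'
  push_cast
  generalize (pi : ZMod 2) = a
  generalize (pj : ZMod 2) = b
  generalize (pl : ZMod 2) = c
  generalize (pa : ZMod 2) = e
  generalize (pb : ZMod 2) = f
  revert a b c e f; decide

lemma sgn3 (pi pj pl pa pb : ℕ) :
    ((-1:k))^((pl+pa)*(pb+pj)) * (-1:k)^((pi+pb)*(pl+pa)) * (-1:k)^(pb*pj + pb*pa + pj*pa)
    = (-1:k)^(pi*pj + pi*pl + pj*pl) * (-1:k)^((pi+pb)*(pa+pj)) := by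
  rw [← pow_add, ← pow_add, ← pow_add]
  apply neg_one_pow_congr'
  push_cast
  generalize (pi : ZMod 2) = a
  generalize (pj : ZMod 2) = b
  generalize (pl : ZMod 2) = c
  generalize (pa : ZMod 2) = e
  generalize (pb : ZMod 2) = f
  revert a b c e f; decide

end SignArith

section Generic
variable {k : Type*} [Field k] {A : Type*} [Ring A] [Algebra k A]

lemma min_sum_identity (f g : ℕ → A) (r s : ℕ) :
    ((∑ x ∈ Finset.range (min (r+1) s), (f x * g (r+s-x) - f (r+s-x) * g x))
      - ∑ x ∈ Finset.range (min r (s+1)), (f x * g (r+s-x) - f (r+s-x) * g x))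
    = f r * g s - f s * g r := by
  rcases lt_trichotomy r s with h|h|h
  · rw [min_eq_left (by omega), min_eq_left (by omega), Finset.sum_range_succ,
      show r+s-r = s by omega]
    abel
  · subst h
    rw [min_eq_right (by omega), min_eq_left (by omega), sub_self, sub_self]
  · rw [min_eq_right (by omega), min_eq_right (by omega), Finset.sum_range_succ,
      show r+s-s = r by omega]
    abel

variable {n : ℕ}

/-- closed form of the RTT relation -/
def rttClosed (par : Fin n → ℕ) (X : Fin n → Fin n → ℕ → A) : Prop :=
  ∀ (i j l m : Fin n) (r s : ℕ),
    X i j r * X l m s - ((-1:k)^((par i + par j)*(par l + par m))) • (X l m s * X i j r)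
    = ((-1:k)^(par i * par j + par i * par l + par j * par l)) •
        ∑ x ∈ Finset.range (min r s),
          (X l j x * X i m (r+s-1-x) - X l j (r+s-1-x) * X i m x)

/-- difference form of the RTT relation -/
def rttDiff (par : Fin n → ℕ) (X : Fin n → Fin n → ℕ → A) : Prop :=
  ∀ (i j l m : Fin n) (r s : ℕ),
    (X i j (r+1) * X l m s - ((-1:k)^((par i + par j)*(par l + par m))) • (X l m s * X i j (r+1)))
    - (X i j r * X l m (s+1) - ((-1:k)^((par i + par j)*(par l + par m))) • (X l m (s+1) * X i j r))
    = ((-1:k)^(par i * par j + par i * par l + par j * par l)) •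
        (X l j r * X i m s - X l j s * X i m r)

lemma diff_of_closed {par : Fin n → ℕ} {X : Fin n → Fin n → ℕ → A}
    (h : rttClosed (k := k) par X) : rttDiff (k := k) par X := by
  intro i j l m r s
  rw [h i j l m (r+1) s, h i j l m r (s+1), ← smul_sub]
  congr 1
  have e1 : ∀ t : ℕ, (∑ x ∈ Finset.range t, (X l j x * X i m (r+1+s-1-x)
      - X l j (r+1+s-1-x) * X i m x))
      = ∑ x ∈ Finset.range t, (X l j x * X i m (r+s-x) - X l j (r+s-x) * X i m x) := by
    intro t
    exact Finset.sum_congr rfl fun x _ => by rw [show r+1+s-1-x = r+s-x by omega]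
  have e2 : ∀ t : ℕ, (∑ x ∈ Finset.range t, (X l j x * X i m (r+(s+1)-1-x)
      - X l j (r+(s+1)-1-x) * X i m x))
      = ∑ x ∈ Finset.range t, (X l j x * X i m (r+s-x) - X l j (r+s-x) * X i m x) := by
    intro t
    exact Finset.sum_congr rfl fun x _ => by rw [show r+(s+1)-1-x = r+s-x by omega]
  rw [e1, e2, min_sum_identity]

lemma closed_of_diff {par : Fin n → ℕ} {X : Fin n → Fin n → ℕ → A}
    (h0 : ∀ i j, X i j 0 = if i = j then 1 else 0)
    (hd : rttDiff (k := k) par X) : rttClosed (k := k) par X := by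
  intro i j l m r s
  induction r generalizing s with
  | zero =>
    rw [Nat.zero_min, Finset.range_zero, Finset.sum_empty, smul_zero, h0 i j]
    by_cases hij : i = j
    · subst hij
      rw [if_pos rfl, one_mul, mul_one, neg_one_pow_even_left, one_smul, sub_self]
    · rw [if_neg hij, zero_mul, mul_zero, smul_zero, sub_zero]
  | succ r ih =>
    have key := hd i j l m r s
    have ih1 := ih (s+1)
    have step : X i j (r+1) * X l m s
        - ((-1:k)^((par i + par j)*(par l + par m))) • (X l m s * X i j (r+1))
        = ((-1:k)^(par i * par j + par i * par l + par j * par l)) •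
          ((∑ x ∈ Finset.range (min r (s+1)),
            (X l j x * X i m (r+(s+1)-1-x) - X l j (r+(s+1)-1-x) * X i m x))
            + (X l j r * X i m s - X l j s * X i m r)) := by
      rw [smul_add, ← ih1, ← key]
      abel
    rw [step]
    congr 1
    have e1 : ∀ t : ℕ, (∑ x ∈ Finset.range t, (X l j x * X i m (r+(s+1)-1-x)
        - X l j (r+(s+1)-1-x) * X i m x))
        = ∑ x ∈ Finset.range t, (X l j x * X i m (r+s-x) - X l j (r+s-x) * X i m x) := by
      intro t
      exact Finset.sum_congr rfl fun x _ => by rw [show r+(s+1)-1-x = r+s-x by omega]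
    have e2 : ∀ t : ℕ, (∑ x ∈ Finset.range t, (X l j x * X i m (r+1+s-1-x)
        - X l j (r+1+s-1-x) * X i m x))
        = ∑ x ∈ Finset.range t, (X l j x * X i m (r+s-x) - X l j (r+s-x) * X i m x) := by
      intro t
      exact Finset.sum_congr rfl fun x _ => by rw [show r+1+s-1-x = r+s-x by omega]
    rw [e1, e2, eq_comm, ← sub_eq_iff_eq_add', min_sum_identity]

lemma crossmul {L1 R1 L2 R2 : A} {s1 : k} (h1 : R1 * L2 = s1 • (L2 * R1)) :
    (L1 * R1) * (L2 * R2) = s1 • (L1 * L2 * (R1 * R2)) := by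
  calc (L1 * R1) * (L2 * R2) = L1 * (R1 * L2) * R2 := by noncomm_ring
  _ = L1 * (s1 • (L2 * R1)) * R2 := by rw [h1]
  _ = s1 • (L1 * L2 * (R1 * R2)) := by
      rw [mul_smul_comm, smul_mul_assoc]
      congr 1
      noncomm_ring

lemma dagger {L1 R1 L2 R2 : A} {sg s1 s3 c1 c2 : k}
    (h1 : R1 * L2 = s1 • (L2 * R1)) (h2 : R2 * L1 = s3 • (L1 * R2))
    (hs : sg * s3 = s1 * (c1 * c2)) :
    (L1 * R1) * (L2 * R2) - sg • ((L2 * R2) * (L1 * R1))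
    = s1 • ((L1 * L2 - c1 • (L2 * L1)) * (R1 * R2))
      + (s1 * c1) • ((L2 * L1) * (R1 * R2 - c2 • (R2 * R1))) := by
  rw [crossmul h1, crossmul h2, smul_smul, hs]
  simp only [sub_mul, mul_sub, smul_sub, smul_mul_assoc, mul_smul_comm, smul_smul, mul_assoc]
  module

/-- Telescoping a double antidiagonal sum at the first coordinates. -/
lemma tele1 (f : ℕ × ℕ → ℕ × ℕ → A)
    (hf1 : ∀ t Q, f (0, t) Q = 0) (hf2 : ∀ P t, f P (0, t) = 0) (r s : ℕ) :
    ((∑ P ∈ Finset.HasAntidiagonal.antidiagonal (r+1), ∑ Q ∈ Finset.HasAntidiagonal.antidiagonal s, f P Q)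
      - ∑ P ∈ Finset.HasAntidiagonal.antidiagonal r, ∑ Q ∈ Finset.HasAntidiagonal.antidiagonal (s+1), f P Q)
    = ∑ P ∈ Finset.HasAntidiagonal.antidiagonal r, ∑ Q ∈ Finset.HasAntidiagonal.antidiagonal s,
        (f (P.1+1, P.2) Q - f P (Q.1+1, Q.2)) := by
  rw [Finset.Nat.sum_antidiagonal_succ
    (f := fun P => ∑ Q ∈ Finset.HasAntidiagonal.antidiagonal s, f P Q)]
  simp only [hf1, Finset.sum_const_zero, zero_add]
  have h : ∀ P : ℕ × ℕ, (∑ Q ∈ Finset.HasAntidiagonal.antidiagonal (s+1), f P Q)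
      = ∑ Q ∈ Finset.HasAntidiagonal.antidiagonal s, f P (Q.1+1, Q.2) := by
    intro P
    rw [Finset.Nat.sum_antidiagonal_succ, hf2, zero_add]
  simp only [h]
  rw [← Finset.sum_sub_distrib]
  exact Finset.sum_congr rfl fun P _ => by rw [← Finset.sum_sub_distrib]

/-- Telescoping a double antidiagonal sum at the second coordinates. -/
lemma tele2 (f : ℕ × ℕ → ℕ × ℕ → A)
    (hf1 : ∀ t Q, f (t, 0) Q = 0) (hf2 : ∀ P t, f P (t, 0) = 0) (r s : ℕ) :
    ((∑ P ∈ Finset.HasAntidiagonal.antidiagonal (r+1), ∑ Q ∈ Finset.HasAntidiagonal.antidiagonal s, f P Q)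
      - ∑ P ∈ Finset.HasAntidiagonal.antidiagonal r, ∑ Q ∈ Finset.HasAntidiagonal.antidiagonal (s+1), f P Q)
    = ∑ P ∈ Finset.HasAntidiagonal.antidiagonal r, ∑ Q ∈ Finset.HasAntidiagonal.antidiagonal s,
        (f (P.1, P.2+1) Q - f P (Q.1, Q.2+1)) := by
  rw [Finset.Nat.sum_antidiagonal_succ'
    (f := fun P => ∑ Q ∈ Finset.HasAntidiagonal.antidiagonal s, f P Q)]
  simp only [hf1, Finset.sum_const_zero, zero_add]
  have h : ∀ P : ℕ × ℕ, (∑ Q ∈ Finset.HasAntidiagonal.antidiagonal (s+1), f P Q)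
      = ∑ Q ∈ Finset.HasAntidiagonal.antidiagonal s, f P (Q.1, Q.2+1) := by
    intro P
    rw [Finset.Nat.sum_antidiagonal_succ', hf2, zero_add]
  simp only [h]
  rw [← Finset.sum_sub_distrib]
  exact Finset.sum_congr rfl fun P _ => by rw [← Finset.sum_sub_distrib]

lemma comm_unit_left {par : Fin n → ℕ} {X : Fin n → Fin n → ℕ → A}
    (h0 : ∀ i j, X i j 0 = if i = j then 1 else 0) (i a : Fin n) (e : ℕ) (Y : A) :
    X i a 0 * Y - ((-1:k)^((par i + par a)*e)) • (Y * X i a 0) = 0 := by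
  rw [h0]
  by_cases h : i = a
  · subst h
    rw [if_pos rfl, one_mul, mul_one, neg_one_pow_even_left, one_smul, sub_self]
  · rw [if_neg h, zero_mul, mul_zero, smul_zero, sub_zero]

lemma comm_unit_right {par : Fin n → ℕ} {X : Fin n → Fin n → ℕ → A}
    (h0 : ∀ i j, X i j 0 = if i = j then 1 else 0) (i a l b : Fin n) (Y : A) :
    Y * X l b 0 - ((-1:k)^((par i + par a)*(par l + par b))) • (X l b 0 * Y) = 0 := by
  rw [h0]
  by_cases h : l = b
  · subst h
    rw [if_pos rfl, one_mul, mul_one, neg_one_pow_even_right, one_smul, sub_self]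
  · rw [if_neg h, zero_mul, mul_zero, smul_zero, sub_zero]

/-- The crossing (Koszul-sign) commutation property between the two tensor factors. -/
def crossProp (par : Fin n → ℕ) (L R : Fin n → Fin n → ℕ → A) : Prop :=
  ∀ (i j l m : Fin n) (r s : ℕ),
    R l m s * L i j r = ((-1:k)^((par i + par j)*(par l + par m))) • (L i j r * R l m s)

variable (par : Fin n → ℕ) (L R : Fin n → Fin n → ℕ → A)

/-- The candidate image of `t_{i,j}^{(r)}` under the comultiplication, generically. -/
def DDg (i j : Fin n) (r : ℕ) : A :=
  ∑ P ∈ Finset.HasAntidiagonal.antidiagonal r, ∑ a : Fin n, L i a P.1 * R a j P.2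

/-- first half of the expanded supercommutator -/
def FF1 (i j l m : Fin n) (P Q : ℕ × ℕ) : A :=
  ∑ a : Fin n, ∑ b : Fin n,
    ((-1:k)^((par l + par b)*(par a + par j))) •
      ((L i a P.1 * L l b Q.1
        - ((-1:k)^((par i + par a)*(par l + par b))) • (L l b Q.1 * L i a P.1))
        * (R a j P.2 * R b m Q.2))

/-- second half of the expanded supercommutator -/
def FF2 (i j l m : Fin n) (P Q : ℕ × ℕ) : A :=
  ∑ a : Fin n, ∑ b : Fin n,
    (((-1:k)^((par l + par b)*(par a + par j))) * ((-1:k)^((par i + par a)*(par l + par b)))) •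
      ((L l b Q.1 * L i a P.1)
        * (R a j P.2 * R b m Q.2
          - ((-1:k)^((par a + par j)*(par b + par m))) • (R b m Q.2 * R a j P.2)))

/-- common form of both sides of the difference relation for `DDg` -/
def FF3 (i j l m : Fin n) (P Q : ℕ × ℕ) : A :=
  ∑ a : Fin n, ∑ b : Fin n,
    ((((-1:k)^(par i * par j + par i * par l + par j * par l))
        * ((-1:k)^((par i + par b)*(par a + par j)))) •
      (L l a P.1 * L i b Q.1 * (R a j P.2 * R b m Q.2))
    - (((-1:k)^(par i * par j + par i * par l + par j * par l))
        * ((-1:k)^((par i + par b)*(par a + par j)))) •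
      (L l a Q.1 * L i b P.1 * (R a j Q.2 * R b m P.2)))

lemma DDg_zero (hL0 : ∀ i j, L i j 0 = if i = j then 1 else 0)
    (hR0 : ∀ i j, R i j 0 = if i = j then 1 else 0) (i j : Fin n) :
    DDg L R i j 0 = if i = j then 1 else 0 := by
  rw [DDg, Finset.Nat.antidiagonal_zero, Finset.sum_singleton]
  have h : ∀ a : Fin n, L i a 0 * R a j 0
      = if a = i then (if i = j then 1 else 0) else 0 := by
    intro a
    rw [hL0, hR0]
    by_cases h1 : a = i
    · subst h1
      rw [if_pos rfl, if_pos rfl, one_mul]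
    · rw [if_neg (fun h => h1 h.symm), if_neg h1, zero_mul]
  rw [Finset.sum_congr rfl fun a _ => h a, Finset.sum_ite_eq' Finset.univ i
    (fun _ => if i = j then (1 : A) else 0), if_pos (Finset.mem_univ i)]

lemma expand_DD (i' j' l' m' : Fin n) (R' S : ℕ) :
    DDg L R i' j' R' * DDg L R l' m' S
    = ∑ P ∈ Finset.HasAntidiagonal.antidiagonal R', ∑ Q ∈ Finset.HasAntidiagonal.antidiagonal S, ∑ a : Fin n, ∑ b : Fin n,
        (L i' a P.1 * R a j' P.2) * (L l' b Q.1 * R b m' Q.2) := by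
  rw [DDg, DDg]
  simp only [Finset.sum_mul_sum]

lemma expand_DD' (i j l m : Fin n) (R' S : ℕ) :
    DDg L R l m S * DDg L R i j R'
    = ∑ P ∈ Finset.HasAntidiagonal.antidiagonal R', ∑ Q ∈ Finset.HasAntidiagonal.antidiagonal S, ∑ a : Fin n, ∑ b : Fin n,
        (L l b Q.1 * R b m Q.2) * (L i a P.1 * R a j P.2) := by
  rw [expand_DD L R l m i j S R', Finset.sum_comm]
  exact Finset.sum_congr rfl fun P _ => Finset.sum_congr rfl fun Q _ => Finset.sum_comm

lemma key1 (hcr : crossProp (k := k) par L R) (i j l m : Fin n) (R' S : ℕ) :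
    DDg L R i j R' * DDg L R l m S
      - ((-1:k)^((par i + par j)*(par l + par m))) •
          (DDg L R l m S * DDg L R i j R')
    = ∑ P ∈ Finset.HasAntidiagonal.antidiagonal R', ∑ Q ∈ Finset.HasAntidiagonal.antidiagonal S,
        (FF1 (k := k) par L R i j l m P Q + FF2 (k := k) par L R i j l m P Q) := by
  rw [expand_DD L R i j l m R' S, expand_DD' L R i j l m R' S]
  simp only [Finset.smul_sum]
  simp only [← Finset.sum_sub_distrib]
  refine Finset.sum_congr rfl fun P _ => Finset.sum_congr rfl fun Q _ => ?_
  rw [FF1, FF2, ← Finset.sum_add_distrib]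
  refine Finset.sum_congr rfl fun a _ => ?_
  rw [← Finset.sum_add_distrib]
  refine Finset.sum_congr rfl fun b _ => ?_
  exact dagger (hcr l b a j Q.1 P.2) (hcr i a b m P.1 Q.2)
    (sgn1_s8 (par i) (par j) (par l) (par m) (par a) (par b))

lemma key2 (hcr : crossProp (k := k) par L R) (i j l m : Fin n) (r s : ℕ) :
    ((-1:k)^(par i * par j + par i * par l + par j * par l)) •
      (DDg L R l j r * DDg L R i m s
        - DDg L R l j s * DDg L R i m r)
    = ∑ P ∈ Finset.HasAntidiagonal.antidiagonal r, ∑ Q ∈ Finset.HasAntidiagonal.antidiagonal s,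
        FF3 (k := k) par L R i j l m P Q := by
  have e3 : DDg L R l j r * DDg L R i m s
      = ∑ P ∈ Finset.HasAntidiagonal.antidiagonal r, ∑ Q ∈ Finset.HasAntidiagonal.antidiagonal s, ∑ a : Fin n, ∑ b : Fin n,
          ((-1:k)^((par i + par b)*(par a + par j))) •
            (L l a P.1 * L i b Q.1 * (R a j P.2 * R b m Q.2)) := by
    rw [expand_DD L R l j i m r s]
    exact Finset.sum_congr rfl fun P _ => Finset.sum_congr rfl fun Q _ =>
      Finset.sum_congr rfl fun a _ => Finset.sum_congr rfl fun b _ =>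
        crossmul (hcr i b a j Q.1 P.2)
  have e4 : DDg L R l j s * DDg L R i m r
      = ∑ P ∈ Finset.HasAntidiagonal.antidiagonal r, ∑ Q ∈ Finset.HasAntidiagonal.antidiagonal s, ∑ a : Fin n, ∑ b : Fin n,
          ((-1:k)^((par i + par b)*(par a + par j))) •
            (L l a Q.1 * L i b P.1 * (R a j Q.2 * R b m P.2)) := by
    rw [expand_DD L R l j i m s r, Finset.sum_comm]
    exact Finset.sum_congr rfl fun P _ => Finset.sum_congr rfl fun Q _ =>
      Finset.sum_congr rfl fun a _ => Finset.sum_congr rfl fun b _ =>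
        crossmul (hcr i b a j P.1 Q.2)
  rw [e3, e4, smul_sub]
  simp only [Finset.smul_sum]
  simp only [← Finset.sum_sub_distrib]
  refine Finset.sum_congr rfl fun P _ => Finset.sum_congr rfl fun Q _ => ?_
  rw [FF3]
  refine Finset.sum_congr rfl fun a _ => ?_
  refine Finset.sum_congr rfl fun b _ => ?_
  rw [smul_smul, smul_smul]

lemma FF1_zero_left (hL0 : ∀ i j, L i j 0 = if i = j then 1 else 0)
    (i j l m : Fin n) (t : ℕ) (Q : ℕ × ℕ) :
    FF1 (k := k) par L R i j l m (0, t) Q = 0 := by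
  rw [FF1]
  refine Finset.sum_eq_zero fun a _ => Finset.sum_eq_zero fun b _ => ?_
  rw [comm_unit_left (par := par) hL0 i a (par l + par b) (L l b Q.1), zero_mul, smul_zero]

lemma FF1_zero_right (hL0 : ∀ i j, L i j 0 = if i = j then 1 else 0)
    (i j l m : Fin n) (P : ℕ × ℕ) (t : ℕ) :
    FF1 (k := k) par L R i j l m P (0, t) = 0 := by
  rw [FF1]
  refine Finset.sum_eq_zero fun a _ => Finset.sum_eq_zero fun b _ => ?_
  rw [comm_unit_right (par := par) hL0 i a l b (L i a P.1), zero_mul, smul_zero]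

lemma FF2_zero_left (hR0 : ∀ i j, R i j 0 = if i = j then 1 else 0)
    (i j l m : Fin n) (t : ℕ) (Q : ℕ × ℕ) :
    FF2 (k := k) par L R i j l m (t, 0) Q = 0 := by
  rw [FF2]
  refine Finset.sum_eq_zero fun a _ => Finset.sum_eq_zero fun b _ => ?_
  rw [comm_unit_left (par := par) hR0 a j (par b + par m) (R b m Q.2), mul_zero, smul_zero]

lemma FF2_zero_right (hR0 : ∀ i j, R i j 0 = if i = j then 1 else 0)
    (i j l m : Fin n) (P : ℕ × ℕ) (t : ℕ) :
    FF2 (k := k) par L R i j l m P (t, 0) = 0 := by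
  rw [FF2]
  refine Finset.sum_eq_zero fun a _ => Finset.sum_eq_zero fun b _ => ?_
  rw [comm_unit_right (par := par) hR0 a j b m (R a j P.2), mul_zero, smul_zero]

lemma FF_combine (hLd : rttDiff (k := k) par L) (hRd : rttDiff (k := k) par R)
    (i j l m : Fin n) (P Q : ℕ × ℕ) :
    (FF1 (k := k) par L R i j l m (P.1+1, P.2) Q - FF1 (k := k) par L R i j l m P (Q.1+1, Q.2))
    + (FF2 (k := k) par L R i j l m (P.1, P.2+1) Q - FF2 (k := k) par L R i j l m P (Q.1, Q.2+1))
    = FF3 (k := k) par L R i j l m P Q := by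
  have h1 : FF1 (k := k) par L R i j l m (P.1+1, P.2) Q
        - FF1 (k := k) par L R i j l m P (Q.1+1, Q.2)
      = ∑ a : Fin n, ∑ b : Fin n,
          ((-1:k)^((par l + par b)*(par a + par j))) •
            ((((-1:k)^(par i * par a + par i * par l + par a * par l)) •
              (L l a P.1 * L i b Q.1 - L l a Q.1 * L i b P.1))
              * (R a j P.2 * R b m Q.2)) := by
    rw [FF1, FF1, ← Finset.sum_sub_distrib]
    refine Finset.sum_congr rfl fun a _ => ?_
    rw [← Finset.sum_sub_distrib]
    refine Finset.sum_congr rfl fun b _ => ?_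
    dsimp only
    rw [← smul_sub, ← sub_mul, hLd i a l b P.1 Q.1]
  have h2 : FF2 (k := k) par L R i j l m (P.1, P.2+1) Q
        - FF2 (k := k) par L R i j l m P (Q.1, Q.2+1)
      = ∑ a : Fin n, ∑ b : Fin n,
          (((-1:k)^((par l + par b)*(par a + par j)))
              * ((-1:k)^((par i + par a)*(par l + par b)))) •
            ((L l b Q.1 * L i a P.1)
              * (((-1:k)^(par a * par j + par a * par b + par j * par b)) •
                (R b j P.2 * R a m Q.2 - R b j Q.2 * R a m P.2))) := by
    rw [FF2, FF2, ← Finset.sum_sub_distrib]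
    refine Finset.sum_congr rfl fun a _ => ?_
    rw [← Finset.sum_sub_distrib]
    refine Finset.sum_congr rfl fun b _ => ?_
    dsimp only
    rw [← smul_sub, ← mul_sub, hRd a j b m P.2 Q.2]
  rw [h1, h2]
  rw [show (∑ a : Fin n, ∑ b : Fin n,
      (((-1:k)^((par l + par b)*(par a + par j)))
          * ((-1:k)^((par i + par a)*(par l + par b)))) •
        ((L l b Q.1 * L i a P.1)
          * (((-1:k)^(par a * par j + par a * par b + par j * par b)) •
            (R b j P.2 * R a m Q.2 - R b j Q.2 * R a m P.2))))
      = ∑ a : Fin n, ∑ b : Fin n,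
      (((-1:k)^((par l + par a)*(par b + par j)))
          * ((-1:k)^((par i + par b)*(par l + par a)))) •
        ((L l a Q.1 * L i b P.1)
          * (((-1:k)^(par b * par j + par b * par a + par j * par a)) •
            (R a j P.2 * R b m Q.2 - R a j Q.2 * R b m P.2)))
    from Finset.sum_comm]
  rw [FF3, ← Finset.sum_add_distrib]
  refine Finset.sum_congr rfl fun a _ => ?_
  rw [← Finset.sum_add_distrib]
  refine Finset.sum_congr rfl fun b _ => ?_
  have hA : ((-1:k)^((par l + par b)*(par a + par j)))
      * ((-1:k)^(par i * par a + par i * par l + par a * par l))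
      = ((-1:k)^(par i * par j + par i * par l + par j * par l))
      * ((-1:k)^((par i + par b)*(par a + par j))) :=
    sgn2_s8 (par i) (par j) (par l) (par a) (par b)
  have hB : ((-1:k)^((par l + par a)*(par b + par j)))
      * ((-1:k)^((par i + par b)*(par l + par a)))
      * ((-1:k)^(par b * par j + par b * par a + par j * par a))
      = ((-1:k)^(par i * par j + par i * par l + par j * par l))
      * ((-1:k)^((par i + par b)*(par a + par j))) :=
    sgn3 (par i) (par j) (par l) (par a) (par b)
  simp only [smul_mul_assoc, mul_smul_comm, smul_smul]
  rw [hA, hB]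
  simp only [sub_mul, mul_sub, smul_sub, mul_assoc]
  module

lemma DDg_diff (hL0 : ∀ i j, L i j 0 = if i = j then 1 else 0)
    (hR0 : ∀ i j, R i j 0 = if i = j then 1 else 0)
    (hLd : rttDiff (k := k) par L) (hRd : rttDiff (k := k) par R)
    (hcr : crossProp (k := k) par L R) :
    rttDiff (k := k) par (DDg L R) := by
  intro i j l m r s
  rw [key1 (k := k) par L R hcr i j l m (r+1) s, key1 (k := k) par L R hcr i j l m r (s+1)]
  simp only [Finset.sum_add_distrib]
  rw [add_sub_add_comm]
  rw [tele1 (FF1 (k := k) par L R i j l m) (FF1_zero_left (k := k) par L R hL0 i j l m)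
    (FF1_zero_right (k := k) par L R hL0 i j l m) r s]
  rw [tele2 (FF2 (k := k) par L R i j l m) (FF2_zero_left (k := k) par L R hR0 i j l m)
    (FF2_zero_right (k := k) par L R hR0 i j l m) r s]
  rw [key2 (k := k) par L R hcr i j l m r s]
  rw [← Finset.sum_add_distrib]
  refine Finset.sum_congr rfl fun P _ => ?_
  rw [← Finset.sum_add_distrib]
  exact Finset.sum_congr rfl fun Q _ => FF_combine (k := k) par L R hLd hRd i j l m P Q

lemma DDg_rtt (hL0 : ∀ i j, L i j 0 = if i = j then 1 else 0)
    (hR0 : ∀ i j, R i j 0 = if i = j then 1 else 0)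
    (hLc : rttClosed (k := k) par L) (hRc : rttClosed (k := k) par R)
    (hcr : crossProp (k := k) par L R) :
    rttClosed (k := k) par (DDg L R) :=
  closed_of_diff (DDg_zero L R hL0 hR0)
    (DDg_diff (k := k) par L R hL0 hR0 (diff_of_closed hLc) (diff_of_closed hRc) hcr)

end Generic

section Quot
variable (k : Type*) [Field k] (n : ℕ) (par : Fin n → ℕ)

lemma tL_unit : ∀ i j : Fin n, tL k n par i j 0 = if i = j then 1 else 0 := by
  intro i j
  have h := RingQuot.mkAlgHom_rel k (YYRel.left_unit (k := k) (n := n) (par := par) i j)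
  rw [tL, h]
  split_ifs <;> simp

lemma tR_unit : ∀ i j : Fin n, tR k n par i j 0 = if i = j then 1 else 0 := by
  intro i j
  have h := RingQuot.mkAlgHom_rel k (YYRel.right_unit (k := k) (n := n) (par := par) i j)
  rw [tR, h]
  split_ifs <;> simp

lemma tL_rtt : rttClosed (k := k) par (tL k n par) := by
  intro i j l m r s
  have h := RingQuot.mkAlgHom_rel k (YYRel.left_rtt (k := k) (n := n) (par := par) i j l m r s)
  simp only [map_sub, map_mul, map_smul, map_sum] at h
  exact h

lemma tR_rtt : rttClosed (k := k) par (tR k n par) := by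
  intro i j l m r s
  have h := RingQuot.mkAlgHom_rel k (YYRel.right_rtt (k := k) (n := n) (par := par) i j l m r s)
  simp only [map_sub, map_mul, map_smul, map_sum] at h
  exact h

lemma cross_rel : crossProp (k := k) par (tL k n par) (tR k n par) := by
  intro i j l m r s
  have h := RingQuot.mkAlgHom_rel k (YYRel.cross (k := k) (n := n) (par := par) i j l m r s)
  simp only [map_mul, map_smul] at h
  exact h

/-- The candidate image of `t_{i,j}^{(r)}` under the comultiplication. -/
def DD (i j : Fin n) (r : ℕ) : YangianTensor k n par :=
  DDg (tL k n par) (tR k n par) i j r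

lemma DD_zero (i j : Fin n) : DD k n par i j 0 = if i = j then 1 else 0 :=
  DDg_zero (tL k n par) (tR k n par) (tL_unit k n par) (tR_unit k n par) i j

lemma DD_rtt : rttClosed (k := k) par (DD k n par) :=
  DDg_rtt (k := k) par (tL k n par) (tR k n par) (tL_unit k n par) (tR_unit k n par)
    (tL_rtt k n par) (tR_rtt k n par) (cross_rel k n par)

end Quot

/-- the comultiplication
`Δ(t_{i,j}^{(r)}) = Σ_{s=0}^r Σ_{m=1}^{M+N} t_{i,m}^{(r-s)} ⊗ t_{m,j}^{(s)}`
extends to a well-defined superalgebra homomorphism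
`Δ : Y_{M|N} → Y_{M|N} ⊗ Y_{M|N}` (graded tensor product). -/
theorem statement8 (k : Type*) [Field k]
    (M N : ℕ) (par : Fin (M + N) → ℕ) (hpar : ∀ i, par i ≤ 1)
    (hM : (Finset.univ.filter fun i => par i = 0).card = M) :
    ∃ Δ : Yangian k (M + N) par →ₐ[k] YangianTensor k (M + N) par,
      ∀ (i j : Fin (M + N)) (r : ℕ),
        Δ (yT k (M + N) par i j r)
          = ∑ s ∈ Finset.range (r + 1), ∑ m : Fin (M + N),
              tL k (M + N) par i m (r - s) * tR k (M + N) par m j s := by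
  classical
  have hrel : ∀ ⦃x y : FreeAlgebra k (YGen (M + N))⦄, YangianRel k (M + N) par x y →
      (FreeAlgebra.lift k fun g : YGen (M + N) => DD k (M + N) par g.1 g.2.1 g.2.2) x
        = (FreeAlgebra.lift k fun g : YGen (M + N) => DD k (M + N) par g.1 g.2.1 g.2.2) y := by
    intro x y h
    induction h with
    | unit i j =>
      rw [yX, FreeAlgebra.lift_ι_apply]
      split_ifs with hij
      · rw [map_one]
        have := DD_zero k (M + N) par i j
        rw [if_pos hij] at this
        exact this
      · rw [map_zero]
        have := DD_zero k (M + N) par i j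
        rw [if_neg hij] at this
        exact this
    | rtt i j l m r s =>
      simp only [yX, map_sub, map_mul, map_smul, map_sum, FreeAlgebra.lift_ι_apply]
      exact DD_rtt k (M + N) par i j l m r s
  refine ⟨RingQuot.liftAlgHom k ⟨_, hrel⟩, ?_⟩
  intro i j r
  rw [yT, RingQuot.liftAlgHom_mkAlgHom_apply, yX, FreeAlgebra.lift_ι_apply]
  show DD k (M + N) par i j r = _
  rw [DD, DDg, Finset.Nat.sum_antidiagonal_eq_sum_range_succ_mk]
  conv_rhs => rw [← Finset.sum_range_reflect]
  refine Finset.sum_congr rfl fun x hx => ?_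
  have hx' : x ≤ r := Nat.lt_succ_iff.mp (Finset.mem_range.mp hx)
  rw [show r + 1 - 1 - x = r - x by omega]
  refine Finset.sum_congr rfl fun a _ => ?_
  rw [show r - (r - x) = x by omega]
end

section
/- In the super Yangian Y_{M|N}, the entries t'_{i,j}(u) of the inverse matrix T(u)^{-1} satisfy (u-v)[t_{i,j}(u), t'_{k,l}(v)] = (-1)^{|i||j|+|i||k|+|j||k|}(δ_{k,j} Σ_{s=1}^{M+N} t_{i,s}(u) t'_{s,l}(v) - δ_{i,l} Σ_{s=1}^{M+N} t'_{k,s}(v) t_{s,j}(u)). -/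
/-- The supercommutator `[x,y] = x·y - (-1)^ε · y·x`, `ε` being the product of parities. -/
def sbr {A : Type*} [Ring A] (ε : ℕ) (x y : A) : A := x * y - (-1 : A) ^ ε * (y * x)

/-- Coefficient of `u^{-r}` in the product of the series with coefficients `f` and `g`. -/
def conv {A : Type*} [Ring A] (f g : ℕ → A) (r : ℕ) : A :=
  ∑ x ∈ Finset.HasAntidiagonal.antidiagonal r, f x.1 * g x.2

namespace S9
variable {A : Type*} [Ring A]

lemma sbr_zero (ε : ℕ) (x : A) : sbr ε x 0 = 0 := by simp [sbr]

lemma sbr_one_even (ε : ℕ) (h : Even ε) (x : A) : sbr ε x 1 = 0 := by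
  simp [sbr, h.neg_one_pow]

lemma neg_one_pow_shift (a k : ℕ) : (-1:A)^(a + 2*k) = (-1:A)^a := by
  rw [pow_add, pow_mul, neg_one_sq, one_pow, mul_one]

lemma neg_one_pow_comm (k : ℕ) (x : A) : (-1:A)^k * x = x * (-1:A)^k :=
  ((Commute.neg_one_left x).pow_left k).eq

lemma sbr_congr {a b : ℕ} (h : (-1:A)^a = (-1:A)^b) (x y : A) : sbr a x y = sbr b x y := by
  simp [sbr, h]

lemma sbr_mul (κ μ : ℕ) (x y z : A) :
    sbr (κ + μ) x (y * z) = sbr κ x y * z + (-1:A)^κ * (y * sbr μ x z) := by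
  have h : y * ((-1:A)^μ * (z * x)) = (-1:A)^μ * (y * (z * x)) := by
    rw [← mul_assoc, ← neg_one_pow_comm, mul_assoc]
  simp only [sbr, pow_add, mul_sub]
  rw [h]
  noncomm_ring

lemma sbr_sum {ι} (s : Finset ι) (ε : ℕ) (x : A) (f : ι → A) :
    sbr ε x (∑ b ∈ s, f b) = ∑ b ∈ s, sbr ε x (f b) := by
  simp [sbr, Finset.mul_sum, Finset.sum_mul, Finset.sum_sub_distrib]

lemma conv_eq_coeff (f g : ℕ → A) (n : ℕ) :
    conv f g n = PowerSeries.coeff n (PowerSeries.mk f * PowerSeries.mk g) := by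
  simp [conv, PowerSeries.coeff_mul]

lemma conv_assoc (f g h : ℕ → A) (n : ℕ) :
    conv (conv f g) h n = conv f (conv g h) n := by
  have h1 : PowerSeries.mk (conv f g) = PowerSeries.mk f * PowerSeries.mk g := by
    ext k; simp [conv_eq_coeff]
  have h2 : PowerSeries.mk (conv g h) = PowerSeries.mk g * PowerSeries.mk h := by
    ext k; simp [conv_eq_coeff]
  rw [conv_eq_coeff, conv_eq_coeff, h1, h2, mul_assoc]

lemma conv_sum_right {ι} (S : Finset ι) (f : ℕ → A) (g : ι → ℕ → A) (n : ℕ) :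
    conv f (fun q => ∑ b ∈ S, g b q) n = ∑ b ∈ S, conv f (g b) n := by
  simp only [conv, Finset.mul_sum]; exact Finset.sum_comm

lemma conv_sum_left {ι} (S : Finset ι) (f : ι → ℕ → A) (g : ℕ → A) (n : ℕ) :
    conv (fun p => ∑ b ∈ S, f b p) g n = ∑ b ∈ S, conv (f b) g n := by
  simp only [conv, Finset.sum_mul]; exact Finset.sum_comm

lemma conv_sub_right (f g h : ℕ → A) (n : ℕ) :
    conv f (fun q => g q - h q) n = conv f g n - conv f h n := by
  simp [conv, mul_sub, Finset.sum_sub_distrib]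

lemma conv_sub_left (f g h : ℕ → A) (n : ℕ) :
    conv (fun p => f p - g p) h n = conv f h n - conv g h n := by
  simp [conv, sub_mul, Finset.sum_sub_distrib]

lemma conv_const_mul_left (c : A) (f g : ℕ → A) (n : ℕ) :
    conv (fun p => c * f p) g n = c * conv f g n := by
  simp [conv, Finset.mul_sum, mul_assoc]

lemma conv_mid_left (c : A) (f g : ℕ → A) (n : ℕ) :
    conv f (fun q => c * g q) n = conv (fun p => f p * c) g n := by
  simp [conv, mul_assoc]

lemma conv_mid_right (c : A) (f g : ℕ → A) (n : ℕ) :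
    conv f (fun q => g q * c) n = conv f g n * c := by
  simp [conv, Finset.sum_mul, mul_assoc]

lemma conv_right_mul_left (c : A) (f g : ℕ → A) (n : ℕ) :
    conv (fun p => f p * c) g n = conv f (fun q => c * g q) n := (conv_mid_left c f g n).symm

lemma conv_delta_right (f : ℕ → A) (c : A) (n : ℕ) :
    conv f (fun q => if q = 0 then c else 0) n = f n * c := by
  rw [conv, Finset.sum_eq_single (n, 0)]
  · simp
  · rintro ⟨p, q⟩ hb hne
    have h1 : p + q = n := Finset.HasAntidiagonal.mem_antidiagonal.mp hb
    have : q ≠ 0 := by rintro rfl; exact hne (by simp [← h1])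
    simp [this]
  · intro h; exact absurd (Finset.HasAntidiagonal.mem_antidiagonal.mpr (by simp)) h

lemma conv_delta_left (g : ℕ → A) (c : A) (n : ℕ) :
    conv (fun p => if p = 0 then c else 0) g n = c * g n := by
  rw [conv, Finset.sum_eq_single (0, n)]
  · simp
  · rintro ⟨p, q⟩ hb hne
    have h1 : p + q = n := Finset.HasAntidiagonal.mem_antidiagonal.mp hb
    have : p ≠ 0 := by rintro rfl; exact hne (by simp [← h1])
    simp [this]
  · intro h; exact absurd (Finset.HasAntidiagonal.mem_antidiagonal.mpr (by simp)) h

lemma conv_shift_right (f g : ℕ → A) (hg : g 0 = 0) (n : ℕ) :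
    conv f g (n + 1) = conv f (fun q => g (q + 1)) n := by
  rw [conv, Finset.Nat.sum_antidiagonal_succ']
  simp [hg, conv]

lemma conv_shift_left (f g : ℕ → A) (hf : f 0 = 0) (n : ℕ) :
    conv f g (n + 1) = conv (fun p => f (p + 1)) g n := by
  rw [conv, Finset.Nat.sum_antidiagonal_succ]
  simp [hf, conv]

lemma conv_add_left (f g h : ℕ → A) (n : ℕ) :
    conv (fun p => f p + g p) h n = conv f h n + conv g h n := by
  simp [conv, add_mul, Finset.sum_add_distrib]

lemma conv_neg_pow_mid (k : ℕ) (u h : ℕ → A) (n : ℕ) :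
    conv u (fun q => (-1:A)^k * h q) n = (-1:A)^k * conv u h n := by
  rw [conv_mid_left]
  have he : (fun p => u p * (-1:A)^k) = fun p => (-1:A)^k * u p :=
    funext fun p => (neg_one_pow_comm k (u p)).symm
  rw [he, conv_const_mul_left]

lemma conv_zero (f g : ℕ → A) : conv f g 0 = f 0 * g 0 := by
  simp [conv]

end S9

/-- in the super Yangian `Y_{M|N}` (realized by any family `t i j r` in a
ring satisfying the series-form RTT relations with `t i j 0 = δ_{ij}`), the entries
`t'_{i,j}(u)` of the inverse matrix `T(u)^{-1}` satisfy
`(u-v)[t_{i,j}(u), t'_{l,m}(v)] = (-1)^{|i||j|+|i||l|+|j||l|}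
  (δ_{l,j} Σ_w t_{i,w}(u) t'_{w,m}(v) - δ_{i,m} Σ_w t'_{l,w}(v) t_{w,j}(u))`,
stated coefficientwise at `u^{-r} v^{-s}`. -/
theorem statement9 {A : Type*} [Ring A] (M N : ℕ)
    (par : Fin (M + N) → ℕ) (hpar : ∀ i, par i ≤ 1)
    (hM : (Finset.univ.filter fun i => par i = 0).card = M)
    (t t' : Fin (M + N) → Fin (M + N) → ℕ → A)
    (h0 : ∀ i j, t i j 0 = if i = j then 1 else 0)
    (hrtt : ∀ i j l m : Fin (M + N), ∀ r s : ℕ,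
      sbr ((par i + par j) * (par l + par m)) (t i j (r + 1)) (t l m s)
          - sbr ((par i + par j) * (par l + par m)) (t i j r) (t l m (s + 1))
        = (-1 : A) ^ (par i * par j + par i * par l + par j * par l) *
            (t l j r * t i m s - t l j s * t i m r))
    (hinv : ∀ (i j : Fin (M + N)) (r : ℕ),
      ∑ w : Fin (M + N), conv (t i w) (t' w j) r = if i = j ∧ r = 0 then 1 else 0)
    (hinv' : ∀ (i j : Fin (M + N)) (r : ℕ),
      ∑ w : Fin (M + N), conv (t' i w) (t w j) r = if i = j ∧ r = 0 then 1 else 0) :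
    ∀ i j l m : Fin (M + N), ∀ r s : ℕ,
      sbr ((par i + par j) * (par l + par m)) (t i j (r + 1)) (t' l m s)
          - sbr ((par i + par j) * (par l + par m)) (t i j r) (t' l m (s + 1))
        = (-1 : A) ^ (par i * par j + par i * par l + par j * par l) *
            ((if l = j then ∑ w : Fin (M + N), t i w r * t' w m s else 0) -
              (if i = m then ∑ w : Fin (M + N), t' l w s * t w j r else 0)) := by
  intro i j l m r s
  -- scalar brackets vanish
  have hbr0 : ∀ (a b : Fin (M + N)) (x : A),
      sbr ((par i + par j) * (par a + par b)) x (t a b 0) = 0 := by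
    intro a b x
    rw [h0]
    by_cases hab : a = b
    · subst hab
      simp only [if_pos rfl]
      exact S9.sbr_one_even _ (Even.mul_left ⟨par a, rfl⟩ _) x
    · simp [hab, S9.sbr_zero]
  have hbrδ : ∀ (a b : Fin (M + N)) (n : ℕ) (x : A),
      sbr ((par i + par j) * (par a + par b)) x (if a = b ∧ n = 0 then 1 else 0) = 0 := by
    intro a b n x
    by_cases hab : a = b ∧ n = 0
    · rw [if_pos hab]
      obtain ⟨rfl, -⟩ := hab
      exact S9.sbr_one_even _ (Even.mul_left ⟨par a, rfl⟩ _) x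
    · rw [if_neg hab]; exact S9.sbr_zero _ x
  -- super-Leibniz applied to T'(v)T(v) = 1
  have hstar : ∀ (b : Fin (M + N)) (r' n : ℕ),
      ∑ a : Fin (M + N),
        (conv (fun p => sbr ((par i + par j) * (par l + par a)) (t i j r') (t' l a p)) (t a b) n
          + (-1:A) ^ ((par i + par j) * (par l + par a)) *
              conv (t' l a)
                (fun q => sbr ((par i + par j) * (par a + par b)) (t i j r') (t a b q)) n) = 0 := by
    intro b r' n
    have h2 : ∑ a : Fin (M + N),
        sbr ((par i + par j) * (par l + par b)) (t i j r') (conv (t' l a) (t a b) n) = 0 := by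
      rw [← S9.sbr_sum, hinv' l b n]
      exact hbrδ l b n _
    rw [← h2]
    refine Finset.sum_congr rfl fun a _ => ?_
    have hεν : (-1:A) ^ ((par i + par j) * (par l + par b))
        = (-1:A) ^ ((par i + par j) * (par l + par a) + (par i + par j) * (par a + par b)) := by
      have he : (par i + par j) * (par l + par a) + (par i + par j) * (par a + par b)
          = (par i + par j) * (par l + par b) + 2 * ((par i + par j) * par a) := by ring
      rw [he, S9.neg_one_pow_shift]
    simp only [conv, S9.sbr_sum, Finset.mul_sum, ← Finset.sum_add_distrib]
    refine Finset.sum_congr rfl fun pq _ => ?_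
    rw [S9.sbr_congr hεν, S9.sbr_mul]
  -- key identity: bracket with t' expressed through brackets with t
  have hkey : ∀ r' s' : ℕ,
      sbr ((par i + par j) * (par l + par m)) (t i j r') (t' l m s')
        = - ∑ a : Fin (M + N), ∑ b : Fin (M + N),
            (-1:A) ^ ((par i + par j) * (par l + par a)) *
              conv (conv (t' l a)
                (fun q => sbr ((par i + par j) * (par a + par b)) (t i j r') (t a b q)))
                (t' b m) s' := by
    intro r' s'
    have hE : ∑ b : Fin (M + N),
        conv (fun n => ∑ a : Fin (M + N),
          (conv (fun p => sbr ((par i + par j) * (par l + par a)) (t i j r') (t' l a p)) (t a b) n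
            + (-1:A) ^ ((par i + par j) * (par l + par a)) *
                conv (t' l a)
                  (fun q => sbr ((par i + par j) * (par a + par b)) (t i j r') (t a b q)) n))
          (t' b m) s' = 0 := by
      simp only [hstar]
      simp [conv]
    -- expand hE
    have hsplit : ∀ b : Fin (M + N),
        conv (fun n => ∑ a : Fin (M + N),
          (conv (fun p => sbr ((par i + par j) * (par l + par a)) (t i j r') (t' l a p)) (t a b) n
            + (-1:A) ^ ((par i + par j) * (par l + par a)) *
                conv (t' l a)
                  (fun q => sbr ((par i + par j) * (par a + par b)) (t i j r') (t a b q)) n))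
          (t' b m) s'
        = ∑ a : Fin (M + N),
            (conv (conv (fun p => sbr ((par i + par j) * (par l + par a)) (t i j r') (t' l a p))
               (t a b)) (t' b m) s'
             + (-1:A) ^ ((par i + par j) * (par l + par a)) *
                conv (conv (t' l a)
                  (fun q => sbr ((par i + par j) * (par a + par b)) (t i j r') (t a b q)))
                  (t' b m) s') := by
      intro b
      rw [S9.conv_sum_left]
      refine Finset.sum_congr rfl fun a _ => ?_
      rw [S9.conv_add_left, S9.conv_const_mul_left]
    simp only [hsplit] at hE
    simp only [Finset.sum_add_distrib] at hE
    -- first part of hE collapses to the bracket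
    have hfirst : ∑ b : Fin (M + N), ∑ a : Fin (M + N),
        conv (conv (fun p => sbr ((par i + par j) * (par l + par a)) (t i j r') (t' l a p))
          (t a b)) (t' b m) s'
        = sbr ((par i + par j) * (par l + par m)) (t i j r') (t' l m s') := by
      rw [Finset.sum_comm]
      have hA : ∀ a : Fin (M + N), ∑ b : Fin (M + N),
          conv (conv (fun p => sbr ((par i + par j) * (par l + par a)) (t i j r') (t' l a p))
            (t a b)) (t' b m) s'
          = (if a = m then sbr ((par i + par j) * (par l + par a)) (t i j r') (t' l a s') else 0) := by
        intro a
        have h3 : ∀ b : Fin (M + N),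
            conv (conv (fun p => sbr ((par i + par j) * (par l + par a)) (t i j r') (t' l a p))
              (t a b)) (t' b m) s'
            = conv (fun p => sbr ((par i + par j) * (par l + par a)) (t i j r') (t' l a p))
                (conv (t a b) (t' b m)) s' := fun b => S9.conv_assoc _ _ _ _
        simp only [h3]
        rw [← S9.conv_sum_right]
        have h4 : (fun q => ∑ b : Fin (M + N), conv (t a b) (t' b m) q)
            = fun q => if a = m ∧ q = 0 then (1:A) else 0 := funext fun q => hinv a m q
        rw [h4]
        by_cases ham : a = m
        · simp only [ham, true_and, if_pos rfl]
          rw [S9.conv_delta_right]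
          simp
        · simp only [ham, false_and, if_neg ham]
          simp [conv]
      simp only [hA]
      simp
    rw [hfirst] at hE
    rw [Finset.sum_comm]
    exact eq_neg_of_add_eq_zero_left hE
  -- per-term telescoping and RTT substitution
  have hterm : ∀ a b : Fin (M + N),
      (-1:A) ^ ((par i + par j) * (par l + par a)) *
          conv (conv (t' l a)
            (fun q => sbr ((par i + par j) * (par a + par b)) (t i j r) (t a b q)))
            (t' b m) (s + 1)
        - (-1:A) ^ ((par i + par j) * (par l + par a)) *
            conv (conv (t' l a)
              (fun q => sbr ((par i + par j) * (par a + par b)) (t i j (r + 1)) (t a b q)))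
              (t' b m) s
      = (-1:A) ^ (par i * par j + par i * par l + par j * par l) *
          (conv (conv (t' l a) (fun q => t a j q * t i b r)) (t' b m) s
            - conv (conv (t' l a) (fun q => t a j r * t i b q)) (t' b m) s) := by
    intro a b
    have hg0 : sbr ((par i + par j) * (par a + par b)) (t i j r) (t a b 0) = 0 := hbr0 a b _
    have hc0 : conv (t' l a)
        (fun q => sbr ((par i + par j) * (par a + par b)) (t i j r) (t a b q)) 0 = 0 := by
      rw [S9.conv_zero]; simp [hg0]
    have hZ : conv (conv (t' l a)
          (fun q => sbr ((par i + par j) * (par a + par b)) (t i j (r + 1)) (t a b q)))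
          (t' b m) s
        - conv (conv (t' l a)
            (fun q => sbr ((par i + par j) * (par a + par b)) (t i j r) (t a b q)))
            (t' b m) (s + 1)
        = (-1:A) ^ (par i * par j + par i * par a + par j * par a) *
            (conv (conv (t' l a) (fun q => t a j r * t i b q)) (t' b m) s
              - conv (conv (t' l a) (fun q => t a j q * t i b r)) (t' b m) s) := by
      rw [S9.conv_shift_left _ _ hc0]
      have h5 : (fun p => conv (t' l a)
            (fun q => sbr ((par i + par j) * (par a + par b)) (t i j r) (t a b q)) (p + 1))
          = conv (t' l a)
              (fun q => sbr ((par i + par j) * (par a + par b)) (t i j r) (t a b (q + 1))) :=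
        funext fun p => S9.conv_shift_right _ _ hg0 p
      rw [h5, ← S9.conv_sub_left]
      have h6 : (fun p => conv (t' l a)
            (fun q => sbr ((par i + par j) * (par a + par b)) (t i j (r + 1)) (t a b q)) p
          - conv (t' l a)
              (fun q => sbr ((par i + par j) * (par a + par b)) (t i j r) (t a b (q + 1))) p)
          = conv (t' l a)
              (fun q => sbr ((par i + par j) * (par a + par b)) (t i j (r + 1)) (t a b q)
                - sbr ((par i + par j) * (par a + par b)) (t i j r) (t a b (q + 1))) :=
        funext fun p => (S9.conv_sub_right _ _ _ p).symm
      rw [h6]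
      have h7 : (fun q => sbr ((par i + par j) * (par a + par b)) (t i j (r + 1)) (t a b q)
            - sbr ((par i + par j) * (par a + par b)) (t i j r) (t a b (q + 1)))
          = fun q => (-1:A) ^ (par i * par j + par i * par a + par j * par a) *
              (t a j r * t i b q - t a j q * t i b r) :=
        funext fun q => hrtt i j a b r q
      rw [h7]
      have h8 : conv (t' l a)
            (fun q => (-1:A) ^ (par i * par j + par i * par a + par j * par a) *
              (t a j r * t i b q - t a j q * t i b r))
          = fun n => (-1:A) ^ (par i * par j + par i * par a + par j * par a) *
              conv (t' l a) (fun q => t a j r * t i b q - t a j q * t i b r) n :=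
        funext fun n => S9.conv_neg_pow_mid _ _ _ n
      rw [h8, S9.conv_const_mul_left]
      have h9 : conv (t' l a) (fun q => t a j r * t i b q - t a j q * t i b r)
          = fun n => conv (t' l a) (fun q => t a j r * t i b q) n
              - conv (t' l a) (fun q => t a j q * t i b r) n :=
        funext fun n => S9.conv_sub_right _ _ _ n
      rw [h9, S9.conv_sub_left]
    have hc : (-1:A) ^ ((par i + par j) * (par l + par a)) *
          conv (conv (t' l a)
            (fun q => sbr ((par i + par j) * (par a + par b)) (t i j r) (t a b q)))
            (t' b m) (s + 1)
        - (-1:A) ^ ((par i + par j) * (par l + par a)) *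
            conv (conv (t' l a)
              (fun q => sbr ((par i + par j) * (par a + par b)) (t i j (r + 1)) (t a b q)))
              (t' b m) s
        = -((-1:A) ^ ((par i + par j) * (par l + par a)) *
            (conv (conv (t' l a)
              (fun q => sbr ((par i + par j) * (par a + par b)) (t i j (r + 1)) (t a b q)))
              (t' b m) s
            - conv (conv (t' l a)
                (fun q => sbr ((par i + par j) * (par a + par b)) (t i j r) (t a b q)))
                (t' b m) (s + 1))) := by
      rw [mul_sub, neg_sub]
    rw [hc, hZ, ← mul_assoc, ← pow_add]
    have hexp : (par i + par j) * (par l + par a)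
          + (par i * par j + par i * par a + par j * par a)
        = (par i * par j + par i * par l + par j * par l)
          + 2 * (par i * par a + par j * par a) := by ring
    rw [hexp, S9.neg_one_pow_shift, ← mul_neg, neg_sub]
  -- the two collapsed double sums
  have hW1 : ∑ a : Fin (M + N), ∑ b : Fin (M + N),
      conv (conv (t' l a) (fun q => t a j r * t i b q)) (t' b m) s
      = if i = m then ∑ w : Fin (M + N), t' l w s * t w j r else 0 := by
    have hb : ∀ a : Fin (M + N), ∑ b : Fin (M + N),
        conv (conv (t' l a) (fun q => t a j r * t i b q)) (t' b m) s
        = (if i = m then t' l a s * t a j r else 0) := by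
      intro a
      have e1 : ∀ b : Fin (M + N),
          conv (conv (t' l a) (fun q => t a j r * t i b q)) (t' b m) s
          = conv (fun p => t' l a p * t a j r) (conv (t i b) (t' b m)) s := by
        intro b
        have h1 : conv (t' l a) (fun q => t a j r * t i b q)
            = conv (fun p => t' l a p * t a j r) (t i b) :=
          funext fun n => S9.conv_mid_left _ _ _ n
        rw [h1, S9.conv_assoc]
      simp only [e1]
      rw [← S9.conv_sum_right]
      have e2 : (fun d => ∑ b : Fin (M + N), conv (t i b) (t' b m) d)
          = fun d => if i = m ∧ d = 0 then (1:A) else 0 := funext fun d => hinv i m d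
      rw [e2]
      by_cases him : i = m
      · simp only [him, true_and, if_true]
        simpa using S9.conv_delta_right (fun p => t' l a p * t a j r) 1 s
      · simp only [him, false_and, if_false]
        simp [conv]
    simp only [hb]
    by_cases him : i = m <;> simp [him]
  have hW2 : ∑ a : Fin (M + N), ∑ b : Fin (M + N),
      conv (conv (t' l a) (fun q => t a j q * t i b r)) (t' b m) s
      = if l = j then ∑ w : Fin (M + N), t i w r * t' w m s else 0 := by
    rw [Finset.sum_comm]
    have hb : ∀ b : Fin (M + N), ∑ a : Fin (M + N),
        conv (conv (t' l a) (fun q => t a j q * t i b r)) (t' b m) s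
        = (if l = j then t i b r * t' b m s else 0) := by
      intro b
      have e1 : ∀ a : Fin (M + N),
          conv (conv (t' l a) (fun q => t a j q * t i b r)) (t' b m) s
          = conv (conv (t' l a) (t a j)) (fun q => t i b r * t' b m q) s := by
        intro a
        have h1 : conv (t' l a) (fun q => t a j q * t i b r)
            = fun n => conv (t' l a) (t a j) n * t i b r :=
          funext fun n => S9.conv_mid_right _ _ _ n
        rw [h1, S9.conv_right_mul_left]
      simp only [e1]
      rw [← S9.conv_sum_left]
      have e2 : (fun p => ∑ a : Fin (M + N), conv (t' l a) (t a j) p)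
          = fun p => if l = j ∧ p = 0 then (1:A) else 0 := funext fun p => hinv' l j p
      rw [e2]
      by_cases hlj : l = j
      · simp only [hlj, true_and, if_true]
        simpa using S9.conv_delta_left (fun q => t i b r * t' b m q) 1 s
      · simp only [hlj, false_and, if_false]
        simp [conv]
    simp only [hb]
    by_cases hlj : l = j <;> simp [hlj]
  -- final assembly
  rw [hkey (r + 1) s, hkey r (s + 1), neg_sub_neg]
  simp only [← Finset.sum_sub_distrib]
  simp only [hterm]
  simp only [← Finset.mul_sum]
  simp only [Finset.sum_sub_distrib]
  rw [hW2, hW1]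
end

section
/- With μ = (μ_1, μ_2), in Y_μ((u^{-1}, v^{-1})): (u-v)[D_{1;i,j}(u), F_{1;h,k}(v)] = (-1)^{|i|_1|j|_1 + |h|_2|i|_1 + |h|_2|j|_1} δ_{i,k} Σ_{p=1}^{μ_1} (F_{1;h,p}(u) - F_{1;h,p}(v)) D_{1;p,j}(u), for 1 ≤ i,j ≤ μ_1, 1 ≤ h ≤ μ_2, 1 ≤ k ≤ μ_1. -/
section

variable {A : Type*} [Ring A] (μ1 μ2 : ℕ) (par : Fin (μ1 + μ2) → ℕ)
  (t : Fin (μ1 + μ2) → Fin (μ1 + μ2) → ℕ → A)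
  (D1 D1' : Fin μ1 → Fin μ1 → ℕ → A) (D2 D2' : Fin μ2 → Fin μ2 → ℕ → A)
  (E1 : Fin μ1 → Fin μ2 → ℕ → A) (F1 : Fin μ2 → Fin μ1 → ℕ → A)

/-- The restricted parity `|i|_1` for `1 ≤ i ≤ μ1`. -/
def p1 (i : Fin μ1) : ℕ := par (Fin.castAdd μ2 i)

/-- The restricted parity `|i|_2` for `1 ≤ i ≤ μ2`. -/
def p2 (i : Fin μ2) : ℕ := par (Fin.natAdd μ1 i)

/-- The hypotheses on the data: `t` satisfies the series-form RTT relations of the super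
Yangian `Y_{M|N}` with `t_{i,j}^{(0)} = δ_{ij}`, and `D_1, D_2, E_1, F_1` (with the
inverses `D_1', D_2'` of `D_1, D_2`) constitute the Gauss decomposition
`T(u) = F(u) D(u) E(u)` relative to the composition `μ = (μ1, μ2)`, i.e. (coefficientwise)
`T_{1,1} = D_1`, `T_{1,2} = D_1 E_1`, `T_{2,1} = F_1 D_1`,
`T_{2,2} = F_1 D_1 E_1 + D_2`. -/
structure GaussData2 : Prop where
  h0 : ∀ i j, t i j 0 = if i = j then 1 else 0
  hrtt : ∀ i j l m : Fin (μ1 + μ2), ∀ r s : ℕ,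
    sbr ((par i + par j) * (par l + par m)) (t i j (r + 1)) (t l m s)
        - sbr ((par i + par j) * (par l + par m)) (t i j r) (t l m (s + 1))
      = (-1 : A) ^ (par i * par j + par i * par l + par j * par l) *
          (t l j r * t i m s - t l j s * t i m r)
  hE0 : ∀ i j, E1 i j 0 = 0
  hF0 : ∀ i j, F1 i j 0 = 0
  hD1inv : ∀ i j r, ∑ p : Fin μ1, conv (D1 i p) (D1' p j) r
    = if i = j ∧ r = 0 then 1 else 0
  hD1inv' : ∀ i j r, ∑ p : Fin μ1, conv (D1' i p) (D1 p j) r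
    = if i = j ∧ r = 0 then 1 else 0
  hD2inv : ∀ i j r, ∑ p : Fin μ2, conv (D2 i p) (D2' p j) r
    = if i = j ∧ r = 0 then 1 else 0
  hD2inv' : ∀ i j r, ∑ p : Fin μ2, conv (D2' i p) (D2 p j) r
    = if i = j ∧ r = 0 then 1 else 0
  hT11 : ∀ i j r, t (Fin.castAdd μ2 i) (Fin.castAdd μ2 j) r = D1 i j r
  hT12 : ∀ i j r, t (Fin.castAdd μ2 i) (Fin.natAdd μ1 j) r
    = ∑ p : Fin μ1, conv (D1 i p) (E1 p j) r
  hT21 : ∀ i j r, t (Fin.natAdd μ1 i) (Fin.castAdd μ2 j) r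
    = ∑ p : Fin μ1, conv (F1 i p) (D1 p j) r
  hT22 : ∀ i j r, t (Fin.natAdd μ1 i) (Fin.natAdd μ1 j) r
    = (∑ p : Fin μ1, ∑ q : Fin μ1, conv (F1 i p) (conv (D1 p q) (E1 q j)) r)
      + D2 i j r

end

namespace St13

open Finset

variable {A : Type*} [Ring A]


open Finset

variable {A : Type*} [Ring A]

abbrev R2 (A : Type*) [Ring A] := PowerSeries (PowerSeries A)

noncomputable def eu (f : ℕ → A) : R2 A := PowerSeries.C (PowerSeries.mk f)
noncomputable def ev (g : ℕ → A) : R2 A := PowerSeries.mk fun s => PowerSeries.C (g s)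
noncomputable def ext (X : R2 A) (r s : ℕ) : A := PowerSeries.coeff r (PowerSeries.coeff s X)

@[simp] lemma ext_add (X Y : R2 A) (r s : ℕ) : ext (X + Y) r s = ext X r s + ext Y r s := by
  simp [ext]

@[simp] lemma ext_sub (X Y : R2 A) (r s : ℕ) : ext (X - Y) r s = ext X r s - ext Y r s := by
  simp [ext]

@[simp] lemma ext_neg (X : R2 A) (r s : ℕ) : ext (-X) r s = -ext X r s := by simp [ext]

@[simp] lemma ext_zero (r s : ℕ) : ext (0 : R2 A) r s = 0 := by simp [ext]

lemma ext_sum {ι : Type*} (Q : Finset ι) (X : ι → R2 A) (r s : ℕ) :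
    ext (∑ q ∈ Q, X q) r s = ∑ q ∈ Q, ext (X q) r s := by simp [ext]

lemma ext_eu (f : ℕ → A) (r s : ℕ) : ext (eu f) r s = if s = 0 then f r else 0 := by
  simp [ext, eu, PowerSeries.coeff_C, apply_ite (PowerSeries.coeff (R := A) r), PowerSeries.coeff_mk]

lemma ext_ev (g : ℕ → A) (r s : ℕ) : ext (ev g) r s = if r = 0 then g s else 0 := by
  simp [ext, ev, PowerSeries.coeff_mk, PowerSeries.coeff_C]

lemma sum_antidiagonal_fst_zero {M : Type*} [AddCommMonoid M] (n : ℕ) (F : ℕ × ℕ → M) :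
    (∑ p ∈ antidiagonal n, if p.1 = 0 then F p else 0) = F (0, n) := by
  refine Finset.sum_eq_single_of_mem (0, n) (by simp) fun b hb hne => ?_
  simp only [Finset.HasAntidiagonal.mem_antidiagonal] at hb
  by_cases hb1 : b.1 = 0
  · exact absurd (Prod.ext hb1 (by omega)) hne
  · simp [hb1]

lemma sum_antidiagonal_snd_zero {M : Type*} [AddCommMonoid M] (n : ℕ) (F : ℕ × ℕ → M) :
    (∑ p ∈ antidiagonal n, if p.2 = 0 then F p else 0) = F (n, 0) := by
  refine Finset.sum_eq_single_of_mem (n, 0) (by simp) fun b hb hne => ?_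
  simp only [Finset.HasAntidiagonal.mem_antidiagonal] at hb
  by_cases hb2 : b.2 = 0
  · exact absurd (Prod.ext (by omega) hb2) hne
  · simp [hb2]

lemma ext_mul_ev (X : R2 A) (g : ℕ → A) (r s : ℕ) :
    ext (X * ev g) r s = ∑ p ∈ antidiagonal s, ext X r p.1 * g p.2 := by
  unfold ext ev
  rw [PowerSeries.coeff_mul, map_sum]
  refine Finset.sum_congr rfl fun p _ => ?_
  rw [PowerSeries.coeff_mk, PowerSeries.coeff_mul_C]

lemma ext_ev_mul (g : ℕ → A) (X : R2 A) (r s : ℕ) :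
    ext (ev g * X) r s = ∑ p ∈ antidiagonal s, g p.1 * ext X r p.2 := by
  unfold ext ev
  rw [PowerSeries.coeff_mul, map_sum]
  refine Finset.sum_congr rfl fun p _ => ?_
  rw [PowerSeries.coeff_mk, PowerSeries.coeff_C_mul]

lemma ext_eu_mul_ev (f g : ℕ → A) (r s : ℕ) : ext (eu f * ev g) r s = f r * g s := by
  rw [ext_mul_ev]
  have : ∀ p : ℕ × ℕ, ext (eu f) r p.1 * g p.2 = if p.1 = 0 then f r * g p.2 else 0 := by
    intro p; rw [ext_eu]; split <;> simp
  simp only [this]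
  exact sum_antidiagonal_fst_zero s fun p => f r * g p.2

lemma ext_ev_mul_eu (g f : ℕ → A) (r s : ℕ) : ext (ev g * eu f) r s = g s * f r := by
  rw [ext_ev_mul]
  have : ∀ p : ℕ × ℕ, g p.1 * ext (eu f) r p.2 = if p.2 = 0 then g p.1 * f r else 0 := by
    intro p; rw [ext_eu]; split <;> simp
  simp only [this]
  exact sum_antidiagonal_snd_zero s fun p => g p.1 * f r

lemma eu_mul_eu (f g : ℕ → A) : eu f * eu g = eu (conv f g) := by
  unfold eu
  rw [← map_mul]
  congr 1
  ext n
  rw [PowerSeries.coeff_mul]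
  simp [PowerSeries.coeff_mk, conv]

lemma ev_mul_ev (f g : ℕ → A) : ev f * ev g = ev (conv f g) := by
  unfold ev
  ext s
  rw [PowerSeries.coeff_mul]
  simp only [PowerSeries.coeff_mk, ← map_mul, ← map_sum]
  rfl

lemma eu_sum {ι : Type*} (Q : Finset ι) (G : ι → ℕ → A) :
    (∑ q ∈ Q, eu (G q)) = eu (fun r => ∑ q ∈ Q, G q r) := by
  unfold eu
  rw [← map_sum]
  congr 1
  ext n
  simp [PowerSeries.coeff_mk]

lemma ev_sum {ι : Type*} (Q : Finset ι) (G : ι → ℕ → A) :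
    (∑ q ∈ Q, ev (G q)) = ev (fun s => ∑ q ∈ Q, G q s) := by
  unfold ev
  ext s
  simp [PowerSeries.coeff_mk]

lemma ev_zero : ev (fun _ => (0 : A)) = 0 := by
  unfold ev; ext s; simp [PowerSeries.coeff_mk]

lemma ev_one : ev (fun s => if s = 0 then (1 : A) else 0) = 1 := by
  unfold ev
  ext s
  rw [PowerSeries.coeff_mk, PowerSeries.coeff_one]
  by_cases hs : s = 0 <;> simp [hs]

lemma neg_one_pow_congr {a b : ℕ} (hab : a % 2 = b % 2) : ((-1 : A)) ^ a = (-1 : A) ^ b := by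
  rcases Nat.even_or_odd a with hpar | hpar
  · have hb : Even b := by rw [Nat.even_iff] at *; omega
    rw [hpar.neg_one_pow, hb.neg_one_pow]
  · have hb : Odd b := by
      rw [Nat.odd_iff] at *; omega
    rw [hpar.neg_one_pow, hb.neg_one_pow]

lemma sbr_congr {a b : ℕ} (hab : a % 2 = b % 2) (x y : A) : sbr a x y = sbr b x y := by
  unfold sbr; rw [neg_one_pow_congr hab]

lemma sbr_mul (α β γ : ℕ) (x y z : A) :
    sbr (α * β + α * γ) x (y * z)
      = sbr (α * β) x y * z + (-1 : A) ^ (α * β) * (y * sbr (α * γ) x z) := by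
  unfold sbr
  rw [pow_add]
  rcases Nat.even_or_odd (α * β) with h1 | h1 <;> rcases Nat.even_or_odd (α * γ) with h2 | h2 <;>
    simp only [h1.neg_one_pow, h2.neg_one_pow] <;> noncomm_ring

lemma sbr_sum {ι : Type*} (e : ℕ) (x : A) (Q : Finset ι) (y : ι → A) :
    sbr e x (∑ q ∈ Q, y q) = ∑ q ∈ Q, sbr e x (y q) := by
  unfold sbr
  rw [Finset.mul_sum, Finset.sum_mul, Finset.mul_sum, ← Finset.sum_sub_distrib]

@[simp] lemma sbr_zero_right (e : ℕ) (x : A) : sbr e x 0 = 0 := by simp [sbr]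

lemma sbr_one_right_even (e : ℕ) (he : Even e) (x : A) : sbr e x 1 = 0 := by
  simp [sbr, he.neg_one_pow]

lemma ext_pow_mul (n : ℕ) (X : R2 A) (r s : ℕ) :
    ext ((-1 : R2 A) ^ n * X) r s = (-1 : A) ^ n * ext X r s := by
  rcases Nat.even_or_odd n with hpar | hpar
  · simp [hpar.neg_one_pow]
  · simp [hpar.neg_one_pow, neg_one_mul]

lemma ext_sbr_uv (e : ℕ) (f g : ℕ → A) (r s : ℕ) :
    ext (sbr e (eu f) (ev g)) r s = sbr e (f r) (g s) := by
  unfold sbr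
  rw [ext_sub, ext_pow_mul, ext_eu_mul_ev, ext_ev_mul_eu]

def URel (X Y : R2 A) : Prop := ∀ r s : ℕ, ext X (r + 1) s - ext X r (s + 1) = ext Y r s

lemma URel_sum {ι : Type*} {Q : Finset ι} {X Y : ι → R2 A}
    (hrel : ∀ q ∈ Q, URel (X q) (Y q)) : URel (∑ q ∈ Q, X q) (∑ q ∈ Q, Y q) := by
  intro r s
  simp only [ext_sum]
  rw [← Finset.sum_sub_distrib]
  exact Finset.sum_congr rfl fun q hq => hrel q hq r s

lemma URel_add {X Y X' Y' : R2 A} (h1 : URel X Y) (h2 : URel X' Y') :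
    URel (X + X') (Y + Y') := by
  intro r s
  simp only [ext_add]
  rw [add_sub_add_comm, h1 r s, h2 r s]

lemma URel_neg {X Y : R2 A} (h1 : URel X Y) : URel (-X) (-Y) := by
  intro r s
  simp only [ext_neg]
  rw [← h1 r s]
  abel

lemma URel_pow_mul {X Y : R2 A} (n : ℕ) (h1 : URel X Y) :
    URel ((-1 : R2 A) ^ n * X) ((-1 : R2 A) ^ n * Y) := by
  intro r s
  simp only [ext_pow_mul]
  rcases Nat.even_or_odd n with hpar | hpar
  · simpa [hpar.neg_one_pow] using h1 r s
  · have := h1 r s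
    simp only [hpar.neg_one_pow, neg_one_mul]
    rw [← this]; abel

lemma URel_of_eq {X X' Y : R2 A} (hx : X = X') (h1 : URel X' Y) : URel X Y := hx ▸ h1

lemma URel_mul_ev {X Y : R2 A} (h1 : URel X Y) (h0 : ∀ r, ext X r 0 = 0) (g : ℕ → A) :
    URel (X * ev g) (Y * ev g) := by
  intro r s
  rw [ext_mul_ev, ext_mul_ev, ext_mul_ev,
    Finset.Nat.sum_antidiagonal_succ (f := fun p => ext X r p.1 * g p.2), h0, zero_mul, zero_add,
    ← Finset.sum_sub_distrib]
  exact Finset.sum_congr rfl fun p _ => by rw [← sub_mul, h1 r p.1]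

lemma URel_ev_mul {X Y : R2 A} (h1 : URel X Y) (h0 : ∀ r, ext X r 0 = 0) (g : ℕ → A) :
    URel (ev g * X) (ev g * Y) := by
  intro r s
  rw [ext_ev_mul, ext_ev_mul, ext_ev_mul,
    Finset.Nat.sum_antidiagonal_succ' (f := fun p => g p.1 * ext X r p.2), h0, mul_zero, zero_add,
    ← Finset.sum_sub_distrib]
  exact Finset.sum_congr rfl fun p _ => by rw [← mul_sub, h1 r p.2]

lemma ext_ev_mul_zero (g : ℕ → A) (X : R2 A) (r : ℕ) :
    ext (ev g * X) r 0 = g 0 * ext X r 0 := by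
  rw [ext_ev_mul]; simp


lemma rtt_series {n : ℕ} (par : Fin n → ℕ) (t : Fin n → Fin n → ℕ → A)
    (hrtt : ∀ i j l m : Fin n, ∀ r s : ℕ,
      sbr ((par i + par j) * (par l + par m)) (t i j (r + 1)) (t l m s)
          - sbr ((par i + par j) * (par l + par m)) (t i j r) (t l m (s + 1))
        = (-1 : A) ^ (par i * par j + par i * par l + par j * par l) *
            (t l j r * t i m s - t l j s * t i m r))
    (i j l m : Fin n) :
    URel (sbr ((par i + par j) * (par l + par m)) (eu (t i j)) (ev (t l m)))
      ((-1 : R2 A) ^ (par i * par j + par i * par l + par j * par l) *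
        (eu (t l j) * ev (t i m) - ev (t l j) * eu (t i m))) := by
  intro r s
  rw [ext_sbr_uv, ext_sbr_uv, ext_pow_mul, ext_sub, ext_eu_mul_ev, ext_ev_mul_eu]
  exact hrtt i j l m r s

lemma sign_mul_comm (n : ℕ) (x z : R2 A) :
    x * ((-1 : R2 A) ^ n * z) = (-1 : R2 A) ^ n * (x * z) := by
  rw [← mul_assoc, ← ((Commute.neg_one_left x).pow_left n).eq, mul_assoc]

set_option maxHeartbeats 2000000 in
set_option maxRecDepth 8000 in
lemma key_abstract {n : ℕ}
    (pA : Fin n → ℕ) (ph : ℕ) (i j k : Fin n)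
    (Dm Dm' : Fin n → Fin n → ℕ → A)
    (Th : Fin n → ℕ → A)
    (Fh : Fin n → ℕ → A)
    (hinv1 : ∀ a b, (∑ p, ev (Dm a p) * ev (Dm' p b)) = if a = b then (1 : R2 A) else 0)
    (hinv2 : ∀ a b, (∑ p, ev (Dm' a p) * ev (Dm p b)) = if a = b then (1 : R2 A) else 0)
    (hTh0 : ∀ q, Th q 0 = 0)
    (hD0 : ∀ a b, Dm a b 0 = if a = b then 1 else 0)
    (hD'0 : ∀ a b, Dm' a b 0 = if a = b then 1 else 0)
    (hTev : ∀ q, ev (Th q) = ∑ p, ev (Fh p) * ev (Dm p q))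
    (hTeu : ∀ q, eu (Th q) = ∑ p, eu (Fh p) * eu (Dm p q))
    (hrttDD : ∀ a b : Fin n,
      URel (sbr ((pA i + pA j) * (pA a + pA b)) (eu (Dm i j)) (ev (Dm a b)))
        ((-1 : R2 A) ^ (pA i * pA j + pA i * pA a + pA j * pA a) *
          (eu (Dm a j) * ev (Dm i b) - ev (Dm a j) * eu (Dm i b))))
    (hrttDT : ∀ q : Fin n,
      URel (sbr ((pA i + pA j) * (ph + pA q)) (eu (Dm i j)) (ev (Th q)))
        ((-1 : R2 A) ^ (pA i * pA j + pA i * ph + pA j * ph) *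
          (eu (Th j) * ev (Dm i q) - ev (Th j) * eu (Dm i q)))) :
    URel (sbr ((pA i + pA j) * (ph + pA k)) (eu (Dm i j)) (ev (Fh k)))
      ((-1 : R2 A) ^ (pA i * pA j + ph * pA i + ph * pA j) *
        (if i = k then ∑ p, (eu (Fh p) * eu (Dm p j) - ev (Fh p) * eu (Dm p j)) else 0)) := by
  rw [show pA i * pA j + ph * pA i + ph * pA j
      = pA i * pA j + pA i * ph + pA j * ph from by ring]
  set α := pA i + pA j with hα
  set σn := pA i * pA j + pA i * ph + pA j * ph with hσn
  -- F(v) as T(v) D(v)⁻¹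
  have hFv : ∀ c : Fin n, (∑ q, ev (Th q) * ev (Dm' q c)) = ev (Fh c) := by
    intro c
    calc (∑ q, ev (Th q) * ev (Dm' q c))
        = ∑ q, (∑ p, ev (Fh p) * ev (Dm p q)) * ev (Dm' q c) :=
          Finset.sum_congr rfl fun q _ => by rw [hTev q]
      _ = ∑ q, ∑ p, ev (Fh p) * (ev (Dm p q) * ev (Dm' q c)) := by
          refine Finset.sum_congr rfl fun q _ => ?_
          rw [Finset.sum_mul]
          exact Finset.sum_congr rfl fun p _ => by rw [mul_assoc]
      _ = ∑ p, ev (Fh p) * (∑ q, ev (Dm p q) * ev (Dm' q c)) := by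
          rw [Finset.sum_comm]
          exact Finset.sum_congr rfl fun p _ => by rw [Finset.mul_sum]
      _ = ∑ p, ev (Fh p) * (if p = c then 1 else 0) :=
          Finset.sum_congr rfl fun p _ => by rw [hinv1 p c]
      _ = ev (Fh c) := by
          simp [mul_ite, mul_one, mul_zero, Finset.sum_ite_eq']
  have hmod2 : ∀ x y z : ℕ, (α * (x + y) + α * (y + z)) % 2 = (α * (x + z)) % 2 := by
    intro x y z
    have hx : α * (x + y) + α * (y + z) = α * (x + z) + α * y * 2 := by ring
    rw [hx, Nat.add_mul_mod_self_right]
  have base : ∀ q c : Fin n,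
      (∑ a, sbr (α * (pA q + pA a)) (eu (Dm i j)) (ev (Dm' q a)) * ev (Dm a c))
        + (∑ a, (-1 : R2 A) ^ (α * (pA q + pA a)) *
            (ev (Dm' q a) * sbr (α * (pA a + pA c)) (eu (Dm i j)) (ev (Dm a c)))) = 0 := by
    intro q c
    rw [← Finset.sum_add_distrib]
    have hterm : ∀ a : Fin n,
        sbr (α * (pA q + pA a)) (eu (Dm i j)) (ev (Dm' q a)) * ev (Dm a c)
          + (-1 : R2 A) ^ (α * (pA q + pA a)) *
              (ev (Dm' q a) * sbr (α * (pA a + pA c)) (eu (Dm i j)) (ev (Dm a c)))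
        = sbr (α * (pA q + pA c)) (eu (Dm i j)) (ev (Dm' q a) * ev (Dm a c)) := by
      intro a
      rw [← sbr_mul]
      exact (sbr_congr (hmod2 _ _ _) _ _)
    rw [Finset.sum_congr rfl fun a _ => hterm a, ← sbr_sum, hinv2 q c]
    by_cases hqc : q = c
    · subst hqc
      rw [if_pos rfl]
      exact sbr_one_right_even _ ⟨α * pA q, by ring⟩ _
    · rw [if_neg hqc]
      exact sbr_zero_right _ _
  have sandwich : ∀ q : Fin n,
      sbr (α * (pA q + pA k)) (eu (Dm i j)) (ev (Dm' q k))
        = -∑ c, ∑ a, ((-1 : R2 A) ^ (α * (pA q + pA a)) *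
            (ev (Dm' q a) * sbr (α * (pA a + pA c)) (eu (Dm i j)) (ev (Dm a c)))) *
              ev (Dm' c k) := by
    intro q
    have collapse :
        (∑ c, (∑ a, sbr (α * (pA q + pA a)) (eu (Dm i j)) (ev (Dm' q a)) * ev (Dm a c)) *
            ev (Dm' c k))
          = sbr (α * (pA q + pA k)) (eu (Dm i j)) (ev (Dm' q k)) := by
      calc (∑ c, (∑ a, sbr (α * (pA q + pA a)) (eu (Dm i j)) (ev (Dm' q a)) * ev (Dm a c)) *
            ev (Dm' c k))
          = ∑ c, ∑ a, sbr (α * (pA q + pA a)) (eu (Dm i j)) (ev (Dm' q a)) *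
              (ev (Dm a c) * ev (Dm' c k)) := by
            refine Finset.sum_congr rfl fun c _ => ?_
            rw [Finset.sum_mul]
            exact Finset.sum_congr rfl fun a _ => by rw [mul_assoc]
        _ = ∑ a, sbr (α * (pA q + pA a)) (eu (Dm i j)) (ev (Dm' q a)) *
              (∑ c, ev (Dm a c) * ev (Dm' c k)) := by
            rw [Finset.sum_comm]
            exact Finset.sum_congr rfl fun a _ => by rw [Finset.mul_sum]
        _ = ∑ a, sbr (α * (pA q + pA a)) (eu (Dm i j)) (ev (Dm' q a)) *
              (if a = k then 1 else 0) :=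
            Finset.sum_congr rfl fun a _ => by rw [hinv1 a k]
        _ = sbr (α * (pA q + pA k)) (eu (Dm i j)) (ev (Dm' q k)) := by
            simp [mul_ite, mul_one, mul_zero, Finset.sum_ite_eq']
    have hc : ∀ c : Fin n,
        (∑ a, sbr (α * (pA q + pA a)) (eu (Dm i j)) (ev (Dm' q a)) * ev (Dm a c))
          = -∑ a, (-1 : R2 A) ^ (α * (pA q + pA a)) *
              (ev (Dm' q a) * sbr (α * (pA a + pA c)) (eu (Dm i j)) (ev (Dm a c))) :=
      fun c => eq_neg_of_add_eq_zero_left (base q c)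
    calc sbr (α * (pA q + pA k)) (eu (Dm i j)) (ev (Dm' q k))
        = ∑ c, (∑ a, sbr (α * (pA q + pA a)) (eu (Dm i j)) (ev (Dm' q a)) * ev (Dm a c)) *
            ev (Dm' c k) := collapse.symm
      _ = ∑ c, (-∑ a, (-1 : R2 A) ^ (α * (pA q + pA a)) *
            (ev (Dm' q a) * sbr (α * (pA a + pA c)) (eu (Dm i j)) (ev (Dm a c)))) *
              ev (Dm' c k) :=
          Finset.sum_congr rfl fun c _ => by rw [hc c]
      _ = -∑ c, ∑ a, ((-1 : R2 A) ^ (α * (pA q + pA a)) *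
            (ev (Dm' q a) * sbr (α * (pA a + pA c)) (eu (Dm i j)) (ev (Dm a c)))) *
              ev (Dm' c k) := by
          simp only [neg_mul, Finset.sum_neg_distrib, Finset.sum_mul]
  have hvanDD : ∀ a c : Fin n, ∀ r,
      ext (sbr (α * (pA a + pA c)) (eu (Dm i j)) (ev (Dm a c))) r 0 = 0 := by
    intro a c r
    rw [ext_sbr_uv, hD0]
    by_cases hac : a = c
    · subst hac
      rw [if_pos rfl]
      exact sbr_one_right_even _ ⟨α * pA a, by ring⟩ _
    · rw [if_neg hac]
      exact sbr_zero_right _ _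
  have hvanD' : ∀ q : Fin n, ∀ r,
      ext (sbr (α * (pA q + pA k)) (eu (Dm i j)) (ev (Dm' q k))) r 0 = 0 := by
    intro q r
    rw [ext_sbr_uv, hD'0]
    by_cases hqk : q = k
    · subst hqk
      rw [if_pos rfl]
      exact sbr_one_right_even _ ⟨α * pA q, by ring⟩ _
    · rw [if_neg hqk]
      exact sbr_zero_right _ _
  have hvanT : ∀ q : Fin n, ∀ r,
      ext (sbr (α * (ph + pA q)) (eu (Dm i j)) (ev (Th q))) r 0 = 0 := by
    intro q r
    rw [ext_sbr_uv, hTh0]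
    exact sbr_zero_right _ _
  have hU2 : ∀ q : Fin n,
      URel (sbr (α * (pA q + pA k)) (eu (Dm i j)) (ev (Dm' q k)))
        (-∑ c, ∑ a, ((-1 : R2 A) ^ (α * (pA q + pA a)) *
            (ev (Dm' q a) * ((-1 : R2 A) ^ (pA i * pA j + pA i * pA a + pA j * pA a) *
              (eu (Dm a j) * ev (Dm i c) - ev (Dm a j) * eu (Dm i c))))) * ev (Dm' c k)) := by
    intro q
    rw [sandwich q]
    refine URel_neg (URel_sum fun c _ => URel_sum fun a _ => ?_)
    refine URel_mul_ev (URel_pow_mul _ (URel_ev_mul (hrttDD a c) (hvanDD a c) _)) ?_ _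
    intro r
    rw [ext_pow_mul, ext_ev_mul_zero, hvanDD a c r, mul_zero, mul_zero]
  have hdec : sbr (α * (ph + pA k)) (eu (Dm i j)) (ev (Fh k))
      = ∑ q, (sbr (α * (ph + pA q)) (eu (Dm i j)) (ev (Th q)) * ev (Dm' q k)
          + (-1 : R2 A) ^ (α * (ph + pA q)) *
              (ev (Th q) * sbr (α * (pA q + pA k)) (eu (Dm i j)) (ev (Dm' q k)))) := by
    rw [← hFv k, sbr_sum]
    refine Finset.sum_congr rfl fun q _ => ?_
    rw [← sbr_mul]
    exact (sbr_congr (hmod2 ph (pA q) (pA k)) _ _).symm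
  have hmain : URel (sbr (α * (ph + pA k)) (eu (Dm i j)) (ev (Fh k)))
      (∑ q, ((-1 : R2 A) ^ σn * (eu (Th j) * ev (Dm i q) - ev (Th j) * eu (Dm i q)) *
            ev (Dm' q k)
          + (-1 : R2 A) ^ (α * (ph + pA q)) *
              (ev (Th q) *
                (-∑ c, ∑ a, ((-1 : R2 A) ^ (α * (pA q + pA a)) *
                  (ev (Dm' q a) * ((-1 : R2 A) ^ (pA i * pA j + pA i * pA a + pA j * pA a) *
                    (eu (Dm a j) * ev (Dm i c) - ev (Dm a j) * eu (Dm i c))))) *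
                      ev (Dm' c k))))) := by
    rw [hdec]
    exact URel_sum fun q _ => URel_add (URel_mul_ev (hrttDT q) (hvanT q) _)
      (URel_pow_mul _ (URel_ev_mul (hU2 q) (hvanD' q) _))
  have hPartA : (∑ q, (-1 : R2 A) ^ σn *
        (eu (Th j) * ev (Dm i q) - ev (Th j) * eu (Dm i q)) * ev (Dm' q k))
      = (-1 : R2 A) ^ σn * ((if i = k then eu (Th j) else 0)
          - ev (Th j) * ∑ q, eu (Dm i q) * ev (Dm' q k)) := by
    have hG1 : ∀ q : Fin n, (-1 : R2 A) ^ σn *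
          (eu (Th j) * ev (Dm i q) - ev (Th j) * eu (Dm i q)) * ev (Dm' q k)
        = (-1 : R2 A) ^ σn * (eu (Th j) * (ev (Dm i q) * ev (Dm' q k))
            - ev (Th j) * (eu (Dm i q) * ev (Dm' q k))) := by
      intro q
      rw [mul_assoc, sub_mul, mul_assoc, mul_assoc]
    rw [Finset.sum_congr rfl fun q _ => hG1 q, ← Finset.mul_sum, Finset.sum_sub_distrib,
      ← Finset.mul_sum, ← Finset.mul_sum, hinv1 i k, mul_ite, mul_one, mul_zero]
  have hsign : ∀ q a : Fin n,
      (α * (ph + pA q) + (α * (pA q + pA a)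
        + (pA i * pA j + pA i * pA a + pA j * pA a))) % 2 = σn % 2 := by
    intro q a
    have hx : α * (ph + pA q) + (α * (pA q + pA a)
        + (pA i * pA j + pA i * pA a + pA j * pA a))
        = σn + (α * pA q + pA i * pA a + pA j * pA a) * 2 := by
      rw [hσn, hα]; ring
    rw [hx, Nat.add_mul_mod_self_right]
  have pow_collect : ∀ (a b c : ℕ) (Z : R2 A),
      (-1 : R2 A) ^ a * ((-1 : R2 A) ^ b * ((-1 : R2 A) ^ c * Z))
        = (-1 : R2 A) ^ (a + (b + c)) * Z := by
    intro a b c Z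
    rw [pow_add, pow_add, mul_assoc, mul_assoc]
  have hTermB : ∀ q a c : Fin n,
      (-1 : R2 A) ^ (α * (ph + pA q)) *
        (ev (Th q) * (((-1 : R2 A) ^ (α * (pA q + pA a)) *
          (ev (Dm' q a) * ((-1 : R2 A) ^ (pA i * pA j + pA i * pA a + pA j * pA a) *
            (eu (Dm a j) * ev (Dm i c) - ev (Dm a j) * eu (Dm i c))))) * ev (Dm' c k)))
      = (-1 : R2 A) ^ σn * (ev (Th q) * (ev (Dm' q a) *
          ((eu (Dm a j) * ev (Dm i c) - ev (Dm a j) * eu (Dm i c)) * ev (Dm' c k)))) := by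
    intro q a c
    simp only [mul_assoc]
    rw [sign_mul_comm (α * (pA q + pA a)) (ev (Th q)),
      sign_mul_comm (pA i * pA j + pA i * pA a + pA j * pA a) (ev (Dm' q a)),
      sign_mul_comm (pA i * pA j + pA i * pA a + pA j * pA a) (ev (Th q)),
      pow_collect, neg_one_pow_congr (hsign q a)]
  have hGsum : ∀ a : Fin n,
      (∑ c, (eu (Dm a j) * ev (Dm i c) - ev (Dm a j) * eu (Dm i c)) * ev (Dm' c k))
        = (if i = k then eu (Dm a j) else 0)
            - ev (Dm a j) * ∑ c, eu (Dm i c) * ev (Dm' c k) := by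
    intro a
    calc (∑ c, (eu (Dm a j) * ev (Dm i c) - ev (Dm a j) * eu (Dm i c)) * ev (Dm' c k))
        = ∑ c, (eu (Dm a j) * (ev (Dm i c) * ev (Dm' c k))
            - ev (Dm a j) * (eu (Dm i c) * ev (Dm' c k))) := by
          refine Finset.sum_congr rfl fun c _ => ?_
          rw [sub_mul, mul_assoc, mul_assoc]
      _ = eu (Dm a j) * (∑ c, ev (Dm i c) * ev (Dm' c k))
            - ev (Dm a j) * ∑ c, eu (Dm i c) * ev (Dm' c k) := by
          rw [Finset.sum_sub_distrib, ← Finset.mul_sum, ← Finset.mul_sum]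
      _ = (if i = k then eu (Dm a j) else 0)
            - ev (Dm a j) * ∑ c, eu (Dm i c) * ev (Dm' c k) := by
          rw [hinv1 i k, mul_ite, mul_one, mul_zero]
  have htriple : (∑ q, ∑ c, ∑ a, (-1 : R2 A) ^ σn * (ev (Th q) * (ev (Dm' q a) *
        ((eu (Dm a j) * ev (Dm i c) - ev (Dm a j) * eu (Dm i c)) * ev (Dm' c k)))))
      = (-1 : R2 A) ^ σn * ((if i = k then ∑ a, ev (Fh a) * eu (Dm a j) else 0)
          - ev (Th j) * ∑ c, eu (Dm i c) * ev (Dm' c k)) := by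
    have pull : (∑ q, ∑ c, ∑ a, (-1 : R2 A) ^ σn * (ev (Th q) * (ev (Dm' q a) *
        ((eu (Dm a j) * ev (Dm i c) - ev (Dm a j) * eu (Dm i c)) * ev (Dm' c k)))))
        = (-1 : R2 A) ^ σn * (∑ q, ∑ c, ∑ a, ev (Th q) * (ev (Dm' q a) *
        ((eu (Dm a j) * ev (Dm i c) - ev (Dm a j) * eu (Dm i c)) * ev (Dm' c k)))) := by
      symm
      simp only [Finset.mul_sum]
    rw [pull]
    congr 1
    calc (∑ q, ∑ c, ∑ a, ev (Th q) * (ev (Dm' q a) *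
          ((eu (Dm a j) * ev (Dm i c) - ev (Dm a j) * eu (Dm i c)) * ev (Dm' c k))))
        = ∑ q, ∑ c, ∑ a, (ev (Th q) * ev (Dm' q a)) *
            ((eu (Dm a j) * ev (Dm i c) - ev (Dm a j) * eu (Dm i c)) * ev (Dm' c k)) := by
          refine Finset.sum_congr rfl fun q _ => Finset.sum_congr rfl fun c _ =>
            Finset.sum_congr rfl fun a _ => ?_
          rw [mul_assoc]
      _ = ∑ q, ∑ a, ∑ c, (ev (Th q) * ev (Dm' q a)) *
            ((eu (Dm a j) * ev (Dm i c) - ev (Dm a j) * eu (Dm i c)) * ev (Dm' c k)) :=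
          Finset.sum_congr rfl fun q _ => Finset.sum_comm
      _ = ∑ a, ∑ q, ∑ c, (ev (Th q) * ev (Dm' q a)) *
            ((eu (Dm a j) * ev (Dm i c) - ev (Dm a j) * eu (Dm i c)) * ev (Dm' c k)) :=
          Finset.sum_comm
      _ = ∑ a, (∑ q, ev (Th q) * ev (Dm' q a)) *
            (∑ c, (eu (Dm a j) * ev (Dm i c) - ev (Dm a j) * eu (Dm i c)) * ev (Dm' c k)) :=
          Finset.sum_congr rfl fun a _ => (Finset.sum_mul_sum _ _ _ _).symm
      _ = ∑ a, ev (Fh a) * ((if i = k then eu (Dm a j) else 0)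
            - ev (Dm a j) * ∑ c, eu (Dm i c) * ev (Dm' c k)) :=
          Finset.sum_congr rfl fun a _ => by rw [hFv a, hGsum a]
      _ = (if i = k then ∑ a, ev (Fh a) * eu (Dm a j) else 0)
            - ev (Th j) * ∑ c, eu (Dm i c) * ev (Dm' c k) := by
          rw [Finset.sum_congr rfl fun a (_ : a ∈ Finset.univ) => mul_sub (ev (Fh a)) _ _,
            Finset.sum_sub_distrib]
          congr 1
          · by_cases hik : i = k <;> simp [hik]
          · rw [hTev j, Finset.sum_mul]
            exact Finset.sum_congr rfl fun a _ => by rw [mul_assoc]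
  have hPartB : (∑ q, (-1 : R2 A) ^ (α * (ph + pA q)) *
        (ev (Th q) *
          (-∑ c, ∑ a, ((-1 : R2 A) ^ (α * (pA q + pA a)) *
            (ev (Dm' q a) * ((-1 : R2 A) ^ (pA i * pA j + pA i * pA a + pA j * pA a) *
              (eu (Dm a j) * ev (Dm i c) - ev (Dm a j) * eu (Dm i c))))) * ev (Dm' c k))))
      = -((-1 : R2 A) ^ σn * ((if i = k then ∑ a, ev (Fh a) * eu (Dm a j) else 0)
          - ev (Th j) * ∑ c, eu (Dm i c) * ev (Dm' c k))) := by
    rw [← htriple]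
    rw [show (∑ q, (-1 : R2 A) ^ (α * (ph + pA q)) *
        (ev (Th q) *
          (-∑ c, ∑ a, ((-1 : R2 A) ^ (α * (pA q + pA a)) *
            (ev (Dm' q a) * ((-1 : R2 A) ^ (pA i * pA j + pA i * pA a + pA j * pA a) *
              (eu (Dm a j) * ev (Dm i c) - ev (Dm a j) * eu (Dm i c))))) * ev (Dm' c k))))
        = ∑ q, -(∑ c, ∑ a, (-1 : R2 A) ^ (α * (ph + pA q)) *
            (ev (Th q) * (((-1 : R2 A) ^ (α * (pA q + pA a)) *
              (ev (Dm' q a) * ((-1 : R2 A) ^ (pA i * pA j + pA i * pA a + pA j * pA a) *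
              (eu (Dm a j) * ev (Dm i c) - ev (Dm a j) * eu (Dm i c))))) * ev (Dm' c k))))
        from Finset.sum_congr rfl fun q _ => by
          rw [mul_neg, mul_neg]
          congr 1
          simp only [Finset.mul_sum]]
    rw [Finset.sum_neg_distrib]
    congr 1
    exact Finset.sum_congr rfl fun q _ => Finset.sum_congr rfl fun c _ =>
      Finset.sum_congr rfl fun a _ => hTermB q a c
  have hfinal : (∑ q, ((-1 : R2 A) ^ σn *
        (eu (Th j) * ev (Dm i q) - ev (Th j) * eu (Dm i q)) * ev (Dm' q k)
      + (-1 : R2 A) ^ (α * (ph + pA q)) *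
          (ev (Th q) *
            (-∑ c, ∑ a, ((-1 : R2 A) ^ (α * (pA q + pA a)) *
              (ev (Dm' q a) * ((-1 : R2 A) ^ (pA i * pA j + pA i * pA a + pA j * pA a) *
                (eu (Dm a j) * ev (Dm i c) - ev (Dm a j) * eu (Dm i c))))) *
                  ev (Dm' c k)))))
      = (-1 : R2 A) ^ σn *
        (if i = k then ∑ p, (eu (Fh p) * eu (Dm p j) - ev (Fh p) * eu (Dm p j)) else 0) := by
    rw [Finset.sum_add_distrib, hPartA, hPartB, ← sub_eq_add_neg, ← mul_sub,
      sub_sub_sub_cancel_right]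
    congr 1
    by_cases hik : i = k
    · simp only [if_pos hik]
      rw [hTeu j, ← Finset.sum_sub_distrib]
    · simp [hik]
  rw [← hfinal]
  exact hmain



end St13

/-- with `μ = (μ1, μ2)`, in `Y_μ((u^{-1}, v^{-1}))`:
`(u-v)[D_{1;i,j}(u), F_{1;h,k}(v)]
  = (-1)^{|i|_1|j|_1 + |h|_2|i|_1 + |h|_2|j|_1} δ_{i,k}
    Σ_{p=1}^{μ1} (F_{1;h,p}(u) - F_{1;h,p}(v)) D_{1;p,j}(u)`,
stated coefficientwise at `u^{-r} v^{-s}`. -/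

theorem statement13 {A : Type*} [Ring A] (μ1 μ2 : ℕ) (par : Fin (μ1 + μ2) → ℕ)
    (t : Fin (μ1 + μ2) → Fin (μ1 + μ2) → ℕ → A)
    (D1 D1' : Fin μ1 → Fin μ1 → ℕ → A) (D2 D2' : Fin μ2 → Fin μ2 → ℕ → A)
    (E1 : Fin μ1 → Fin μ2 → ℕ → A) (F1 : Fin μ2 → Fin μ1 → ℕ → A)
    (hG : GaussData2 μ1 μ2 par t D1 D1' D2 D2' E1 F1) :
    ∀ (i j : Fin μ1) (h : Fin μ2) (k : Fin μ1) (r s : ℕ),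
      sbr ((p1 μ1 μ2 par i + p1 μ1 μ2 par j) * (p2 μ1 μ2 par h + p1 μ1 μ2 par k))
          (D1 i j (r + 1)) (F1 h k s)
        - sbr ((p1 μ1 μ2 par i + p1 μ1 μ2 par j) * (p2 μ1 μ2 par h + p1 μ1 μ2 par k))
            (D1 i j r) (F1 h k (s + 1))
      = (-1 : A) ^ (p1 μ1 μ2 par i * p1 μ1 μ2 par j + p2 μ1 μ2 par h * p1 μ1 μ2 par i
            + p2 μ1 μ2 par h * p1 μ1 μ2 par j) *
          (if i = k then
            ∑ p : Fin μ1,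
              ((if s = 0 then conv (F1 h p) (D1 p j) r else 0) - F1 h p s * D1 p j r)
          else 0) := by
  classical
  intro i j hh k
  have hD1t : ∀ a b : Fin μ1, t (Fin.castAdd μ2 a) (Fin.castAdd μ2 b) = D1 a b :=
    fun a b => funext fun r => hG.hT11 a b r
  have hD0 : ∀ a b : Fin μ1, D1 a b 0 = if a = b then 1 else 0 := by
    intro a b
    rw [← hG.hT11, hG.h0]
    simp [Fin.castAdd_inj]
  have hD'0 : ∀ a b : Fin μ1, D1' a b 0 = if a = b then 1 else 0 := by
    intro a b
    have h1 := hG.hD1inv' a b 0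
    simp only [conv, Finset.Nat.antidiagonal_zero, Finset.sum_singleton] at h1
    rw [Finset.sum_congr rfl fun p (_ : p ∈ Finset.univ) => by rw [hD0 p b]] at h1
    simpa [mul_ite, mul_one, mul_zero, Finset.sum_ite_eq'] using h1
  have hinv1 : ∀ a b : Fin μ1, (∑ p, St13.ev (D1 a p) * St13.ev (D1' p b))
      = if a = b then (1 : St13.R2 A) else 0 := by
    intro a b
    rw [Finset.sum_congr rfl fun p (_ : p ∈ Finset.univ) =>
        St13.ev_mul_ev (D1 a p) (D1' p b), St13.ev_sum,
      show (fun r => ∑ p, conv (D1 a p) (D1' p b) r)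
          = fun r => if a = b ∧ r = 0 then (1 : A) else 0
        from funext fun r => hG.hD1inv a b r]
    by_cases hab : a = b
    · simp [hab, St13.ev_one]
    · simp [hab, St13.ev_zero]
  have hinv2 : ∀ a b : Fin μ1, (∑ p, St13.ev (D1' a p) * St13.ev (D1 p b))
      = if a = b then (1 : St13.R2 A) else 0 := by
    intro a b
    rw [Finset.sum_congr rfl fun p (_ : p ∈ Finset.univ) =>
        St13.ev_mul_ev (D1' a p) (D1 p b), St13.ev_sum,
      show (fun r => ∑ p, conv (D1' a p) (D1 p b) r)
          = fun r => if a = b ∧ r = 0 then (1 : A) else 0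
        from funext fun r => hG.hD1inv' a b r]
    by_cases hab : a = b
    · simp [hab, St13.ev_one]
    · simp [hab, St13.ev_zero]
  have hTh0 : ∀ q : Fin μ1, t (Fin.natAdd μ1 hh) (Fin.castAdd μ2 q) 0 = 0 := by
    intro q
    rw [hG.h0, if_neg]
    intro hEq
    have hq := q.isLt
    have hv : μ1 + (hh : ℕ) = (q : ℕ) := by simpa using congrArg Fin.val hEq
    omega
  have hTev : ∀ q : Fin μ1, St13.ev (t (Fin.natAdd μ1 hh) (Fin.castAdd μ2 q))
      = ∑ p, St13.ev (F1 hh p) * St13.ev (D1 p q) := by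
    intro q
    rw [Finset.sum_congr rfl fun p (_ : p ∈ Finset.univ) =>
      St13.ev_mul_ev (F1 hh p) (D1 p q), St13.ev_sum]
    exact congrArg St13.ev (funext fun r => hG.hT21 hh q r)
  have hTeu : ∀ q : Fin μ1, St13.eu (t (Fin.natAdd μ1 hh) (Fin.castAdd μ2 q))
      = ∑ p, St13.eu (F1 hh p) * St13.eu (D1 p q) := by
    intro q
    rw [Finset.sum_congr rfl fun p (_ : p ∈ Finset.univ) =>
      St13.eu_mul_eu (F1 hh p) (D1 p q), St13.eu_sum]
    exact congrArg St13.eu (funext fun r => hG.hT21 hh q r)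
  have hrttDD : ∀ a b : Fin μ1,
      St13.URel (sbr ((par (Fin.castAdd μ2 i) + par (Fin.castAdd μ2 j)) *
            (par (Fin.castAdd μ2 a) + par (Fin.castAdd μ2 b)))
          (St13.eu (D1 i j)) (St13.ev (D1 a b)))
        ((-1 : St13.R2 A) ^ (par (Fin.castAdd μ2 i) * par (Fin.castAdd μ2 j)
            + par (Fin.castAdd μ2 i) * par (Fin.castAdd μ2 a)
            + par (Fin.castAdd μ2 j) * par (Fin.castAdd μ2 a)) *
          (St13.eu (D1 a j) * St13.ev (D1 i b) - St13.ev (D1 a j) * St13.eu (D1 i b))) := by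
    intro a b
    have H := St13.rtt_series par t hG.hrtt (Fin.castAdd μ2 i) (Fin.castAdd μ2 j)
      (Fin.castAdd μ2 a) (Fin.castAdd μ2 b)
    rw [hD1t i j, hD1t a b, hD1t a j, hD1t i b] at H
    exact H
  have hrttDT : ∀ q : Fin μ1,
      St13.URel (sbr ((par (Fin.castAdd μ2 i) + par (Fin.castAdd μ2 j)) *
            (par (Fin.natAdd μ1 hh) + par (Fin.castAdd μ2 q)))
          (St13.eu (D1 i j)) (St13.ev (t (Fin.natAdd μ1 hh) (Fin.castAdd μ2 q))))
        ((-1 : St13.R2 A) ^ (par (Fin.castAdd μ2 i) * par (Fin.castAdd μ2 j)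
            + par (Fin.castAdd μ2 i) * par (Fin.natAdd μ1 hh)
            + par (Fin.castAdd μ2 j) * par (Fin.natAdd μ1 hh)) *
          (St13.eu (t (Fin.natAdd μ1 hh) (Fin.castAdd μ2 j)) * St13.ev (D1 i q)
            - St13.ev (t (Fin.natAdd μ1 hh) (Fin.castAdd μ2 j)) * St13.eu (D1 i q))) := by
    intro q
    have H := St13.rtt_series par t hG.hrtt (Fin.castAdd μ2 i) (Fin.castAdd μ2 j)
      (Fin.natAdd μ1 hh) (Fin.castAdd μ2 q)
    rw [hD1t i j, hD1t i q] at H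
    exact H
  have KEY := St13.key_abstract (fun a : Fin μ1 => par (Fin.castAdd μ2 a))
    (par (Fin.natAdd μ1 hh)) i j k D1 D1'
    (fun q => t (Fin.natAdd μ1 hh) (Fin.castAdd μ2 q)) (F1 hh)
    hinv1 hinv2 hTh0 hD0 hD'0 hTev hTeu hrttDD hrttDT
  intro r s
  have H := KEY r s
  rw [St13.ext_sbr_uv, St13.ext_sbr_uv, St13.ext_pow_mul] at H
  have hR : St13.ext (if i = k then
        ∑ p, (St13.eu (F1 hh p) * St13.eu (D1 p j) - St13.ev (F1 hh p) * St13.eu (D1 p j))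
      else 0) r s
      = (if i = k then
          ∑ p : Fin μ1, ((if s = 0 then conv (F1 hh p) (D1 p j) r else 0)
            - F1 hh p s * D1 p j r)
        else 0) := by
    by_cases hik : i = k
    · rw [if_pos hik, if_pos hik, St13.ext_sum]
      refine Finset.sum_congr rfl fun p _ => ?_
      rw [St13.ext_sub, St13.eu_mul_eu, St13.ext_eu, St13.ext_ev_mul_eu]
    · rw [if_neg hik, if_neg hik, St13.ext_zero]
  rw [hR] at H
  simp only [p1, p2]
  exact H
end

section
/- Let μ = (μ_1, μ_2, μ_3). In Y_μ, the generators satisfy [D_{1;i,j}(u), F_{2;h,k}(v)] = 0 for all 1 ≤ i,j ≤ μ_1, 1 ≤ h ≤ μ_3, 1 ≤ k ≤ μ_2, and [F_{1;i,j}(u), D'_{3;h,k}(v)] = 0 for all 1 ≤ i ≤ μ_2, 1 ≤ j ≤ μ_1, 1 ≤ h,k ≤ μ_3. -/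
section

variable (μ1 μ2 μ3 : ℕ)

/-- Embedding of the first block. -/
def e1 (i : Fin μ1) : Fin (μ1 + μ2 + μ3) := Fin.castAdd μ3 (Fin.castAdd μ2 i)

/-- Embedding of the second block. -/
def e2 (i : Fin μ2) : Fin (μ1 + μ2 + μ3) := Fin.castAdd μ3 (Fin.natAdd μ1 i)

/-- Embedding of the third block. -/
def e3 (i : Fin μ3) : Fin (μ1 + μ2 + μ3) := Fin.natAdd (μ1 + μ2) i

variable {A : Type*} [Ring A] (par : Fin (μ1 + μ2 + μ3) → ℕ)
  (t : Fin (μ1 + μ2 + μ3) → Fin (μ1 + μ2 + μ3) → ℕ → A)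
  (D1 D1' : Fin μ1 → Fin μ1 → ℕ → A) (D2 D2' : Fin μ2 → Fin μ2 → ℕ → A)
  (D3 D3' : Fin μ3 → Fin μ3 → ℕ → A)
  (E1 : Fin μ1 → Fin μ2 → ℕ → A) (E2 : Fin μ2 → Fin μ3 → ℕ → A)
  (E13 : Fin μ1 → Fin μ3 → ℕ → A)
  (F1 : Fin μ2 → Fin μ1 → ℕ → A) (F2 : Fin μ3 → Fin μ2 → ℕ → A)
  (F31 : Fin μ3 → Fin μ1 → ℕ → A)

/-- The hypotheses: `t` satisfies the series-form RTT relations of the super Yangian with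
`t_{i,j}^{(0)} = δ_{ij}`, and the `D`'s (with two-sided inverses `D'`), `E`'s and `F`'s
form the Gauss decomposition `T(u) = F(u) D(u) E(u)` relative to `μ = (μ1, μ2, μ3)`,
written out blockwise and coefficientwise. -/
structure GaussData3 : Prop where
  h0 : ∀ i j, t i j 0 = if i = j then 1 else 0
  hrtt : ∀ i j l m : Fin (μ1 + μ2 + μ3), ∀ r s : ℕ,
    sbr ((par i + par j) * (par l + par m)) (t i j (r + 1)) (t l m s)
        - sbr ((par i + par j) * (par l + par m)) (t i j r) (t l m (s + 1))
      = (-1 : A) ^ (par i * par j + par i * par l + par j * par l) *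
          (t l j r * t i m s - t l j s * t i m r)
  hE10 : ∀ i j, E1 i j 0 = 0
  hE20 : ∀ i j, E2 i j 0 = 0
  hE130 : ∀ i j, E13 i j 0 = 0
  hF10 : ∀ i j, F1 i j 0 = 0
  hF20 : ∀ i j, F2 i j 0 = 0
  hF310 : ∀ i j, F31 i j 0 = 0
  hD1inv : ∀ i j r, ∑ p : Fin μ1, conv (D1 i p) (D1' p j) r
    = if i = j ∧ r = 0 then 1 else 0
  hD1inv' : ∀ i j r, ∑ p : Fin μ1, conv (D1' i p) (D1 p j) r
    = if i = j ∧ r = 0 then 1 else 0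
  hD2inv : ∀ i j r, ∑ p : Fin μ2, conv (D2 i p) (D2' p j) r
    = if i = j ∧ r = 0 then 1 else 0
  hD2inv' : ∀ i j r, ∑ p : Fin μ2, conv (D2' i p) (D2 p j) r
    = if i = j ∧ r = 0 then 1 else 0
  hD3inv : ∀ i j r, ∑ p : Fin μ3, conv (D3 i p) (D3' p j) r
    = if i = j ∧ r = 0 then 1 else 0
  hD3inv' : ∀ i j r, ∑ p : Fin μ3, conv (D3' i p) (D3 p j) r
    = if i = j ∧ r = 0 then 1 else 0
  hT11 : ∀ i j r, t (e1 μ1 μ2 μ3 i) (e1 μ1 μ2 μ3 j) r = D1 i j r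
  hT12 : ∀ i j r, t (e1 μ1 μ2 μ3 i) (e2 μ1 μ2 μ3 j) r
    = ∑ p : Fin μ1, conv (D1 i p) (E1 p j) r
  hT13 : ∀ i j r, t (e1 μ1 μ2 μ3 i) (e3 μ1 μ2 μ3 j) r
    = ∑ p : Fin μ1, conv (D1 i p) (E13 p j) r
  hT21 : ∀ i j r, t (e2 μ1 μ2 μ3 i) (e1 μ1 μ2 μ3 j) r
    = ∑ p : Fin μ1, conv (F1 i p) (D1 p j) r
  hT22 : ∀ i j r, t (e2 μ1 μ2 μ3 i) (e2 μ1 μ2 μ3 j) r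
    = (∑ p : Fin μ1, ∑ q : Fin μ1, conv (F1 i p) (conv (D1 p q) (E1 q j)) r)
      + D2 i j r
  hT23 : ∀ i j r, t (e2 μ1 μ2 μ3 i) (e3 μ1 μ2 μ3 j) r
    = (∑ p : Fin μ1, ∑ q : Fin μ1, conv (F1 i p) (conv (D1 p q) (E13 q j)) r)
      + ∑ p : Fin μ2, conv (D2 i p) (E2 p j) r
  hT31 : ∀ i j r, t (e3 μ1 μ2 μ3 i) (e1 μ1 μ2 μ3 j) r
    = ∑ p : Fin μ1, conv (F31 i p) (D1 p j) r
  hT32 : ∀ i j r, t (e3 μ1 μ2 μ3 i) (e2 μ1 μ2 μ3 j) r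
    = (∑ p : Fin μ1, ∑ q : Fin μ1, conv (F31 i p) (conv (D1 p q) (E1 q j)) r)
      + ∑ p : Fin μ2, conv (F2 i p) (D2 p j) r
  hT33 : ∀ i j r, t (e3 μ1 μ2 μ3 i) (e3 μ1 μ2 μ3 j) r
    = (∑ p : Fin μ1, ∑ q : Fin μ1, conv (F31 i p) (conv (D1 p q) (E13 q j)) r)
      + (∑ p : Fin μ2, ∑ q : Fin μ2, conv (F2 i p) (conv (D2 p q) (E2 q j)) r)
      + D3 i j r

end

namespace S15
variable {A : Type*} [Ring A]

lemma npow_congr {a b : ℕ} (h : a % 2 = b % 2) : ((-1 : A) ^ a) = (-1) ^ b := by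
  conv_lhs => rw [← Nat.div_add_mod a 2]
  conv_rhs => rw [← Nat.div_add_mod b 2]
  rw [pow_add, pow_add, pow_mul, pow_mul, neg_one_sq, one_pow, one_pow, h]

lemma neg_one_pow_comm (d : ℕ) (x : A) : x * (-1:A)^d = (-1)^d * x :=
  (((Commute.neg_one_right x).pow_right d)).eq

lemma sbr_congr {a b : ℕ} (h : a % 2 = b % 2) (x y : A) : sbr a x y = sbr b x y := by
  unfold sbr; rw [npow_congr h]

lemma sbr_zero_right (ε : ℕ) (x : A) : sbr ε x 0 = 0 := by simp [sbr]

lemma sbr_one (ε : ℕ) (x : A) (h : ε % 2 = 0) : sbr ε x 1 = 0 := by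
  unfold sbr; rw [npow_congr (b := 0) (by omega)]; simp

lemma sbr_ite_one (ε : ℕ) (x : A) (P : Prop) [Decidable P] (h : ε % 2 = 0) :
    sbr ε x (if P then (1:A) else 0) = 0 := by
  split_ifs
  · exact sbr_one ε x h
  · exact sbr_zero_right ε x

lemma sbr_neg_right (ε : ℕ) (x y : A) : sbr ε x (-y) = -(sbr ε x y) := by
  simp only [sbr, mul_neg, neg_mul, neg_sub]
  abel

lemma sbr_sum_right {κ : Type*} (S : Finset κ) (ε : ℕ) (x : A) (f : κ → A) :
    sbr ε x (∑ b ∈ S, f b) = ∑ b ∈ S, sbr ε x (f b) := by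
  unfold sbr
  rw [Finset.mul_sum, Finset.sum_mul, Finset.mul_sum, ← Finset.sum_sub_distrib]

lemma sbr_mul_right (ε ε1 ε2 : ℕ) (x y z : A) (h : (ε1 + ε2) % 2 = ε % 2) :
    sbr ε x (y * z) = sbr ε1 x y * z + (-1:A)^ε1 * (y * sbr ε2 x z) := by
  rw [← sbr_congr h x (y*z)]
  unfold sbr
  have key : y * (x * z - (-1:A)^ε2 * (z * x)) = y * (x*z) - (-1:A)^ε2 * (y * (z * x)) := by
    have key2 : y * ((-1:A)^ε2 * (z * x)) = (-1:A)^ε2 * (y * (z * x)) := by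
      rw [← mul_assoc, neg_one_pow_comm, mul_assoc]
    rw [mul_sub, key2]
  rw [key, pow_add]
  simp only [mul_sub, sub_mul, mul_assoc]
  abel

lemma sbr_swap {ε : ℕ} {x y : A} (h : sbr ε x y = 0) : sbr ε y x = 0 := by
  unfold sbr at *
  have hx : x * y = (-1:A)^ε * (y * x) := sub_eq_zero.mp h
  rw [hx, ← mul_assoc, ← pow_add, npow_congr (b := 0) (by omega), pow_zero, one_mul, sub_self]


lemma sbr_mul_right_zero {ε ε1 ε2 : ℕ} {x y z : A} (h1 : sbr ε1 x y = 0) (h2 : sbr ε2 x z = 0)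
    (h : (ε1 + ε2) % 2 = ε % 2) : sbr ε x (y * z) = 0 := by
  rw [sbr_mul_right ε ε1 ε2 x y z h, h1, h2]; simp

/- ### conv lemmas -/

lemma conv_zero' (f g : ℕ → A) : conv f g 0 = f 0 * g 0 := by simp [conv]

lemma conv_zero_left (g : ℕ → A) (n : ℕ) : conv (fun _ => (0:A)) g n = 0 := by simp [conv]

lemma conv_succ_left (f g : ℕ → A) (n : ℕ) :
    conv f g (n+1) = f 0 * g (n+1) + conv (fun a => f (a+1)) g n := by
  rw [conv, Finset.Nat.sum_antidiagonal_succ]; rfl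

lemma conv_succ_right (f g : ℕ → A) (n : ℕ) :
    conv f g (n+1) = f (n+1) * g 0 + conv f (fun b => g (b+1)) n := by
  rw [conv, Finset.Nat.sum_antidiagonal_succ']; rfl

lemma conv_sum_left {κ : Type*} (S : Finset κ) (f : κ → ℕ → A) (g : ℕ → A) (n : ℕ) :
    conv (fun a => ∑ b ∈ S, f b a) g n = ∑ b ∈ S, conv (f b) g n := by
  unfold conv; rw [Finset.sum_comm]
  exact Finset.sum_congr rfl fun p _ => by rw [Finset.sum_mul]

lemma conv_sum_right {κ : Type*} (S : Finset κ) (f : ℕ → A) (g : κ → ℕ → A) (n : ℕ) :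
    conv f (fun b => ∑ c ∈ S, g c b) n = ∑ c ∈ S, conv f (g c) n := by
  unfold conv; rw [Finset.sum_comm]
  exact Finset.sum_congr rfl fun p _ => by rw [Finset.mul_sum]

lemma conv_eq_coeff (f g : ℕ → A) (n : ℕ) :
    conv f g n = PowerSeries.coeff n (PowerSeries.mk f * PowerSeries.mk g) := by
  rw [PowerSeries.coeff_mul]
  exact Finset.sum_congr rfl fun p _ => by rw [PowerSeries.coeff_mk, PowerSeries.coeff_mk]

lemma mk_conv (f g : ℕ → A) :
    PowerSeries.mk (conv f g) = PowerSeries.mk f * PowerSeries.mk g := by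
  apply PowerSeries.ext; intro n; rw [PowerSeries.coeff_mk, conv_eq_coeff]

lemma conv_assoc (f g h : ℕ → A) (n : ℕ) :
    conv (conv f g) h n = conv f (conv g h) n := by
  rw [conv_eq_coeff, conv_eq_coeff, mk_conv, mk_conv, mul_assoc]

lemma conv_if_right (f : ℕ → A) (P : Prop) [Decidable P] (n : ℕ) :
    conv f (fun r => if P ∧ r = 0 then (1:A) else 0) n = if P then f n else 0 := by
  unfold conv
  by_cases hP : P
  · simp only [hP, true_and, if_true]
    rw [Finset.sum_eq_single_of_mem (n, 0) (by simp)]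
    · simp
    · rintro ⟨a, b⟩ hm hne
      have : b ≠ 0 := fun hb => hne (by
        simp only [Finset.HasAntidiagonal.mem_antidiagonal] at hm; subst hb; simp at hm; simp [hm])
      simp [this]
  · simp [hP]

lemma conv_if_left (g : ℕ → A) (P : Prop) [Decidable P] (n : ℕ) :
    conv (fun r => if P ∧ r = 0 then (1:A) else 0) g n = if P then g n else 0 := by
  unfold conv
  by_cases hP : P
  · simp only [hP, true_and, if_true]
    rw [Finset.sum_eq_single_of_mem (0, n) (by simp)]
    · simp
    · rintro ⟨a, b⟩ hm hne
      have : a ≠ 0 := fun hb => hne (by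
        simp only [Finset.HasAntidiagonal.mem_antidiagonal] at hm; subst hb; simp at hm; simp [hm])
      simp [this]
  · simp [hP]

lemma conv_mul_const (f g : ℕ → A) (c : A) (n : ℕ) :
    conv f (fun b => g b * c) n = conv f g n * c := by
  unfold conv; rw [Finset.sum_mul]
  exact Finset.sum_congr rfl fun p _ => by rw [mul_assoc]

lemma conv_const_assoc (f g : ℕ → A) (c : A) (n : ℕ) :
    conv f (fun b => c * g b) n = conv (fun a => f a * c) g n := by
  unfold conv
  exact Finset.sum_congr rfl fun p _ => by rw [mul_assoc]

lemma conv_smul_left (c : A) (f g : ℕ → A) (n : ℕ) :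
    conv (fun a => c * f a) g n = c * conv f g n := by
  unfold conv; rw [Finset.mul_sum]
  exact Finset.sum_congr rfl fun p _ => by rw [mul_assoc]

lemma conv_negpow_right (d : ℕ) (f g : ℕ → A) (n : ℕ) :
    conv f (fun b => (-1:A)^d * g b) n = (-1:A)^d * conv f g n := by
  rw [conv_const_assoc]
  have : (fun a => f a * (-1:A)^d) = fun a => (-1:A)^d * f a := by
    funext a; rw [neg_one_pow_comm]
  rw [this, conv_smul_left]

lemma conv_add_right (f g h : ℕ → A) (n : ℕ) :
    conv f (fun b => g b + h b) n = conv f g n + conv f h n := by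
  unfold conv; rw [← Finset.sum_add_distrib]
  exact Finset.sum_congr rfl fun p _ => by rw [mul_add]

lemma conv_sub_right (f g h : ℕ → A) (n : ℕ) :
    conv f (fun b => g b - h b) n = conv f g n - conv f h n := by
  unfold conv; rw [← Finset.sum_sub_distrib]
  exact Finset.sum_congr rfl fun p _ => by rw [mul_sub]

lemma conv_add_left (f g h : ℕ → A) (n : ℕ) :
    conv (fun a => f a + g a) h n = conv f h n + conv g h n := by
  unfold conv; rw [← Finset.sum_add_distrib]
  exact Finset.sum_congr rfl fun p _ => by rw [add_mul]

lemma conv_sub_left (f g h : ℕ → A) (n : ℕ) :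
    conv (fun a => f a - g a) h n = conv f h n - conv g h n := by
  unfold conv; rw [← Finset.sum_sub_distrib]
  exact Finset.sum_congr rfl fun p _ => by rw [sub_mul]

lemma conv_neg_left (f g : ℕ → A) (n : ℕ) :
    conv (fun a => -(f a)) g n = -(conv f g n) := by
  unfold conv; rw [← Finset.sum_neg_distrib]
  exact Finset.sum_congr rfl fun p _ => by rw [neg_mul]

lemma conv_neg_right (f g : ℕ → A) (n : ℕ) :
    conv f (fun b => -(g b)) n = -(conv f g n) := by
  unfold conv; rw [← Finset.sum_neg_distrib]
  exact Finset.sum_congr rfl fun p _ => by rw [mul_neg]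

lemma conv_conv_succ (f g y : ℕ → A) (hg : g 0 = 0) (s : ℕ) :
    conv (conv f g) y (s+1) = conv (conv f (fun b => g (b+1))) y s := by
  rw [conv_assoc, conv_assoc]
  rw [conv_succ_right f (conv g y) s]
  have hG0 : conv g y 0 = 0 := by rw [conv_zero', hg, zero_mul]
  rw [hG0, mul_zero, zero_add]
  congr 1
  funext e
  rw [conv_succ_left, hg, zero_mul, zero_add]

lemma sbr_conv_zero {ε ε1 ε2 : ℕ} {x : A} {f g : ℕ → A} {n : ℕ}
    (h1 : ∀ a ≤ n, sbr ε1 x (f a) = 0) (h2 : ∀ b ≤ n, sbr ε2 x (g b) = 0)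
    (h : (ε1 + ε2) % 2 = ε % 2) : sbr ε x (conv f g n) = 0 := by
  unfold conv
  rw [sbr_sum_right]
  apply Finset.sum_eq_zero
  rintro ⟨a, b⟩ hm
  rw [Finset.HasAntidiagonal.mem_antidiagonal] at hm
  exact sbr_mul_right_zero (h1 a (by omega)) (h2 b (by omega)) h

/- ### matrix-of-series layer -/

variable {α β γ δ : Type*}

def mmul [Fintype β] (f : α → β → ℕ → A) (g : β → γ → ℕ → A) : α → γ → ℕ → A :=
  fun a c r => ∑ b, conv (f a b) (g b c) r

def madd (f g : α → β → ℕ → A) : α → β → ℕ → A := fun a b r => f a b r + g a b r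
def msub (f g : α → β → ℕ → A) : α → β → ℕ → A := fun a b r => f a b r - g a b r
def mneg (f : α → β → ℕ → A) : α → β → ℕ → A := fun a b r => -(f a b r)
def mdel [DecidableEq α] : α → α → ℕ → A := fun a b r => if a = b ∧ r = 0 then 1 else 0

lemma conv_mmul_right [Fintype β] (f : ℕ → A) (g : α → β → ℕ → A) (h : β → γ → ℕ → A)
    (a : α) (c : γ) (n : ℕ) :
    conv f (mmul g h a c) n = ∑ b, conv f (conv (g a b) (h b c)) n := by
  show conv f (fun r => ∑ b, conv (g a b) (h b c) r) n = _
  rw [conv_sum_right]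

lemma conv_mmul_left [Fintype β] (f : α → β → ℕ → A) (g : β → γ → ℕ → A) (h : ℕ → A)
    (a : α) (c : γ) (n : ℕ) :
    conv (mmul f g a c) h n = ∑ b, conv (conv (f a b) (g b c)) h n := by
  show conv (fun r => ∑ b, conv (f a b) (g b c) r) h n = _
  rw [conv_sum_left]

lemma mmul_assoc [Fintype β] [Fintype γ] (f : α → β → ℕ → A) (g : β → γ → ℕ → A)
    (h : γ → δ → ℕ → A) (a : α) (d : δ) (r : ℕ) :
    mmul (mmul f g) h a d r = mmul f (mmul g h) a d r := by
  unfold mmul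
  calc (∑ c, conv (fun r' => ∑ b, conv (f a b) (g b c) r') (h c d) r)
      = ∑ c, ∑ b, conv (conv (f a b) (g b c)) (h c d) r := by
        exact Finset.sum_congr rfl fun c _ => by rw [conv_sum_left]
    _ = ∑ b, ∑ c, conv (f a b) (conv (g b c) (h c d)) r := by
        rw [Finset.sum_comm]
        exact Finset.sum_congr rfl fun b _ => Finset.sum_congr rfl fun c _ => conv_assoc _ _ _ _
    _ = ∑ b, conv (f a b) (fun r' => ∑ c, conv (g b c) (h c d) r') r := by
        exact Finset.sum_congr rfl fun b _ => by rw [conv_sum_right]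

lemma mmul_madd_left [Fintype β] (f g : α → β → ℕ → A) (h : β → γ → ℕ → A) (a : α) (c : γ) (r : ℕ) :
    mmul (madd f g) h a c r = mmul f h a c r + mmul g h a c r := by
  unfold mmul madd
  rw [← Finset.sum_add_distrib]
  exact Finset.sum_congr rfl fun b _ => by
    show conv (fun r' => f a b r' + g a b r') (h b c) r = _
    rw [conv_add_left]

lemma mmul_msub_left [Fintype β] (f g : α → β → ℕ → A) (h : β → γ → ℕ → A) (a : α) (c : γ) (r : ℕ) :
    mmul (msub f g) h a c r = mmul f h a c r - mmul g h a c r := by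
  unfold mmul msub
  rw [← Finset.sum_sub_distrib]
  exact Finset.sum_congr rfl fun b _ => by
    show conv (fun r' => f a b r' - g a b r') (h b c) r = _
    rw [conv_sub_left]

lemma mmul_mneg_left [Fintype β] (f : α → β → ℕ → A) (h : β → γ → ℕ → A) (a : α) (c : γ) (r : ℕ) :
    mmul (mneg f) h a c r = -(mmul f h a c r) := by
  unfold mmul mneg
  rw [← Finset.sum_neg_distrib]
  exact Finset.sum_congr rfl fun b _ => by
    show conv (fun r' => -(f a b r')) (h b c) r = _
    rw [conv_neg_left]

lemma mmul_madd_right [Fintype β] (f : α → β → ℕ → A) (g h : β → γ → ℕ → A) (a : α) (c : γ) (r : ℕ) :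
    mmul f (madd g h) a c r = mmul f g a c r + mmul f h a c r := by
  unfold mmul madd
  rw [← Finset.sum_add_distrib]
  exact Finset.sum_congr rfl fun b _ => by
    show conv (f a b) (fun r' => g b c r' + h b c r') r = _
    rw [conv_add_right]

lemma mmul_msub_right [Fintype β] (f : α → β → ℕ → A) (g h : β → γ → ℕ → A) (a : α) (c : γ) (r : ℕ) :
    mmul f (msub g h) a c r = mmul f g a c r - mmul f h a c r := by
  unfold mmul msub
  rw [← Finset.sum_sub_distrib]
  exact Finset.sum_congr rfl fun b _ => by
    show conv (f a b) (fun r' => g b c r' - h b c r') r = _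
    rw [conv_sub_right]

lemma mmul_mneg_right [Fintype β] (f : α → β → ℕ → A) (g : β → γ → ℕ → A) (a : α) (c : γ) (r : ℕ) :
    mmul f (mneg g) a c r = -(mmul f g a c r) := by
  unfold mmul mneg
  rw [← Finset.sum_neg_distrib]
  exact Finset.sum_congr rfl fun b _ => by
    show conv (f a b) (fun r' => -(g b c r')) r = _
    rw [conv_neg_right]

lemma mmul_mdel_right [Fintype β] [DecidableEq β] (f : α → β → ℕ → A) (a : α) (c : β) (r : ℕ) :
    mmul f mdel a c r = f a c r := by
  unfold mmul mdel
  calc (∑ b, conv (f a b) (fun r' => if b = c ∧ r' = 0 then 1 else 0) r)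
      = ∑ b, if b = c then f a b r else 0 := by
        exact Finset.sum_congr rfl fun b _ => conv_if_right _ _ _
    _ = f a c r := by simp

lemma mmul_mdel_left [Fintype α] [DecidableEq α] (f : α → β → ℕ → A) (a : α) (c : β) (r : ℕ) :
    mmul mdel f a c r = f a c r := by
  unfold mmul mdel
  calc (∑ b, conv (fun r' => if a = b ∧ r' = 0 then 1 else 0) (f b c) r)
      = ∑ b, if a = b then f b c r else 0 := by
        exact Finset.sum_congr rfl fun b _ => conv_if_left _ _ _
    _ = f a c r := by simp

/- ### commuting with an inverse matrix -/

lemma sbr_inv {κ : Type*} [Fintype κ] [DecidableEq κ] (M M' : κ → κ → ℕ → A)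
    (ρ : κ → ℕ) (m : ℕ) (x : A)
    (hM0 : ∀ p j, M p j 0 = if p = j then (1:A) else 0)
    (hinv : ∀ i j r, (∑ p, conv (M' i p) (M p j) r) = if i = j ∧ r = 0 then 1 else 0)
    (hx : ∀ p j r, sbr (m * (ρ p + ρ j)) x (M p j r) = 0) :
    ∀ r i j, sbr (m * (ρ i + ρ j)) x (M' i j r) = 0 := by
  intro r
  induction r using Nat.strong_induction_on with
  | _ r ih =>
  intro i j
  match r with
  | 0 =>
    have h := hinv i j 0
    have h2 : ∀ p : κ, conv (M' i p) (M p j) 0 = if p = j then M' i p 0 else 0 := by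
      intro p; rw [conv_zero', hM0]; split_ifs <;> simp
    rw [Finset.sum_congr rfl (fun p _ => h2 p)] at h
    simp only [Finset.sum_ite_eq', Finset.mem_univ, if_true] at h
    rw [h]
    simp only [and_true]
    by_cases hij : i = j
    · subst hij; rw [if_pos rfl]
      apply sbr_one
      have : m * (ρ i + ρ i) = 2 * (m * ρ i) := by ring
      omega
    · rw [if_neg hij]; exact sbr_zero_right _ _
  | (s+1) =>
    have h := hinv i j (s+1)
    have h2 : ∀ p : κ, conv (M' i p) (M p j) (s+1)
        = (if p = j then M' i p (s+1) else 0) + conv (M' i p) (fun b => M p j (b+1)) s := by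
      intro p
      rw [conv_succ_right, hM0]
      split_ifs <;> simp
    rw [Finset.sum_congr rfl (fun p _ => h2 p), Finset.sum_add_distrib] at h
    simp only [Finset.sum_ite_eq', Finset.mem_univ, if_true] at h
    have hfalse : (if i = j ∧ s + 1 = 0 then (1:A) else 0) = 0 := by simp
    rw [hfalse] at h
    have hM' : M' i j (s+1) = -(∑ p, conv (M' i p) (fun b => M p j (b+1)) s) :=
      eq_neg_of_add_eq_zero_left h
    rw [hM', sbr_neg_right, neg_eq_zero, sbr_sum_right]
    apply Finset.sum_eq_zero
    intro p _
    apply sbr_conv_zero (ε1 := m * (ρ i + ρ p)) (ε2 := m * (ρ p + ρ j))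
    · intro a ha; exact ih a (by omega) i p
    · intro b _; exact hx p j (b+1)
    · have : m * (ρ i + ρ p) + m * (ρ p + ρ j) = m * (ρ i + ρ j) + 2 * (m * ρ p) := by ring
      omega

/- ### the key commutation lemma -/

lemma key {ι : Type*} [Fintype ι] [DecidableEq ι] (par : ι → ℕ) (t : ι → ι → ℕ → A)
    (h0 : ∀ i j, t i j 0 = if i = j then (1:A) else 0)
    (hrtt : ∀ i j l m : ι, ∀ r s : ℕ,
      sbr ((par i + par j) * (par l + par m)) (t i j (r + 1)) (t l m s)
          - sbr ((par i + par j) * (par l + par m)) (t i j r) (t l m (s + 1))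
        = (-1 : A) ^ (par i * par j + par i * par l + par j * par l) *
            (t l j r * t i m s - t l j s * t i m r))
    (X Y : ι → ℕ → A) (w i j c : ι)
    (HX : ∀ m s, (∑ l, conv (X l) (t l m) s) = if w = m ∧ s = 0 then (1:A) else 0)
    (HY : ∀ l s, (∑ m, conv (t l m) (Y m) s) = if l = c ∧ s = 0 then (1:A) else 0)
    (hwj : w ≠ j) (hic : i ≠ c)
    (hbase : ∀ r, sbr ((par i + par j) * (par w + par c)) (t i j r) (X c 0) = 0) :
    ∀ s r, sbr ((par i + par j) * (par w + par c)) (t i j r) (X c s) = 0 := by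
  have B0 : ∀ (l m : ι) (r : ℕ), sbr ((par i + par j) * (par l + par m)) (t i j r) (t l m 0) = 0 := by
    intro l m r; rw [h0]
    by_cases hlm : l = m
    · subst hlm; rw [if_pos rfl]; apply sbr_one
      have : (par i + par j) * (par l + par l) = 2 * ((par i + par j) * par l) := by ring
      omega
    · rw [if_neg hlm]; exact sbr_zero_right _ _
  have stepA : ∀ (m : ι) (r a' : ℕ),
      (∑ l, conv (fun a => sbr ((par i + par j) * (par w + par l)) (t i j r) (X l a)) (t l m) a')
      = - ∑ l, (-1:A)^((par i + par j) * (par w + par l)) *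
          conv (X l) (fun b => sbr ((par i + par j) * (par l + par m)) (t i j r) (t l m b)) a' := by
    intro m r a'
    have h1 : sbr ((par i + par j) * (par w + par m)) (t i j r)
        (∑ l, conv (X l) (t l m) a') = 0 := by
      rw [HX m a']
      by_cases hcond : w = m ∧ a' = 0
      · rw [if_pos hcond]; apply sbr_one
        obtain ⟨hwm, _⟩ := hcond; subst hwm
        have : (par i + par j) * (par w + par w) = 2 * ((par i + par j) * par w) := by ring
        omega
      · rw [if_neg hcond]; exact sbr_zero_right _ _
    rw [sbr_sum_right] at h1
    have h2 : ∀ l : ι, sbr ((par i + par j) * (par w + par m)) (t i j r) (conv (X l) (t l m) a')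
        = conv (fun a => sbr ((par i + par j) * (par w + par l)) (t i j r) (X l a)) (t l m) a'
          + (-1:A)^((par i + par j) * (par w + par l)) *
              conv (X l) (fun b => sbr ((par i + par j) * (par l + par m)) (t i j r) (t l m b)) a' := by
      intro l
      rw [show conv (X l) (t l m) a' = ∑ p ∈ Finset.HasAntidiagonal.antidiagonal a', X l p.1 * t l m p.2 from rfl,
        sbr_sum_right,
        show conv (fun a => sbr ((par i + par j) * (par w + par l)) (t i j r) (X l a)) (t l m) a'
          = ∑ p ∈ Finset.HasAntidiagonal.antidiagonal a',
              sbr ((par i + par j) * (par w + par l)) (t i j r) (X l p.1) * t l m p.2 from rfl,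
        show conv (X l) (fun b => sbr ((par i + par j) * (par l + par m)) (t i j r) (t l m b)) a'
          = ∑ p ∈ Finset.HasAntidiagonal.antidiagonal a',
              X l p.1 * sbr ((par i + par j) * (par l + par m)) (t i j r) (t l m p.2) from rfl,
        Finset.mul_sum, ← Finset.sum_add_distrib]
      apply Finset.sum_congr rfl
      intro p _
      refine sbr_mul_right _ _ _ _ _ _ ?_
      have : (par i + par j) * (par w + par l) + (par i + par j) * (par l + par m)
          = (par i + par j) * (par w + par m) + 2 * ((par i + par j) * par l) := by ring
      omega
    rw [Finset.sum_congr rfl (fun l _ => h2 l), Finset.sum_add_distrib] at h1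
    exact eq_neg_of_add_eq_zero_left h1
  have hW1 : ∀ r s, sbr ((par i + par j) * (par w + par c)) (t i j r) (X c s)
      = ∑ m, conv (fun a' => ∑ l,
          conv (fun a => sbr ((par i + par j) * (par w + par l)) (t i j r) (X l a)) (t l m) a')
          (Y m) s := by
    intro r s
    have s1 : ∀ m : ι, conv (fun a' => ∑ l,
          conv (fun a => sbr ((par i + par j) * (par w + par l)) (t i j r) (X l a)) (t l m) a')
          (Y m) s
        = ∑ l, conv (conv (fun a => sbr ((par i + par j) * (par w + par l)) (t i j r) (X l a))
            (t l m)) (Y m) s := fun m => conv_sum_left _ _ _ _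
    rw [Finset.sum_congr rfl (fun m _ => s1 m), Finset.sum_comm]
    have s2 : ∀ l : ι, (∑ m, conv (conv (fun a =>
          sbr ((par i + par j) * (par w + par l)) (t i j r) (X l a)) (t l m)) (Y m) s)
        = conv (fun a => sbr ((par i + par j) * (par w + par l)) (t i j r) (X l a))
            (fun e => if l = c ∧ e = 0 then (1:A) else 0) s := by
      intro l
      have s21 : ∀ m : ι, conv (conv (fun a =>
            sbr ((par i + par j) * (par w + par l)) (t i j r) (X l a)) (t l m)) (Y m) s
          = conv (fun a => sbr ((par i + par j) * (par w + par l)) (t i j r) (X l a))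
              (conv (t l m) (Y m)) s := fun m => conv_assoc _ _ _ _
      rw [Finset.sum_congr rfl (fun m _ => s21 m), ← conv_sum_right]
      congr 1
      funext e
      exact HY l e
    rw [Finset.sum_congr rfl (fun l _ => s2 l)]
    have s3 : ∀ l : ι, conv (fun a => sbr ((par i + par j) * (par w + par l)) (t i j r) (X l a))
          (fun e => if l = c ∧ e = 0 then (1:A) else 0) s
        = if l = c then sbr ((par i + par j) * (par w + par l)) (t i j r) (X l s) else 0 :=
      fun l => conv_if_right _ _ _
    rw [Finset.sum_congr rfl (fun l _ => s3 l)]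
    simp
  have hW2 : ∀ r s, sbr ((par i + par j) * (par w + par c)) (t i j r) (X c s)
      = - ∑ m, ∑ l, (-1:A)^((par i + par j) * (par w + par l)) *
          conv (conv (X l) (fun b => sbr ((par i + par j) * (par l + par m)) (t i j r) (t l m b)))
            (Y m) s := by
    intro r s
    rw [hW1 r s]
    have s1 : ∀ m : ι, conv (fun a' => ∑ l,
          conv (fun a => sbr ((par i + par j) * (par w + par l)) (t i j r) (X l a)) (t l m) a')
          (Y m) s
        = - ∑ l, (-1:A)^((par i + par j) * (par w + par l)) *
            conv (conv (X l)
              (fun b => sbr ((par i + par j) * (par l + par m)) (t i j r) (t l m b))) (Y m) s := by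
      intro m
      have e1 : (fun a' => ∑ l,
            conv (fun a => sbr ((par i + par j) * (par w + par l)) (t i j r) (X l a)) (t l m) a')
          = fun a' => - ∑ l, (-1:A)^((par i + par j) * (par w + par l)) *
              conv (X l) (fun b => sbr ((par i + par j) * (par l + par m)) (t i j r) (t l m b)) a' :=
        funext (fun a' => stepA m r a')
      rw [e1]
      rw [show (fun a' => - ∑ l, (-1:A)^((par i + par j) * (par w + par l)) *
              conv (X l) (fun b => sbr ((par i + par j) * (par l + par m)) (t i j r) (t l m b)) a')
          = fun a' => -(∑ l, (-1:A)^((par i + par j) * (par w + par l)) *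
              conv (X l) (fun b => sbr ((par i + par j) * (par l + par m)) (t i j r) (t l m b)) a')
          from rfl]
      rw [conv_neg_left, conv_sum_left]
      congr 1
      apply Finset.sum_congr rfl
      intro l _
      exact conv_smul_left _ _ _ _
    rw [Finset.sum_congr rfl (fun m _ => s1 m), ← Finset.sum_neg_distrib]
  have hrec : ∀ r s, sbr ((par i + par j) * (par w + par c)) (t i j (r+1)) (X c s)
      = sbr ((par i + par j) * (par w + par c)) (t i j r) (X c (s+1)) := by
    intro r s
    rw [hW2 (r+1) s, hW2 r (s+1), neg_inj]
    have shift : ∀ (m l : ι), conv (conv (X l)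
          (fun b => sbr ((par i + par j) * (par l + par m)) (t i j r) (t l m b))) (Y m) (s+1)
        = conv (conv (X l)
            (fun b => sbr ((par i + par j) * (par l + par m)) (t i j r) (t l m (b+1)))) (Y m) s :=
      fun m l => conv_conv_succ _ _ _ (B0 l m r) s
    rw [show (∑ m, ∑ l, (-1:A)^((par i + par j) * (par w + par l)) *
          conv (conv (X l) (fun b => sbr ((par i + par j) * (par l + par m)) (t i j r) (t l m b)))
            (Y m) (s+1))
        = ∑ m, ∑ l, (-1:A)^((par i + par j) * (par w + par l)) *
          conv (conv (X l)
            (fun b => sbr ((par i + par j) * (par l + par m)) (t i j r) (t l m (b+1)))) (Y m) s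
      from Finset.sum_congr rfl (fun m _ => Finset.sum_congr rfl (fun l _ => by rw [shift m l]))]
    rw [← sub_eq_zero, ← Finset.sum_sub_distrib]
    have hterm : ∀ m : ι, (∑ l, (-1:A)^((par i + par j) * (par w + par l)) *
          conv (conv (X l)
            (fun b => sbr ((par i + par j) * (par l + par m)) (t i j (r+1)) (t l m b))) (Y m) s)
        - (∑ l, (-1:A)^((par i + par j) * (par w + par l)) *
          conv (conv (X l)
            (fun b => sbr ((par i + par j) * (par l + par m)) (t i j r) (t l m (b+1)))) (Y m) s)
        = ∑ l, (-1:A)^((par i + par j) * par w + par i * par j) *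
            (conv (conv (X l) (fun b => t l j r * t i m b)) (Y m) s
              - conv (conv (X l) (fun b => t l j b * t i m r)) (Y m) s) := by
      intro m
      rw [← Finset.sum_sub_distrib]
      apply Finset.sum_congr rfl
      intro l _
      rw [← mul_sub, ← conv_sub_left]
      have e2 : (fun a' => conv (X l)
            (fun b => sbr ((par i + par j) * (par l + par m)) (t i j (r+1)) (t l m b)) a'
          - conv (X l)
            (fun b => sbr ((par i + par j) * (par l + par m)) (t i j r) (t l m (b+1))) a')
          = fun a' => (-1:A)^(par i * par j + par i * par l + par j * par l) *
              (conv (X l) (fun b => t l j r * t i m b) a'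
                - conv (X l) (fun b => t l j b * t i m r) a') := by
        funext a'
        rw [← conv_sub_right, ← conv_sub_right, ← conv_negpow_right]
        congr 1
        funext b
        rw [hrtt i j l m r b, mul_sub]
      rw [e2]
      rw [show (fun a' => (-1:A)^(par i * par j + par i * par l + par j * par l) *
            (conv (X l) (fun b => t l j r * t i m b) a'
              - conv (X l) (fun b => t l j b * t i m r) a'))
          = fun a' => (-1:A)^(par i * par j + par i * par l + par j * par l) *
            ((fun a'' => conv (X l) (fun b => t l j r * t i m b) a''
              - conv (X l) (fun b => t l j b * t i m r) a'') a') from rfl]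
      rw [conv_smul_left, ← mul_assoc, ← pow_add, conv_sub_left,
        npow_congr (b := (par i + par j) * par w + par i * par j)
          (by have : (par i + par j) * (par w + par l) +
                (par i * par j + par i * par l + par j * par l)
              = ((par i + par j) * par w + par i * par j) + 2 * ((par i + par j) * par l) := by
                ring
              omega)]
    rw [Finset.sum_congr rfl (fun m _ => hterm m)]
    have hsplit : ∀ m : ι, (∑ l, (-1:A)^((par i + par j) * par w + par i * par j) *
          (conv (conv (X l) (fun b => t l j r * t i m b)) (Y m) s
            - conv (conv (X l) (fun b => t l j b * t i m r)) (Y m) s))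
        = (-1:A)^((par i + par j) * par w + par i * par j) *
            ((∑ l, conv (conv (X l) (fun b => t l j r * t i m b)) (Y m) s)
              - (∑ l, conv (conv (X l) (fun b => t l j b * t i m r)) (Y m) s)) := by
      intro m
      rw [mul_sub, Finset.mul_sum, Finset.mul_sum, ← Finset.sum_sub_distrib]
      exact Finset.sum_congr rfl fun l _ => by rw [mul_sub]
    rw [Finset.sum_congr rfl (fun m _ => hsplit m), ← Finset.mul_sum]
    -- now show the double sum vanishes
    have hQ : ∀ m : ι, (∑ l, conv (conv (X l) (fun b => t l j b * t i m r)) (Y m) s) = 0 := by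
      intro m
      have e3 : ∀ l : ι, conv (conv (X l) (fun b => t l j b * t i m r)) (Y m) s
          = conv (fun a' => conv (X l) (t l j) a' * t i m r) (Y m) s := by
        intro l
        congr 1
        funext a'
        exact conv_mul_const _ _ _ _
      rw [Finset.sum_congr rfl (fun l _ => e3 l), ← conv_sum_left]
      have e4 : (fun a' => ∑ l, conv (X l) (t l j) a' * t i m r) = fun _ => (0:A) := by
        funext a'
        rw [← Finset.sum_mul, HX j a', if_neg (by tauto), zero_mul]
      rw [e4, conv_zero_left]
    have hP : (∑ m, ∑ l, conv (conv (X l) (fun b => t l j r * t i m b)) (Y m) s) = 0 := by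
      rw [Finset.sum_comm]
      apply Finset.sum_eq_zero
      intro l _
      have e5 : ∀ m : ι, conv (conv (X l) (fun b => t l j r * t i m b)) (Y m) s
          = conv (fun a => X l a * t l j r) (conv (t i m) (Y m)) s := by
        intro m
        rw [← conv_assoc]
        congr 1
        funext a'
        exact conv_const_assoc _ _ _ _
      rw [Finset.sum_congr rfl (fun m _ => e5 m), ← conv_sum_right]
      have e6 : (fun e => ∑ m, conv (t i m) (Y m) e)
          = fun e => if i = c ∧ e = 0 then (1:A) else 0 := by
        funext e; exact HY i e
      rw [e6, conv_if_right, if_neg hic]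
    have hsum : (∑ m, ((∑ l, conv (conv (X l) (fun b => t l j r * t i m b)) (Y m) s)
          - (∑ l, conv (conv (X l) (fun b => t l j b * t i m r)) (Y m) s)))
        = 0 := by
      rw [Finset.sum_sub_distrib, hP]
      rw [Finset.sum_congr rfl (fun m _ => hQ m)]
      simp
    rw [hsum, mul_zero]
  intro s
  induction s with
  | zero => exact hbase
  | succ s ih => intro r; rw [← hrec r s]; exact ih (r+1)

lemma mmul_assoc' [Fintype β] [Fintype γ] (f : α → β → ℕ → A) (g : β → γ → ℕ → A)
    (h : γ → δ → ℕ → A) : mmul (mmul f g) h = mmul f (mmul g h) :=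
  funext fun a => funext fun d => funext fun r => mmul_assoc f g h a d r

end S15



namespace S15

abbrev BIdx (μ1 μ2 μ3 : ℕ) := (Fin μ1 ⊕ Fin μ2) ⊕ Fin μ3

def phi (μ1 μ2 μ3 : ℕ) : BIdx μ1 μ2 μ3 → Fin (μ1 + μ2 + μ3) :=
  Sum.elim (Sum.elim (e1 μ1 μ2 μ3) (e2 μ1 μ2 μ3)) (e3 μ1 μ2 μ3)

lemma phi_inj {μ1 μ2 μ3 : ℕ} : Function.Injective (phi μ1 μ2 μ3) := by
  rintro ((a|a)|a) ((b|b)|b) h <;>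
    (have ha := a.isLt; have hb := b.isLt;
     simp only [phi, Sum.elim_inl, Sum.elim_inr, e1, e2, e3, Fin.ext_iff, Fin.coe_castAdd,
       Fin.coe_natAdd] at h) <;>
    first
      | (simp only [Sum.inl.injEq, Sum.inr.injEq]; exact Fin.ext (by omega))
      | (exfalso; omega)

variable {A : Type*} [Ring A] {μ1 μ2 μ3 : ℕ}

def XR (D3' : Fin μ3 → Fin μ3 → ℕ → A) (F1 : Fin μ2 → Fin μ1 → ℕ → A)
    (F2 : Fin μ3 → Fin μ2 → ℕ → A) (F31 : Fin μ3 → Fin μ1 → ℕ → A) :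
    Fin μ3 → BIdx μ1 μ2 μ3 → ℕ → A :=
  fun h => Sum.elim (Sum.elim
    (fun a => msub (mmul (mmul D3' F2) F1) (mmul D3' F31) h a)
    (fun b => mneg (mmul D3' F2) h b))
    (fun p => D3' h p)

def YR3 (D3' : Fin μ3 → Fin μ3 → ℕ → A) (E1 : Fin μ1 → Fin μ2 → ℕ → A)
    (E2 : Fin μ2 → Fin μ3 → ℕ → A) (E13 : Fin μ1 → Fin μ3 → ℕ → A) :
    Fin μ3 → BIdx μ1 μ2 μ3 → ℕ → A :=
  fun k => Sum.elim (Sum.elim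
    (fun a => msub (mmul (mmul E1 E2) D3') (mmul E13 D3') a k)
    (fun b => mneg (mmul E2 D3') b k))
    (fun p => D3' p k)

def YR2 (D2' : Fin μ2 → Fin μ2 → ℕ → A) (D3' : Fin μ3 → Fin μ3 → ℕ → A)
    (E1 : Fin μ1 → Fin μ2 → ℕ → A) (E2 : Fin μ2 → Fin μ3 → ℕ → A)
    (E13 : Fin μ1 → Fin μ3 → ℕ → A) (F2 : Fin μ3 → Fin μ2 → ℕ → A) :
    Fin μ2 → BIdx μ1 μ2 μ3 → ℕ → A :=
  fun k => Sum.elim (Sum.elim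
    (fun a => msub (msub (mmul E13 (mmul D3' F2)) (mmul E1 D2'))
        (mmul (mmul E1 E2) (mmul D3' F2)) a k)
    (fun b => madd D2' (mmul E2 (mmul D3' F2)) b k))
    (fun p => mneg (mmul D3' F2) p k)

end S15


namespace S15

section Main

variable {μ1 μ2 μ3 : ℕ} {A : Type*} [Ring A] {par : Fin (μ1 + μ2 + μ3) → ℕ}
  {t : Fin (μ1 + μ2 + μ3) → Fin (μ1 + μ2 + μ3) → ℕ → A}
  {D1 D1' : Fin μ1 → Fin μ1 → ℕ → A} {D2 D2' : Fin μ2 → Fin μ2 → ℕ → A}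
  {D3 D3' : Fin μ3 → Fin μ3 → ℕ → A}
  {E1 : Fin μ1 → Fin μ2 → ℕ → A} {E2 : Fin μ2 → Fin μ3 → ℕ → A}
  {E13 : Fin μ1 → Fin μ3 → ℕ → A}
  {F1 : Fin μ2 → Fin μ1 → ℕ → A} {F2 : Fin μ3 → Fin μ2 → ℕ → A}
  {F31 : Fin μ3 → Fin μ1 → ℕ → A}
  (hG : GaussData3 μ1 μ2 μ3 par t D1 D1' D2 D2' D3 D3' E1 E2 E13 F1 F2 F31)

include hG

lemma ht11 : ∀ a b, t (e1 μ1 μ2 μ3 a) (e1 μ1 μ2 μ3 b) = D1 a b :=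
  fun a b => funext fun r => hG.hT11 a b r

lemma ht12 : ∀ a b, t (e1 μ1 μ2 μ3 a) (e2 μ1 μ2 μ3 b) = mmul D1 E1 a b :=
  fun a b => funext fun r => hG.hT12 a b r

lemma ht13 : ∀ a b, t (e1 μ1 μ2 μ3 a) (e3 μ1 μ2 μ3 b) = mmul D1 E13 a b :=
  fun a b => funext fun r => hG.hT13 a b r

lemma ht21 : ∀ a b, t (e2 μ1 μ2 μ3 a) (e1 μ1 μ2 μ3 b) = mmul F1 D1 a b :=
  fun a b => funext fun r => hG.hT21 a b r

lemma ht31 : ∀ a b, t (e3 μ1 μ2 μ3 a) (e1 μ1 μ2 μ3 b) = mmul F31 D1 a b :=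
  fun a b => funext fun r => hG.hT31 a b r

lemma ht22 : ∀ a b, t (e2 μ1 μ2 μ3 a) (e2 μ1 μ2 μ3 b) = madd (mmul F1 (mmul D1 E1)) D2 a b := by
  intro a b; funext r
  rw [hG.hT22 a b r]
  show _ = mmul F1 (mmul D1 E1) a b r + D2 a b r
  congr 1
  exact (Finset.sum_congr rfl fun p _ => (conv_mmul_right (F1 a p) D1 E1 p b r)).symm

lemma ht23 : ∀ a b, t (e2 μ1 μ2 μ3 a) (e3 μ1 μ2 μ3 b)
    = madd (mmul F1 (mmul D1 E13)) (mmul D2 E2) a b := by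
  intro a b; funext r
  rw [hG.hT23 a b r]
  show _ = mmul F1 (mmul D1 E13) a b r + mmul D2 E2 a b r
  congr 1
  exact (Finset.sum_congr rfl fun p _ => (conv_mmul_right (F1 a p) D1 E13 p b r)).symm

lemma ht32 : ∀ a b, t (e3 μ1 μ2 μ3 a) (e2 μ1 μ2 μ3 b)
    = madd (mmul F31 (mmul D1 E1)) (mmul F2 D2) a b := by
  intro a b; funext r
  rw [hG.hT32 a b r]
  show _ = mmul F31 (mmul D1 E1) a b r + mmul F2 D2 a b r
  congr 1
  exact (Finset.sum_congr rfl fun p _ => (conv_mmul_right (F31 a p) D1 E1 p b r)).symm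

lemma ht33 : ∀ a b, t (e3 μ1 μ2 μ3 a) (e3 μ1 μ2 μ3 b)
    = madd (madd (mmul F31 (mmul D1 E13)) (mmul F2 (mmul D2 E2))) D3 a b := by
  intro a b; funext r
  rw [hG.hT33 a b r]
  show _ = (mmul F31 (mmul D1 E13) a b r + mmul F2 (mmul D2 E2) a b r) + D3 a b r
  congr 2
  · exact (Finset.sum_congr rfl fun p _ => (conv_mmul_right (F31 a p) D1 E13 p b r)).symm
  · exact (Finset.sum_congr rfl fun p _ => (conv_mmul_right (F2 a p) D2 E2 p b r)).symm

lemma hmD3'D3 : ∀ a b, mmul D3' D3 a b = (mdel a b : ℕ → A) :=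
  fun a b => funext fun r => hG.hD3inv' a b r

lemma lemHX : ∀ (h : Fin μ3) (m : BIdx μ1 μ2 μ3) (s : ℕ),
    (∑ l, conv (XR D3' F1 F2 F31 h l) (t (phi μ1 μ2 μ3 l) (phi μ1 μ2 μ3 m)) s)
      = if (Sum.inr h : BIdx μ1 μ2 μ3) = m ∧ s = 0 then 1 else 0 := by
  intro h m s
  obtain ((mj | mk) | mh) := m
  · rw [if_neg (by simp)]
    rw [Fintype.sum_sum_type, Fintype.sum_sum_type]
    simp only [XR, phi, Sum.elim_inl, Sum.elim_inr, ht11 hG, ht21 hG, ht31 hG]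
    show mmul (msub (mmul (mmul D3' F2) F1) (mmul D3' F31)) D1 h mj s
        + mmul (mneg (mmul D3' F2)) (mmul F1 D1) h mj s
        + mmul D3' (mmul F31 D1) h mj s = 0
    simp only [mmul_msub_left, mmul_mneg_left, mmul_assoc']
    abel
  · rw [if_neg (by simp)]
    rw [Fintype.sum_sum_type, Fintype.sum_sum_type]
    simp only [XR, phi, Sum.elim_inl, Sum.elim_inr, ht12 hG, ht22 hG, ht32 hG]
    show mmul (msub (mmul (mmul D3' F2) F1) (mmul D3' F31)) (mmul D1 E1) h mk s
        + mmul (mneg (mmul D3' F2)) (madd (mmul F1 (mmul D1 E1)) D2) h mk s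
        + mmul D3' (madd (mmul F31 (mmul D1 E1)) (mmul F2 D2)) h mk s = 0
    simp only [mmul_msub_left, mmul_mneg_left, mmul_madd_right, mmul_assoc']
    abel
  · rw [Fintype.sum_sum_type, Fintype.sum_sum_type]
    simp only [XR, phi, Sum.elim_inl, Sum.elim_inr, ht13 hG, ht23 hG, ht33 hG]
    show mmul (msub (mmul (mmul D3' F2) F1) (mmul D3' F31)) (mmul D1 E13) h mh s
        + mmul (mneg (mmul D3' F2)) (madd (mmul F1 (mmul D1 E13)) (mmul D2 E2)) h mh s
        + mmul D3' (madd (madd (mmul F31 (mmul D1 E13)) (mmul F2 (mmul D2 E2))) D3) h mh s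
        = if (Sum.inr h : BIdx μ1 μ2 μ3) = Sum.inr mh ∧ s = 0 then 1 else 0
    simp only [mmul_msub_left, mmul_mneg_left, mmul_madd_right, mmul_assoc', Sum.inr.injEq]
    rw [show (if h = mh ∧ s = 0 then (1:A) else 0) = mmul D3' D3 h mh s from
      (hG.hD3inv' h mh s).symm]
    abel

lemma lemHY3 : ∀ (k : Fin μ3) (l : BIdx μ1 μ2 μ3) (s : ℕ),
    (∑ m, conv (t (phi μ1 μ2 μ3 l) (phi μ1 μ2 μ3 m)) (YR3 D3' E1 E2 E13 k m) s)
      = if l = (Sum.inr k : BIdx μ1 μ2 μ3) ∧ s = 0 then 1 else 0 := by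
  intro k l s
  obtain ((la | lb) | lc) := l
  · rw [if_neg (by simp)]
    rw [Fintype.sum_sum_type, Fintype.sum_sum_type]
    simp only [YR3, phi, Sum.elim_inl, Sum.elim_inr, ht11 hG, ht12 hG, ht13 hG]
    show mmul D1 (msub (mmul (mmul E1 E2) D3') (mmul E13 D3')) la k s
        + mmul (mmul D1 E1) (mneg (mmul E2 D3')) la k s
        + mmul (mmul D1 E13) D3' la k s = 0
    simp only [mmul_msub_right, mmul_mneg_right, mmul_assoc']
    abel
  · rw [if_neg (by simp)]
    rw [Fintype.sum_sum_type, Fintype.sum_sum_type]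
    simp only [YR3, phi, Sum.elim_inl, Sum.elim_inr, ht21 hG, ht22 hG, ht23 hG]
    show mmul (mmul F1 D1) (msub (mmul (mmul E1 E2) D3') (mmul E13 D3')) lb k s
        + mmul (madd (mmul F1 (mmul D1 E1)) D2) (mneg (mmul E2 D3')) lb k s
        + mmul (madd (mmul F1 (mmul D1 E13)) (mmul D2 E2)) D3' lb k s = 0
    simp only [mmul_msub_right, mmul_mneg_right, mmul_madd_left, mmul_assoc']
    abel
  · rw [Fintype.sum_sum_type, Fintype.sum_sum_type]
    simp only [YR3, phi, Sum.elim_inl, Sum.elim_inr, ht31 hG, ht32 hG, ht33 hG]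
    show mmul (mmul F31 D1) (msub (mmul (mmul E1 E2) D3') (mmul E13 D3')) lc k s
        + mmul (madd (mmul F31 (mmul D1 E1)) (mmul F2 D2)) (mneg (mmul E2 D3')) lc k s
        + mmul (madd (madd (mmul F31 (mmul D1 E13)) (mmul F2 (mmul D2 E2))) D3) D3' lc k s
        = if (Sum.inr lc : BIdx μ1 μ2 μ3) = Sum.inr k ∧ s = 0 then 1 else 0
    simp only [mmul_msub_right, mmul_mneg_right, mmul_madd_left, mmul_assoc', Sum.inr.injEq]
    rw [show (if lc = k ∧ s = 0 then (1:A) else 0) = mmul D3 D3' lc k s from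
      (hG.hD3inv lc k s).symm]
    abel

lemma lemHY2 : ∀ (k : Fin μ2) (l : BIdx μ1 μ2 μ3) (s : ℕ),
    (∑ m, conv (t (phi μ1 μ2 μ3 l) (phi μ1 μ2 μ3 m)) (YR2 D2' D3' E1 E2 E13 F2 k m) s)
      = if l = (Sum.inl (Sum.inr k) : BIdx μ1 μ2 μ3) ∧ s = 0 then 1 else 0 := by
  intro k l s
  obtain ((la | lb) | lc) := l
  · rw [if_neg (by simp)]
    rw [Fintype.sum_sum_type, Fintype.sum_sum_type]
    simp only [YR2, phi, Sum.elim_inl, Sum.elim_inr, ht11 hG, ht12 hG, ht13 hG]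
    show mmul D1 (msub (msub (mmul E13 (mmul D3' F2)) (mmul E1 D2'))
          (mmul (mmul E1 E2) (mmul D3' F2))) la k s
        + mmul (mmul D1 E1) (madd D2' (mmul E2 (mmul D3' F2))) la k s
        + mmul (mmul D1 E13) (mneg (mmul D3' F2)) la k s = 0
    simp only [mmul_msub_right, mmul_mneg_right, mmul_madd_right, mmul_assoc']
    abel
  · rw [Fintype.sum_sum_type, Fintype.sum_sum_type]
    simp only [YR2, phi, Sum.elim_inl, Sum.elim_inr, ht21 hG, ht22 hG, ht23 hG]
    show mmul (mmul F1 D1) (msub (msub (mmul E13 (mmul D3' F2)) (mmul E1 D2'))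
          (mmul (mmul E1 E2) (mmul D3' F2))) lb k s
        + mmul (madd (mmul F1 (mmul D1 E1)) D2) (madd D2' (mmul E2 (mmul D3' F2))) lb k s
        + mmul (madd (mmul F1 (mmul D1 E13)) (mmul D2 E2)) (mneg (mmul D3' F2)) lb k s
        = if (Sum.inl (Sum.inr lb) : BIdx μ1 μ2 μ3) = Sum.inl (Sum.inr k) ∧ s = 0 then 1 else 0
    simp only [mmul_msub_right, mmul_mneg_right, mmul_madd_right, mmul_madd_left, mmul_assoc',
      Sum.inl.injEq, Sum.inr.injEq]
    rw [show (if lb = k ∧ s = 0 then (1:A) else 0) = mmul D2 D2' lb k s from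
      (hG.hD2inv lb k s).symm]
    abel
  · rw [if_neg (by simp)]
    rw [Fintype.sum_sum_type, Fintype.sum_sum_type]
    simp only [YR2, phi, Sum.elim_inl, Sum.elim_inr, ht31 hG, ht32 hG, ht33 hG]
    show mmul (mmul F31 D1) (msub (msub (mmul E13 (mmul D3' F2)) (mmul E1 D2'))
          (mmul (mmul E1 E2) (mmul D3' F2))) lc k s
        + mmul (madd (mmul F31 (mmul D1 E1)) (mmul F2 D2)) (madd D2' (mmul E2 (mmul D3' F2))) lc k s
        + mmul (madd (madd (mmul F31 (mmul D1 E13)) (mmul F2 (mmul D2 E2))) D3)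
            (mneg (mmul D3' F2)) lc k s = 0
    simp only [mmul_msub_right, mmul_mneg_right, mmul_madd_right, mmul_madd_left, mmul_assoc']
    -- leftover : mmul F2 (mmul D2 D2') - mmul D3 (mmul D3' F2) after cancellation; rewrite both to F2
    rw [show mmul F2 (mmul D2 D2') lc k s = F2 lc k s from by
        rw [show mmul D2 D2' = (fun a b => (mdel a b : ℕ → A)) from
          funext fun a => funext fun b => funext fun r => hG.hD2inv a b r]
        exact mmul_mdel_right F2 lc k s]
    rw [show mmul D3 (mmul D3' F2) lc k s = F2 lc k s from by
        rw [← mmul_assoc]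
        rw [show mmul D3 D3' = (fun a b => (mdel a b : ℕ → A)) from
          funext fun a => funext fun b => funext fun r => hG.hD3inv a b r]
        exact mmul_mdel_left F2 lc k s]
    abel

lemma hD30 : ∀ a b, D3 a b 0 = if a = b then (1:A) else 0 := by
  intro a b
  have h := hG.hT33 a b 0
  rw [hG.h0] at h
  simp only [conv_zero', hG.hF310, hG.hF20, zero_mul, Finset.sum_const_zero, zero_add] at h
  by_cases hab : a = b
  · subst hab; rw [if_pos rfl] at h; rw [if_pos rfl]; exact h.symm
  · rw [if_neg hab]
    rw [if_neg (fun hh : e3 μ1 μ2 μ3 a = e3 μ1 μ2 μ3 b => hab (by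
      have hv := congrArg Fin.val hh
      simp only [e3, Fin.coe_natAdd] at hv
      exact Fin.ext (by omega)))] at h
    exact h.symm

lemma hD10 : ∀ a b, D1 a b 0 = if a = b then (1:A) else 0 := by
  intro a b
  have h := hG.hT11 a b 0
  rw [hG.h0] at h
  by_cases hab : a = b
  · subst hab; rw [if_pos rfl] at h; rw [if_pos rfl]; exact h.symm
  · rw [if_neg hab]
    rw [if_neg (fun hh : e1 μ1 μ2 μ3 a = e1 μ1 μ2 μ3 b => hab (by
      have hv := congrArg Fin.val hh
      simp only [e1, Fin.coe_castAdd] at hv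
      exact Fin.ext (by omega)))] at h
    exact h.symm

lemma hD3'0 : ∀ a b, D3' a b 0 = if a = b then (1:A) else 0 := by
  intro a b
  have h := hG.hD3inv' a b 0
  simp only [conv_zero', hD30 hG, mul_ite, mul_one, mul_zero, Finset.sum_ite_eq',
    Finset.mem_univ, if_true, and_true] at h
  simpa using h

lemma httS0 : ∀ l m : BIdx μ1 μ2 μ3,
    t (phi μ1 μ2 μ3 l) (phi μ1 μ2 μ3 m) 0 = if l = m then (1:A) else 0 := by
  intro l m
  rw [hG.h0]
  by_cases hlm : l = m
  · subst hlm; simp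
  · rw [if_neg (fun hphi => hlm (phi_inj hphi)), if_neg hlm]

end Main

end S15



open S15 in
/-- with `μ = (μ1, μ2, μ3)`, in `Y_μ`:
`[D_{1;i,j}(u), F_{2;h,k}(v)] = 0` and `[F_{1;i,j}(u), D'_{3;h,k}(v)] = 0`
(stated coefficientwise: each pair of coefficients supercommutes). -/
theorem statement15 {A : Type*} [Ring A] (μ1 μ2 μ3 : ℕ)
    (par : Fin (μ1 + μ2 + μ3) → ℕ)
    (t : Fin (μ1 + μ2 + μ3) → Fin (μ1 + μ2 + μ3) → ℕ → A)
    (D1 D1' : Fin μ1 → Fin μ1 → ℕ → A) (D2 D2' : Fin μ2 → Fin μ2 → ℕ → A)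
    (D3 D3' : Fin μ3 → Fin μ3 → ℕ → A)
    (E1 : Fin μ1 → Fin μ2 → ℕ → A) (E2 : Fin μ2 → Fin μ3 → ℕ → A)
    (E13 : Fin μ1 → Fin μ3 → ℕ → A)
    (F1 : Fin μ2 → Fin μ1 → ℕ → A) (F2 : Fin μ3 → Fin μ2 → ℕ → A)
    (F31 : Fin μ3 → Fin μ1 → ℕ → A)
    (hG : GaussData3 μ1 μ2 μ3 par t D1 D1' D2 D2' D3 D3' E1 E2 E13 F1 F2 F31) :
    (∀ (i j : Fin μ1) (h : Fin μ3) (k : Fin μ2) (r s : ℕ),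
      sbr ((par (e1 μ1 μ2 μ3 i) + par (e1 μ1 μ2 μ3 j)) *
            (par (e3 μ1 μ2 μ3 h) + par (e2 μ1 μ2 μ3 k)))
        (D1 i j r) (F2 h k s) = 0) ∧
    (∀ (i : Fin μ2) (j : Fin μ1) (h k : Fin μ3) (r s : ℕ),
      sbr ((par (e2 μ1 μ2 μ3 i) + par (e1 μ1 μ2 μ3 j)) *
            (par (e3 μ1 μ2 μ3 h) + par (e3 μ1 μ2 μ3 k)))
        (F1 i j r) (D3' h k s) = 0) := by
    classical
  have hrttS := fun (a b c d : BIdx μ1 μ2 μ3) (r' s' : ℕ) =>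
    hG.hrtt (phi μ1 μ2 μ3 a) (phi μ1 μ2 μ3 b) (phi μ1 μ2 μ3 c) (phi μ1 μ2 μ3 d) r' s'
  -- key instances
  have keyD3' : ∀ (a b : Fin μ1) (h' k' : Fin μ3) (s' r' : ℕ),
      sbr ((par (e1 μ1 μ2 μ3 a) + par (e1 μ1 μ2 μ3 b)) *
          (par (e3 μ1 μ2 μ3 h') + par (e3 μ1 μ2 μ3 k')))
        (t (e1 μ1 μ2 μ3 a) (e1 μ1 μ2 μ3 b) r') (D3' h' k' s') = 0 := by
    intro a b h' k'
    have hk := key (fun l => par (phi μ1 μ2 μ3 l)) (fun l m => t (phi μ1 μ2 μ3 l) (phi μ1 μ2 μ3 m))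
      (httS0 hG) hrttS (XR D3' F1 F2 F31 h') (YR3 D3' E1 E2 E13 k')
      (Sum.inr h') (Sum.inl (Sum.inl a)) (Sum.inl (Sum.inl b)) (Sum.inr k')
      (lemHX hG h') (lemHY3 hG k') (by simp) (by simp)
      (by
        intro r'
        show sbr ((par (e1 μ1 μ2 μ3 a) + par (e1 μ1 μ2 μ3 b)) *
            (par (e3 μ1 μ2 μ3 h') + par (e3 μ1 μ2 μ3 k'))) _ (D3' h' k' 0) = 0
        rw [hD3'0 hG]
        by_cases hhk : h' = k'
        · subst hhk; rw [if_pos rfl]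
          apply sbr_one
          have : (par (e1 μ1 μ2 μ3 a) + par (e1 μ1 μ2 μ3 b)) *
              (par (e3 μ1 μ2 μ3 h') + par (e3 μ1 μ2 μ3 h'))
            = 2 * ((par (e1 μ1 μ2 μ3 a) + par (e1 μ1 μ2 μ3 b)) * par (e3 μ1 μ2 μ3 h')) := by ring
          omega
        · rw [if_neg hhk]; exact sbr_zero_right _ _)
    exact fun s' r' => hk s' r'
  have key21 : ∀ (a : Fin μ2) (b : Fin μ1) (h' k' : Fin μ3) (s' r' : ℕ),
      sbr ((par (e2 μ1 μ2 μ3 a) + par (e1 μ1 μ2 μ3 b)) *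
          (par (e3 μ1 μ2 μ3 h') + par (e3 μ1 μ2 μ3 k')))
        (t (e2 μ1 μ2 μ3 a) (e1 μ1 μ2 μ3 b) r') (D3' h' k' s') = 0 := by
    intro a b h' k'
    have hk := key (fun l => par (phi μ1 μ2 μ3 l)) (fun l m => t (phi μ1 μ2 μ3 l) (phi μ1 μ2 μ3 m))
      (httS0 hG) hrttS (XR D3' F1 F2 F31 h') (YR3 D3' E1 E2 E13 k')
      (Sum.inr h') (Sum.inl (Sum.inr a)) (Sum.inl (Sum.inl b)) (Sum.inr k')
      (lemHX hG h') (lemHY3 hG k') (by simp) (by simp)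
      (by
        intro r'
        show sbr ((par (e2 μ1 μ2 μ3 a) + par (e1 μ1 μ2 μ3 b)) *
            (par (e3 μ1 μ2 μ3 h') + par (e3 μ1 μ2 μ3 k'))) _ (D3' h' k' 0) = 0
        rw [hD3'0 hG]
        by_cases hhk : h' = k'
        · subst hhk; rw [if_pos rfl]
          apply sbr_one
          have : (par (e2 μ1 μ2 μ3 a) + par (e1 μ1 μ2 μ3 b)) *
              (par (e3 μ1 μ2 μ3 h') + par (e3 μ1 μ2 μ3 h'))
            = 2 * ((par (e2 μ1 μ2 μ3 a) + par (e1 μ1 μ2 μ3 b)) * par (e3 μ1 μ2 μ3 h')) := by ring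
          omega
        · rw [if_neg hhk]; exact sbr_zero_right _ _)
    exact fun s' r' => hk s' r'
  have keyZ : ∀ (a b : Fin μ1) (h' : Fin μ3) (k' : Fin μ2) (s' r' : ℕ),
      sbr ((par (e1 μ1 μ2 μ3 a) + par (e1 μ1 μ2 μ3 b)) *
          (par (e3 μ1 μ2 μ3 h') + par (e2 μ1 μ2 μ3 k')))
        (t (e1 μ1 μ2 μ3 a) (e1 μ1 μ2 μ3 b) r') (mmul D3' F2 h' k' s') = 0 := by
    intro a b h' k'
    have hk := key (fun l => par (phi μ1 μ2 μ3 l)) (fun l m => t (phi μ1 μ2 μ3 l) (phi μ1 μ2 μ3 m))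
      (httS0 hG) hrttS (XR D3' F1 F2 F31 h') (YR2 D2' D3' E1 E2 E13 F2 k')
      (Sum.inr h') (Sum.inl (Sum.inl a)) (Sum.inl (Sum.inl b)) (Sum.inl (Sum.inr k'))
      (lemHX hG h') (lemHY2 hG k') (by simp) (by simp)
      (by
        intro r'
        show sbr _ _ (-(mmul D3' F2 h' k' 0)) = 0
        have hz : mmul D3' F2 h' k' 0 = 0 := by
          show (∑ p, conv (D3' h' p) (F2 p k') 0) = 0
          simp [conv_zero', hG.hF20]
        rw [hz, neg_zero]; exact sbr_zero_right _ _)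
    intro s' r'
    have := hk s' r'
    rw [show XR D3' F1 F2 F31 h' (Sum.inl (Sum.inr k')) s' = -(mmul D3' F2 h' k' s') from rfl,
      sbr_neg_right, neg_eq_zero] at this
    exact this
  constructor
  · -- claim 1
    intro i j h k r s
    have keyD3 : ∀ (s' : ℕ) (a b : Fin μ3),
        sbr ((par (e1 μ1 μ2 μ3 i) + par (e1 μ1 μ2 μ3 j)) *
            ((fun p => par (e3 μ1 μ2 μ3 p)) a + (fun p => par (e3 μ1 μ2 μ3 p)) b))
          (t (e1 μ1 μ2 μ3 i) (e1 μ1 μ2 μ3 j) r) (D3 a b s') = 0 := by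
      refine sbr_inv D3' D3 (fun p => par (e3 μ1 μ2 μ3 p))
        (par (e1 μ1 μ2 μ3 i) + par (e1 μ1 μ2 μ3 j)) _ (hD3'0 hG) hG.hD3inv ?_
      intro p' j' r'
      exact keyD3' i j p' j' r' r
    have hF2eq : F2 h k s = ∑ q, conv (D3 h q) (mmul D3' F2 q k) s := by
      have h1 : mmul D3 D3' = fun a b => (mdel a b : ℕ → A) :=
        funext fun a => funext fun b => funext fun r'' => hG.hD3inv a b r''
      calc F2 h k s = mmul mdel F2 h k s := (mmul_mdel_left F2 h k s).symm
        _ = mmul (mmul D3 D3') F2 h k s := by rw [h1]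
        _ = mmul D3 (mmul D3' F2) h k s := mmul_assoc _ _ _ _ _ _
        _ = ∑ q, conv (D3 h q) (mmul D3' F2 q k) s := rfl
    rw [show D1 i j r = t (e1 μ1 μ2 μ3 i) (e1 μ1 μ2 μ3 j) r from (hG.hT11 i j r).symm, hF2eq,
      sbr_sum_right]
    apply Finset.sum_eq_zero
    intro q _
    apply sbr_conv_zero
      (ε1 := (par (e1 μ1 μ2 μ3 i) + par (e1 μ1 μ2 μ3 j)) *
        (par (e3 μ1 μ2 μ3 h) + par (e3 μ1 μ2 μ3 q)))
      (ε2 := (par (e1 μ1 μ2 μ3 i) + par (e1 μ1 μ2 μ3 j)) *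
        (par (e3 μ1 μ2 μ3 q) + par (e2 μ1 μ2 μ3 k)))
    · intro a _; exact keyD3 a h q
    · intro b _; exact keyZ i j q k b r
    · have : (par (e1 μ1 μ2 μ3 i) + par (e1 μ1 μ2 μ3 j)) *
            (par (e3 μ1 μ2 μ3 h) + par (e3 μ1 μ2 μ3 q))
          + (par (e1 μ1 μ2 μ3 i) + par (e1 μ1 μ2 μ3 j)) *
            (par (e3 μ1 μ2 μ3 q) + par (e2 μ1 μ2 μ3 k))
        = (par (e1 μ1 μ2 μ3 i) + par (e1 μ1 μ2 μ3 j)) *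
            (par (e3 μ1 μ2 μ3 h) + par (e2 μ1 μ2 μ3 k))
          + 2 * ((par (e1 μ1 μ2 μ3 i) + par (e1 μ1 μ2 μ3 j)) * par (e3 μ1 μ2 μ3 q)) := by ring
      omega
  · -- claim 2
    intro i j h k r s
    have hxD1 : ∀ (a b : Fin μ1) (r' : ℕ),
        sbr ((par (e3 μ1 μ2 μ3 h) + par (e3 μ1 μ2 μ3 k)) *
            ((fun p => par (e1 μ1 μ2 μ3 p)) a + (fun p => par (e1 μ1 μ2 μ3 p)) b))
          (D3' h k s) (D1 a b r') = 0 := by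
      intro a b r'
      apply sbr_swap
      rw [show D1 a b r' = t (e1 μ1 μ2 μ3 a) (e1 μ1 μ2 μ3 b) r' from (hG.hT11 a b r').symm]
      rw [sbr_congr (a := (par (e3 μ1 μ2 μ3 h) + par (e3 μ1 μ2 μ3 k)) *
          (par (e1 μ1 μ2 μ3 a) + par (e1 μ1 μ2 μ3 b)))
        (b := (par (e1 μ1 μ2 μ3 a) + par (e1 μ1 μ2 μ3 b)) *
          (par (e3 μ1 μ2 μ3 h) + par (e3 μ1 μ2 μ3 k))) (by rw [Nat.mul_comm])]
      exact keyD3' a b h k s r'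
    have hyD1' := sbr_inv D1 D1' (fun p => par (e1 μ1 μ2 μ3 p))
      (par (e3 μ1 μ2 μ3 h) + par (e3 μ1 μ2 μ3 k)) (D3' h k s) (hD10 hG) hG.hD1inv' hxD1
    have hF1eq : F1 i j r = ∑ p, conv (t (e2 μ1 μ2 μ3 i) (e1 μ1 μ2 μ3 p)) (D1' p j) r := by
      have h1 : mmul D1 D1' = fun a b => (mdel a b : ℕ → A) :=
        funext fun a => funext fun b => funext fun r'' => hG.hD1inv a b r''
      have e : (∑ p, conv (t (e2 μ1 μ2 μ3 i) (e1 μ1 μ2 μ3 p)) (D1' p j) r)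
          = mmul (mmul F1 D1) D1' i j r := by
        simp only [ht21 hG]; rfl
      rw [e, mmul_assoc, h1]
      exact (mmul_mdel_right F1 i j r).symm
    apply sbr_swap
    rw [hF1eq, sbr_sum_right]
    apply Finset.sum_eq_zero
    intro p _
    apply sbr_conv_zero
      (ε1 := (par (e2 μ1 μ2 μ3 i) + par (e1 μ1 μ2 μ3 p)) *
        (par (e3 μ1 μ2 μ3 h) + par (e3 μ1 μ2 μ3 k)))
      (ε2 := (par (e3 μ1 μ2 μ3 h) + par (e3 μ1 μ2 μ3 k)) *
        (par (e1 μ1 μ2 μ3 p) + par (e1 μ1 μ2 μ3 j)))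
    · intro a _; exact sbr_swap (key21 i p h k s a)
    · intro b _; exact hyD1' b p j
    · have : (par (e2 μ1 μ2 μ3 i) + par (e1 μ1 μ2 μ3 p)) *
            (par (e3 μ1 μ2 μ3 h) + par (e3 μ1 μ2 μ3 k))
          + (par (e3 μ1 μ2 μ3 h) + par (e3 μ1 μ2 μ3 k)) *
            (par (e1 μ1 μ2 μ3 p) + par (e1 μ1 μ2 μ3 j))
        = (par (e2 μ1 μ2 μ3 i) + par (e1 μ1 μ2 μ3 j)) *
            (par (e3 μ1 μ2 μ3 h) + par (e3 μ1 μ2 μ3 k))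
          + 2 * (par (e1 μ1 μ2 μ3 p) * (par (e3 μ1 μ2 μ3 h) + par (e3 μ1 μ2 μ3 k))) := by ring
      omega
end
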